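/- arXiv:2008.08206 — 6 statements merged into one kernel-verified Lean document; each statement's English description precedes it below -/
import Mathlib

section
/- Let $m,n \in \mathbb{N}$. The set $GDD^+_{m,n}$ of symmetric generalized diagonally dominant $m$-order $n$-dimensional tensors with nonnegative diagonal entries is a convex cone: it contains $0$, is closed under nonnegative scalar multiplication, and is closed under addition. -/
open Finset

/-- An index of an `m`-order `n`-dimensional tensor. -/
abbrev Idx (m n : ℕ) := Fin m → Fin n

/-- The diagonal index `(i, i, …, i)`. -/
def diagIdx {m n : ℕ} (i : Fin n) : Idx m n := fun _ => i

/-- A tensor is symmetric if its entries are invariant under permutations of the indices. -/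
def IsSymmetric {m n : ℕ} (A : Idx m n → ℝ) : Prop :=
  ∀ (σ : Equiv.Perm (Fin m)) (j : Idx m n), A (j ∘ σ) = A j

/-- The sum of the absolute values of the off-diagonal entries on the `i`-th slice. -/
def rowSum {m n : ℕ} (hm : 0 < m) (A : Idx m n → ℝ) (i : Fin n) : ℝ :=
  ∑ j ∈ Finset.univ.filter (fun j : Idx m n => j ⟨0, hm⟩ = i ∧ j ≠ diagIdx i), |A j|

/-- A tensor is diagonally dominant if each diagonal entry dominates (in absolute value)
the sum of the absolute values of the off-diagonal entries on its slice. -/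
def IsDD {m n : ℕ} (hm : 0 < m) (A : Idx m n → ℝ) : Prop :=
  ∀ i : Fin n, rowSum hm A i ≤ |A (diagIdx i)|

/-- `A` is a symmetric generalized diagonally dominant tensor with nonnegative diagonal:
there is a positive diagonal scaling making it diagonally dominant. -/
def IsGDDplus {m n : ℕ} (hm : 0 < m) (A : Idx m n → ℝ) : Prop :=
  IsSymmetric A ∧ (∀ i : Fin n, 0 ≤ A (diagIdx i)) ∧
    ∃ d : Fin n → ℝ, (∀ i, 0 < d i) ∧ IsDD hm (fun j => A j * ∏ k : Fin m, d (j k))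

namespace GDDaux

variable {m n : ℕ}

/-- An index is "constant" iff it is a diagonal index. -/
def Const {m n : ℕ} (j : Idx m n) : Prop := ∀ k₁ k₂ : Fin m, j k₁ = j k₂

instance : DecidablePred (Const (m := m) (n := n)) := fun j => by
  unfold Const; infer_instance

/-- The finset of off-diagonal indices. -/
def offD (m n : ℕ) : Finset (Idx m n) := univ.filter (fun j => ¬ Const j)

/-- Product of the entries of `x` along an index. -/
def P (x : Fin n → ℝ) (j : Idx m n) : ℝ := ∏ k : Fin m, x (j k)

/-- The "comparison form" of a tensor evaluated at `x`. -/
def Q (A : Idx m n → ℝ) (x : Fin n → ℝ) : ℝ :=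
  ∑ i : Fin n, A (diagIdx i) * x i ^ m - ∑ j ∈ offD m n, |A j| * P x j

lemma const_comp (j : Idx m n) (σ : Equiv.Perm (Fin m)) : Const (j ∘ σ) ↔ Const j := by
  constructor
  · intro h k₁ k₂
    simpa using h (σ.symm k₁) (σ.symm k₂)
  · intro h k₁ k₂; exact h _ _

lemma P_comp (x : Fin n → ℝ) (j : Idx m n) (σ : Equiv.Perm (Fin m)) :
    P x (j ∘ σ) = P x j :=
  Equiv.prod_comp σ (fun k => x (j k))

lemma P_nonneg {x : Fin n → ℝ} (hx : ∀ i, 0 ≤ x i) (j : Idx m n) : 0 ≤ P x j :=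
  Finset.prod_nonneg fun k _ => hx (j k)

lemma P_diag (x : Fin n → ℝ) (i : Fin n) : P x (diagIdx (m := m) i) = x i ^ m := by
  simp [P, diagIdx, Finset.prod_const]

lemma diag_eq_iff (hm : 0 < m) (j : Idx m n) (i : Fin n) (hji : j ⟨0, hm⟩ = i) :
    j = diagIdx i ↔ Const j := by
  constructor
  · intro h k₁ k₂; rw [h]; rfl
  · intro h; funext k; rw [← hji]; exact h k ⟨0, hm⟩

/-- The slice filter used in `rowSum` coincides with our off-diagonal slice. -/
lemma slice_eq (hm : 0 < m) (i : Fin n) :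
    (univ.filter (fun j : Idx m n => j ⟨0, hm⟩ = i ∧ j ≠ diagIdx i)) =
      (offD m n).filter (fun j => j ⟨0, hm⟩ = i) := by
  ext j
  simp only [mem_filter, offD, mem_univ, true_and]
  constructor
  · rintro ⟨h1, h2⟩
    exact ⟨fun hc => h2 ((diag_eq_iff hm j i h1).2 hc), h1⟩
  · rintro ⟨h1, h2⟩
    exact ⟨h2, fun hc => h1 ((diag_eq_iff hm j i h2).1 hc)⟩


/-- Slices of the symmetric weight `|A j| * P x j` in direction `k` all agree. -/
lemma slice_swap (A : Idx m n → ℝ) (hA : IsSymmetric A) (x : Fin n → ℝ)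
    (k k' : Fin m) (i : Fin n) :
    ∑ j ∈ (offD m n).filter (fun j => j k = i), |A j| * P x j
      = ∑ j ∈ (offD m n).filter (fun j => j k' = i), |A j| * P x j := by
  apply Finset.sum_nbij' (fun j => j ∘ Equiv.swap k k') (fun j => j ∘ Equiv.swap k k')
  · intro j hj
    simp only [mem_filter, offD, mem_univ, true_and] at hj ⊢
    refine ⟨fun hc => hj.1 ((const_comp j _).1 hc), ?_⟩
    simp [Function.comp, Equiv.swap_apply_right, hj.2]
  · intro j hj
    simp only [mem_filter, offD, mem_univ, true_and] at hj ⊢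
    refine ⟨fun hc => hj.1 ((const_comp j _).1 hc), ?_⟩
    simp [Function.comp, Equiv.swap_apply_left, hj.2]
  · intro j _; funext k₀; simp [Function.comp]
  · intro j _; funext k₀; simp [Function.comp]
  · intro j _
    rw [hA (Equiv.swap k k') j, P_comp]

/-- AM–GM in the form we need. -/
lemma am_gm (hm : 0 < m) (y : Fin m → ℝ) (hy : ∀ k, 0 ≤ y k) :
    ∏ k, y k ≤ (m : ℝ)⁻¹ * ∑ k, y k ^ m := by
  have hm' : (0:ℝ) < m := Nat.cast_pos.2 hm
  have hw : ∀ k ∈ (univ : Finset (Fin m)), (0:ℝ) ≤ (m : ℝ)⁻¹ := fun _ _ => by positivity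
  have hw' : ∑ _k ∈ (univ : Finset (Fin m)), (m : ℝ)⁻¹ = 1 := by
    rw [Finset.sum_const, Finset.card_univ, Fintype.card_fin, nsmul_eq_mul,
      mul_inv_cancel₀ (Nat.cast_ne_zero.2 hm.ne')]
  have hz : ∀ k ∈ (univ : Finset (Fin m)), (0:ℝ) ≤ y k ^ m := fun k _ => pow_nonneg (hy k) m
  have h := Real.geom_mean_le_arith_mean_weighted univ (fun _ : Fin m => (m : ℝ)⁻¹)
    (fun k => y k ^ m) hw hw' hz
  have hz' : ∀ k : Fin m, (y k ^ m : ℝ) ^ ((m:ℝ)⁻¹) = y k := by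
    intro k
    rw [← Real.rpow_natCast (y k) m, ← Real.rpow_mul (hy k),
      mul_inv_cancel₀ (ne_of_gt hm'), Real.rpow_one]
  calc ∏ k, y k = ∏ k, (y k ^ m : ℝ) ^ ((m:ℝ)⁻¹) :=
        (Finset.prod_congr rfl fun k _ => (hz' k)).symm
    _ ≤ ∑ k, (m:ℝ)⁻¹ * y k ^ m := h
    _ = (m : ℝ)⁻¹ * ∑ k, y k ^ m := by rw [Finset.mul_sum]

/-- Translation of the `IsDD` row conditions for a positively scaled tensor. -/
lemma row_of_dd (hm : 0 < m) (A : Idx m n → ℝ) (hdiag : ∀ i, 0 ≤ A (diagIdx i))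
    (d : Fin n → ℝ) (hd : ∀ i, 0 ≤ d i)
    (hdd : IsDD hm (fun j => A j * ∏ k : Fin m, d (j k))) (i : Fin n) :
    ∑ j ∈ (offD m n).filter (fun j => j ⟨0, hm⟩ = i), |A j| * P d j
      ≤ A (diagIdx i) * d i ^ m := by
  have h := hdd i
  unfold rowSum at h
  rw [slice_eq hm i] at h
  have h1 : ∀ j : Idx m n, |A j * ∏ k : Fin m, d (j k)| = |A j| * P d j := by
    intro j
    rw [abs_mul]
    congr 1
    exact abs_of_nonneg (Finset.prod_nonneg fun k _ => hd (j k))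
  have h2 : |A (diagIdx (m := m) i) * ∏ k : Fin m, d (diagIdx (m := m) i k)|
      = A (diagIdx (m := m) i) * d i ^ m := by
    have hnn : (0:ℝ) ≤ A (diagIdx (m := m) i) * ∏ k : Fin m, d (diagIdx (m := m) i k) :=
      mul_nonneg (hdiag i) (Finset.prod_nonneg fun k _ => hd _)
    rw [abs_of_nonneg hnn]
    congr 1
    simp [diagIdx, Finset.prod_const, Finset.card_univ]
  rw [h2] at h
  calc ∑ j ∈ (offD m n).filter (fun j => j ⟨0, hm⟩ = i), |A j| * P d j
      = ∑ j ∈ (offD m n).filter (fun j => j ⟨0, hm⟩ = i),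
          |A j * ∏ k : Fin m, d (j k)| := by
        exact Finset.sum_congr rfl fun j _ => (h1 j).symm
    _ ≤ A (diagIdx (m := m) i) * d i ^ m := h

/-- L1: a `GDD⁺` tensor has copositive comparison form. -/
lemma copos (hm : 0 < m) (A : Idx m n → ℝ) (h : IsGDDplus hm A)
    (x : Fin n → ℝ) (hx : ∀ i, 0 ≤ x i) : 0 ≤ Q A x := by
  obtain ⟨hsym, hdiag, d, hd, hdd⟩ := h
  set i0 : Fin m := ⟨0, hm⟩ with hi0
  set y : Fin n → ℝ := fun i => x i / d i with hy_def
  have hy : ∀ i, 0 ≤ y i := fun i => div_nonneg (hx i) (hd i).le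
  have hxy : ∀ i, x i = d i * y i := by
    intro i
    rw [hy_def]
    dsimp only
    rw [mul_comm]
    exact (div_mul_cancel₀ (x i) (ne_of_gt (hd i))).symm
  have hrow := row_of_dd hm A hdiag d (fun i => (hd i).le) hdd
  set w : Idx m n → ℝ := fun j => |A j| * P d j with hw_def
  have hw : ∀ j, 0 ≤ w j := fun j =>
    mul_nonneg (abs_nonneg _) (P_nonneg (fun i => (hd i).le) j)
  have hPsplit : ∀ j : Idx m n, P x j = P d j * P y j := by
    intro j
    rw [P, P, P, ← Finset.prod_mul_distrib]
    exact Finset.prod_congr rfl fun k _ => hxy (j k)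
  set Z : ℝ := ∑ i : Fin n, A (diagIdx i) * x i ^ m with hZ
  have key : ∑ j ∈ offD m n, |A j| * P x j ≤ Z := by
    have step1 : ∑ j ∈ offD m n, |A j| * P x j
        = ∑ j ∈ offD m n, w j * P y j := by
      refine Finset.sum_congr rfl fun j _ => ?_
      rw [hPsplit j, hw_def]; ring
    have step2 : ∑ j ∈ offD m n, w j * P y j
        ≤ (m:ℝ)⁻¹ * ∑ k : Fin m, ∑ j ∈ offD m n, w j * y (j k) ^ m := by
      have : ∀ j ∈ offD m n, w j * P y j ≤ w j * ((m:ℝ)⁻¹ * ∑ k, y (j k) ^ m) := by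
        intro j _
        exact mul_le_mul_of_nonneg_left (am_gm hm (fun k => y (j k)) (fun k => hy (j k))) (hw j)
      refine le_trans (Finset.sum_le_sum this) (le_of_eq ?_)
      have e : ∑ j ∈ offD m n, w j * ((m:ℝ)⁻¹ * ∑ k, y (j k) ^ m)
          = (m:ℝ)⁻¹ * ∑ j ∈ offD m n, ∑ k, w j * y (j k) ^ m := by
        rw [Finset.mul_sum]
        refine Finset.sum_congr rfl fun j _ => ?_
        rw [Finset.mul_sum, Finset.mul_sum, Finset.mul_sum]
        exact Finset.sum_congr rfl fun k _ => by ring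
      rw [e, Finset.sum_comm]
    have step3 : ∀ k : Fin m, ∑ j ∈ offD m n, w j * y (j k) ^ m ≤ Z := by
      intro k
      have fib : ∑ j ∈ offD m n, w j * y (j k) ^ m
          = ∑ i : Fin n, ∑ j ∈ (offD m n).filter (fun j => j k = i), w j * y (j k) ^ m :=
        (Finset.sum_fiberwise (offD m n) (fun j => j k) (fun j => w j * y (j k) ^ m)).symm
      rw [fib]
      rw [hZ]
      refine Finset.sum_le_sum fun i _ => ?_
      have inner : ∑ j ∈ (offD m n).filter (fun j => j k = i), w j * y (j k) ^ m
          = (∑ j ∈ (offD m n).filter (fun j => j i0 = i), w j) * y i ^ m := by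
        have e2 : ∑ j ∈ (offD m n).filter (fun j => j k = i), w j
            = ∑ j ∈ (offD m n).filter (fun j => j i0 = i), w j :=
          slice_swap A hsym d k i0 i
        calc ∑ j ∈ (offD m n).filter (fun j => j k = i), w j * y (j k) ^ m
            = ∑ j ∈ (offD m n).filter (fun j => j k = i), w j * y i ^ m := by
              refine Finset.sum_congr rfl fun j hj => ?_
              rw [(Finset.mem_filter.1 hj).2]
          _ = (∑ j ∈ (offD m n).filter (fun j => j k = i), w j) * y i ^ m :=
              (Finset.sum_mul _ _ _).symm
          _ = _ := by rw [e2]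
      rw [inner]
      have hb : (∑ j ∈ (offD m n).filter (fun j => j i0 = i), w j)
          ≤ A (diagIdx i) * d i ^ m := hrow i
      calc (∑ j ∈ (offD m n).filter (fun j => j i0 = i), w j) * y i ^ m
          ≤ (A (diagIdx i) * d i ^ m) * y i ^ m :=
            mul_le_mul_of_nonneg_right hb (pow_nonneg (hy i) m)
        _ = A (diagIdx i) * x i ^ m := by
            rw [hxy i, mul_pow]; ring
    calc ∑ j ∈ offD m n, |A j| * P x j = ∑ j ∈ offD m n, w j * P y j := step1
      _ ≤ (m:ℝ)⁻¹ * ∑ k : Fin m, ∑ j ∈ offD m n, w j * y (j k) ^ m := step2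
      _ ≤ (m:ℝ)⁻¹ * ∑ _k : Fin m, Z := by
          refine mul_le_mul_of_nonneg_left (Finset.sum_le_sum fun k _ => step3 k) ?_
          positivity
      _ = Z := by
          rw [Finset.sum_const, Finset.card_univ, Fintype.card_fin, nsmul_eq_mul]
          rw [← mul_assoc, inv_mul_cancel₀ (Nat.cast_ne_zero.2 hm.ne'), one_mul]
  have : Q A x = Z - ∑ j ∈ offD m n, |A j| * P x j := rfl
  rw [this]
  linarith [key]


/-- Scaling identity for `Q`. -/
lemma Q_smul (A : Idx m n → ℝ) (c : ℝ) (y : Fin n → ℝ) :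
    Q A (fun i => c * y i) = c ^ m * Q A y := by
  unfold Q
  rw [mul_sub, Finset.mul_sum, Finset.mul_sum]
  congr 1
  · refine Finset.sum_congr rfl fun i _ => ?_
    rw [mul_pow]; ring
  · refine Finset.sum_congr rfl fun j _ => ?_
    have : P (fun i => c * y i) j = c ^ m * P y j := by
      rw [P, P, Finset.prod_mul_distrib, Finset.prod_const, Finset.card_univ,
        Fintype.card_fin]
    rw [this]; ring

/-- The counting identity: summing a symmetric weight against the multiplicity of `i`
equals `m` times the `i`-slice. -/
lemma count_identity (hm : 0 < m) (A : Idx m n → ℝ) (hsym : IsSymmetric A)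
    (x : Fin n → ℝ) (i : Fin n) :
    ∑ j ∈ offD m n, ((univ.filter (fun k => j k = i)).card : ℝ) * (|A j| * P x j)
      = (m : ℝ) * ∑ j ∈ (offD m n).filter (fun j => j ⟨0, hm⟩ = i), |A j| * P x j := by
  have e1 : ∀ j : Idx m n, ((univ.filter (fun k => j k = i)).card : ℝ) * (|A j| * P x j)
      = ∑ k : Fin m, if j k = i then |A j| * P x j else 0 := by
    intro j
    rw [Finset.card_filter, Nat.cast_sum, Finset.sum_mul]
    refine Finset.sum_congr rfl fun k _ => ?_
    by_cases h : j k = i <;> simp [h]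
  calc ∑ j ∈ offD m n, ((univ.filter (fun k => j k = i)).card : ℝ) * (|A j| * P x j)
      = ∑ j ∈ offD m n, ∑ k : Fin m, if j k = i then |A j| * P x j else 0 :=
        Finset.sum_congr rfl fun j _ => e1 j
    _ = ∑ k : Fin m, ∑ j ∈ offD m n, if j k = i then |A j| * P x j else 0 :=
        Finset.sum_comm
    _ = ∑ _k : Fin m, ∑ j ∈ (offD m n).filter (fun j => j ⟨0, hm⟩ = i), |A j| * P x j := by
        refine Finset.sum_congr rfl fun k _ => ?_
        rw [← Finset.sum_filter]
        exact slice_swap A hsym x k ⟨0, hm⟩ i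
    _ = (m : ℝ) * ∑ j ∈ (offD m n).filter (fun j => j ⟨0, hm⟩ = i), |A j| * P x j := by
        rw [Finset.sum_const, Finset.card_univ, Fintype.card_fin, nsmul_eq_mul]

/-- The interior (full support) case: the first-order condition at a local minimizer
gives the row inequality. -/
lemma interior_row (hm : 0 < m) (A : Idx m n → ℝ) (hsym : IsSymmetric A)
    (x : Fin n → ℝ) (hx : ∀ i, 0 ≤ x i) (μ : ℝ) (hμ : 0 ≤ μ)
    (i : Fin n) (hxi : 0 < x i)
    (hkb : ∀ t : ℝ, 0 < x i + t →
      μ * ∑ i', (Function.update x i (x i + t) i') ^ m ≤ Q A (Function.update x i (x i + t)))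
    (heq : Q A x = μ * ∑ i', x i' ^ m) :
    ∑ j ∈ (offD m n).filter (fun j => j ⟨0, hm⟩ = i), |A j| * P x j
      ≤ A (diagIdx i) * x i ^ m := by
  set a : ℝ := A (diagIdx i) with ha
  set r : Idx m n → ℕ := fun j => (univ.filter (fun k => j k = i)).card with hr
  set cc : Idx m n → ℝ := fun j => ∏ k ∈ univ.filter (fun k => ¬ j k = i), x (j k) with hcc
  have hcc0 : ∀ j, 0 ≤ cc j := fun j =>
    Finset.prod_nonneg fun k _ => hx (j k)
  have hPu : ∀ (t : ℝ) (j : Idx m n),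
      P (Function.update x i (x i + t)) j = (x i + t) ^ (r j) * cc j := by
    intro t j
    rw [P, ← Finset.prod_filter_mul_prod_filter_not univ (fun k => j k = i)]
    congr 1
    · have hupd : ∀ k ∈ univ.filter (fun k => j k = i),
          Function.update x i (x i + t) (j k) = x i + t := by
        intro k hk
        rw [(Finset.mem_filter.1 hk).2, Function.update_self]
      rw [Finset.prod_congr rfl hupd, Finset.prod_const]
    · exact Finset.prod_congr rfl fun k hk =>
        Function.update_of_ne (Finset.mem_filter.1 hk).2 _ x
  have hPx : ∀ j : Idx m n, P x j = x i ^ (r j) * cc j := by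
    intro j
    have := hPu 0 j
    rw [add_zero, Function.update_eq_self] at this
    exact this
  set Cd : ℝ := ∑ i' ∈ univ.erase i, A (diagIdx i') * x i' ^ m with hCd
  set Ce : ℝ := ∑ i' ∈ univ.erase i, x i' ^ m with hCe
  have hdiagsum : ∀ t : ℝ, ∑ i', A (diagIdx i') * (Function.update x i (x i + t) i') ^ m
      = a * (x i + t) ^ m + Cd := by
    intro t
    rw [← Finset.add_sum_erase _ _ (Finset.mem_univ i), Function.update_self]
    congr 1
    refine Finset.sum_congr rfl fun i' hi' => ?_
    rw [Function.update_of_ne (Finset.ne_of_mem_erase hi') _ x]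
  have hpowsum : ∀ t : ℝ, ∑ i', (Function.update x i (x i + t) i') ^ m
      = (x i + t) ^ m + Ce := by
    intro t
    rw [← Finset.add_sum_erase _ _ (Finset.mem_univ i), Function.update_self]
    congr 1
    refine Finset.sum_congr rfl fun i' hi' => ?_
    rw [Function.update_of_ne (Finset.ne_of_mem_erase hi') _ x]
  set F : ℝ → ℝ := fun t => (a - μ) * (x i + t) ^ m
      - ∑ j ∈ offD m n, (|A j| * cc j) * (x i + t) ^ (r j) with hF_def
  have hFval : ∀ t : ℝ, Q A (Function.update x i (x i + t))
      - μ * ∑ i', (Function.update x i (x i + t) i') ^ m = F t + (Cd - μ * Ce) := by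
    intro t
    rw [hF_def]
    dsimp only
    unfold Q
    rw [hdiagsum t, hpowsum t]
    have : ∑ j ∈ offD m n, |A j| * P (Function.update x i (x i + t)) j
        = ∑ j ∈ offD m n, (|A j| * cc j) * (x i + t) ^ (r j) := by
      refine Finset.sum_congr rfl fun j _ => ?_
      rw [hPu t j]; ring
    rw [this]; ring
  have hx0 : Function.update x i (x i + 0) = x := by
    rw [add_zero, Function.update_eq_self]
  have hF0 : F 0 + (Cd - μ * Ce) = 0 := by
    rw [← hFval 0, hx0, heq]; ring
  have hmin : IsLocalMin F 0 := by
    have hev : Set.Ioo (-(x i)) (x i) ∈ nhds (0:ℝ) :=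
      Ioo_mem_nhds (neg_lt_zero.2 hxi) hxi
    filter_upwards [hev] with t ht
    have h1 : 0 < x i + t := by
      rcases ht with ⟨ht1, _⟩; linarith
    have h2 := hkb t h1
    have h3 := hFval t
    have h4 : 0 ≤ F t + (Cd - μ * Ce) := by rw [← h3]; linarith
    calc F 0 = -(Cd - μ * Ce) := by linarith [hF0]
      _ ≤ F t := by linarith
  set D : ℝ := (a - μ) * (↑m * (x i + 0) ^ (m - 1) * 1)
      - ∑ j ∈ offD m n, (|A j| * cc j) * (↑(r j) * (x i + 0) ^ (r j - 1) * 1) with hD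
  have hderiv : HasDerivAt F D 0 := by
    rw [hF_def, hD]
    exact HasDerivAt.sub
      ((((hasDerivAt_id (0:ℝ)).const_add (x i)).pow m).const_mul (a - μ))
      (HasDerivAt.fun_sum fun j _ =>
        (((hasDerivAt_id (0:ℝ)).const_add (x i)).pow (r j)).const_mul (|A j| * cc j))
  have hD0 : D = 0 := by
    rw [← hderiv.deriv]
    exact hmin.deriv_eq_zero
  have hDsimp : (a - μ) * ((m : ℝ) * x i ^ (m - 1))
      = ∑ j ∈ offD m n, (|A j| * cc j) * ((r j : ℝ) * x i ^ (r j - 1)) := by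
    have := hD0
    rw [hD] at this
    rw [add_zero] at this
    simp only [mul_one] at this
    linarith [this]
  have hmul : (a - μ) * ((m : ℝ) * x i ^ (m - 1)) * x i
      = ∑ j ∈ offD m n, (r j : ℝ) * (|A j| * P x j) := by
    rw [hDsimp, Finset.sum_mul]
    refine Finset.sum_congr rfl fun j _ => ?_
    rcases Nat.eq_zero_or_pos (r j) with h0 | hpos
    · rw [h0]; simp
    · have : r j - 1 + 1 = r j := Nat.succ_pred_eq_of_pos hpos
      rw [hPx j]
      calc (|A j| * cc j) * ((r j : ℝ) * x i ^ (r j - 1)) * x i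
          = (r j : ℝ) * (|A j| * (x i ^ (r j - 1) * x i * cc j)) := by ring
        _ = (r j : ℝ) * (|A j| * (x i ^ (r j) * cc j)) := by
            rw [← pow_succ, this]
  have hlhs : (a - μ) * ((m : ℝ) * x i ^ (m - 1)) * x i = (a - μ) * (m : ℝ) * x i ^ m := by
    have : m - 1 + 1 = m := Nat.succ_pred_eq_of_pos hm
    calc (a - μ) * ((m : ℝ) * x i ^ (m - 1)) * x i
        = (a - μ) * (m : ℝ) * (x i ^ (m - 1) * x i) := by ring
      _ = (a - μ) * (m : ℝ) * x i ^ m := by rw [← pow_succ, this]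
  have hfinal : (m : ℝ) * ((a - μ) * x i ^ m)
      = (m : ℝ) * ∑ j ∈ (offD m n).filter (fun j => j ⟨0, hm⟩ = i), |A j| * P x j := by
    rw [← count_identity hm A hsym x i, ← hmul, hlhs]
    ring
  have hcancel : (a - μ) * x i ^ m
      = ∑ j ∈ (offD m n).filter (fun j => j ⟨0, hm⟩ = i), |A j| * P x j :=
    mul_left_cancel₀ (Nat.cast_ne_zero.2 hm.ne' : (m:ℝ) ≠ 0) hfinal
  rw [← hcancel]
  have : 0 ≤ μ * x i ^ m := mul_nonneg hμ (pow_nonneg (hx i) m)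
  linarith



lemma base_coeff (N : ℕ) (c : ℕ → ℝ)
    (h : ∀ t : ℝ, 0 < t → t < 1 → 0 ≤ ∑ s ∈ range (N + 1), c s * t ^ s) :
    0 ≤ c 0 := by
  set f : ℝ → ℝ := fun t => ∑ s ∈ range (N + 1), c s * t ^ s with hf_def
  have hf : Continuous f :=
    continuous_finset_sum _ fun s _ => continuous_const.mul (continuous_pow s)
  have hf0 : f 0 = c 0 := by
    rw [hf_def]
    dsimp only
    rw [Finset.sum_eq_single_of_mem 0 (Finset.mem_range.2 (Nat.succ_pos N))]
    · simp
    · intro b _ hb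
      rw [zero_pow hb, mul_zero]
  have htend : Filter.Tendsto f (nhdsWithin 0 (Set.Ioi (0:ℝ))) (nhds (f 0)) :=
    (hf.tendsto 0).mono_left nhdsWithin_le_nhds
  have hev : ∀ᶠ t in nhdsWithin 0 (Set.Ioi (0:ℝ)), 0 ≤ f t := by
    filter_upwards [Ioo_mem_nhdsGT_of_mem (Set.left_mem_Ico.2 one_pos)] with t ht
    exact h t ht.1 ht.2
  rw [← hf0]
  exact ge_of_tendsto htend hev

lemma peel_coeff (N K : ℕ) (c : ℕ → ℝ) (hKN : K ≤ N)
    (h : ∀ t : ℝ, 0 < t → t < 1 → 0 ≤ ∑ s ∈ range (N + 1), c s * t ^ s)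
    (hneg : ∀ s, s ≤ K → c s ≤ 0) : ∀ s, s ≤ K → c s = 0 := by
  intro s
  induction s using Nat.strong_induction_on with
  | _ s ih =>
    intro hsK
    refine le_antisymm (hneg s hsK) ?_
    have key : ∀ t : ℝ, 0 < t → t < 1 → 0 ≤ ∑ r ∈ range (N - s + 1), c (s + r) * t ^ r := by
      intro t ht ht1
      have hsplit : ∑ q ∈ range (N + 1), c q * t ^ q
          = ∑ q ∈ range s, c q * t ^ q + ∑ r ∈ range (N - s + 1), c (s + r) * t ^ (s + r) := by
        have hN : N + 1 = s + (N - s + 1) := by omega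
        rw [hN, Finset.sum_range_add]
      have hzero : ∑ q ∈ range s, c q * t ^ q = 0 := by
        refine Finset.sum_eq_zero fun q hq => ?_
        have hq' : q < s := Finset.mem_range.1 hq
        rw [ih q hq' (by omega), zero_mul]
      have hfac : ∑ r ∈ range (N - s + 1), c (s + r) * t ^ (s + r)
          = t ^ s * ∑ r ∈ range (N - s + 1), c (s + r) * t ^ r := by
        rw [Finset.mul_sum]
        exact Finset.sum_congr rfl fun r _ => by rw [pow_add]; ring
      have h0 := h t ht ht1
      rw [hsplit, hzero, zero_add, hfac] at h0
      have hts : (0:ℝ) < t ^ s := pow_pos ht s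
      nlinarith [h0, hts, mul_pos hts (lt_of_le_of_lt (le_refl (0:ℝ)) ht)]
    have := base_coeff (N - s) (fun r => c (s + r)) key
    simpa using this

/-- Boundary decoupling: at a boundary minimizer, mixed off-diagonal entries vanish. -/
lemma boundary_vanish (hm : 0 < m) (A : Idx m n → ℝ)
    (x : Fin n → ℝ) (hx : ∀ i, 0 ≤ x i) (U : Finset (Fin n)) (hxU : ∀ i ∈ U, x i = 0)
    (μ : ℝ)
    (hkb : ∀ t : ℝ, 0 ≤ t →
      μ * ∑ i', (x i' + t * (if i' ∈ U then 1 else 0)) ^ m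
        ≤ Q A (fun i' => x i' + t * (if i' ∈ U then 1 else 0)))
    (heq : Q A x = μ * ∑ i', x i' ^ m) :
    ∀ j ∈ offD m n, 0 < (univ.filter fun k => j k ∈ U).card →
      (univ.filter fun k => j k ∈ U).card < m →
      (∀ k, j k ∉ U → 0 < x (j k)) → A j = 0 := by
  set v : ℝ → Fin n → ℝ := fun t i' => x i' + t * (if i' ∈ U then 1 else 0) with hv_def
  have hv : ∀ (t : ℝ) (i' : Fin n), v t i' = if i' ∈ U then t else x i' := by
    intro t i'
    rw [hv_def]
    by_cases h : i' ∈ U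
    · simp [h, hxU i' h]
    · simp [h]
  set r : Idx m n → ℕ := fun j => (univ.filter (fun k => j k ∈ U)).card with hr
  set cc : Idx m n → ℝ := fun j => ∏ k ∈ univ.filter (fun k => ¬ j k ∈ U), x (j k) with hcc
  have hcc0 : ∀ j, 0 ≤ cc j := fun j => Finset.prod_nonneg fun k _ => hx (j k)
  have hPv : ∀ (t : ℝ) (j : Idx m n), P (v t) j = t ^ (r j) * cc j := by
    intro t j
    rw [P, ← Finset.prod_filter_mul_prod_filter_not univ (fun k => j k ∈ U)]
    congr 1
    · have hupd : ∀ k ∈ univ.filter (fun k => j k ∈ U), v t (j k) = t := by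
        intro k hk
        rw [hv, if_pos (Finset.mem_filter.1 hk).2]
      rw [Finset.prod_congr rfl hupd, Finset.prod_const]
    · exact Finset.prod_congr rfl fun k hk => by
        rw [hv, if_neg (Finset.mem_filter.1 hk).2]
  set G : Fin n → ℝ := fun i' => A (diagIdx i') - μ with hG
  set X : ℝ := ∑ i' ∈ univ.filter (fun i' => i' ∈ U), G i' with hX
  set CN : ℝ := ∑ i' ∈ univ.filter (fun i' => ¬ i' ∈ U), G i' * x i' ^ m with hCN
  set e : ℕ → ℝ := fun s =>
    (if s = m then X else 0) + (if s = 0 then CN else 0)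
      - ∑ j ∈ (offD m n).filter (fun j => r j = s), |A j| * cc j with he
  have hrle : ∀ j : Idx m n, r j ≤ m := by
    intro j
    rw [hr]
    calc (univ.filter (fun k => j k ∈ U)).card ≤ (univ : Finset (Fin m)).card :=
      Finset.card_filter_le _ _
    _ = m := by rw [Finset.card_univ, Fintype.card_fin]
  have hpoly : ∀ t : ℝ, Q A (v t) - μ * ∑ i', (v t i') ^ m
      = ∑ s ∈ range (m + 1), e s * t ^ s := by
    intro t
    have lhs1 : Q A (v t) - μ * ∑ i', (v t i') ^ m
        = ∑ i', G i' * (v t i') ^ m - ∑ j ∈ offD m n, |A j| * P (v t) j := by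
      unfold Q
      rw [Finset.mul_sum, sub_right_comm]
      congr 1
      rw [← Finset.sum_sub_distrib]
      exact Finset.sum_congr rfl fun i' _ => by rw [hG]; ring
    have lhs2 : ∑ i', G i' * (v t i') ^ m = X * t ^ m + CN := by
      rw [← Finset.sum_filter_add_sum_filter_not univ (fun i' => i' ∈ U), hX, hCN]
      congr 1
      · rw [Finset.sum_mul]
        exact Finset.sum_congr rfl fun i' hi' => by
          rw [hv, if_pos (Finset.mem_filter.1 hi').2]
      · exact Finset.sum_congr rfl fun i' hi' => by
          rw [hv, if_neg (Finset.mem_filter.1 hi').2]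
    have lhs3 : ∑ j ∈ offD m n, |A j| * P (v t) j
        = ∑ s ∈ range (m + 1), (∑ j ∈ (offD m n).filter (fun j => r j = s), |A j| * cc j) * t ^ s := by
      have maps : ∀ j ∈ offD m n, r j ∈ range (m + 1) := fun j _ =>
        Finset.mem_range.2 (Nat.lt_succ_of_le (hrle j))
      rw [← Finset.sum_fiberwise_of_maps_to maps (fun j => |A j| * P (v t) j)]
      refine Finset.sum_congr rfl fun s _ => ?_
      rw [Finset.sum_mul]
      refine Finset.sum_congr rfl fun j hj => ?_
      rw [hPv t j, (Finset.mem_filter.1 hj).2]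
      ring
    have rhs : ∑ s ∈ range (m + 1), e s * t ^ s
        = X * t ^ m + CN
          - ∑ s ∈ range (m + 1), (∑ j ∈ (offD m n).filter (fun j => r j = s), |A j| * cc j) * t ^ s := by
      rw [he]
      have expand : ∀ s ∈ range (m + 1),
          ((if s = m then X else 0) + (if s = 0 then CN else 0)
            - ∑ j ∈ (offD m n).filter (fun j => r j = s), |A j| * cc j) * t ^ s
          = (if s = m then X * t ^ m else 0) + (if s = 0 then CN else 0)
            - (∑ j ∈ (offD m n).filter (fun j => r j = s), |A j| * cc j) * t ^ s := by
        intro s _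
        have hm0 : m ≠ 0 := hm.ne'
        have hm0' : (0:ℕ) ≠ m := Ne.symm hm0
        by_cases h1 : s = m
        · subst h1
          simp only [if_pos rfl, if_neg hm0, eq_self_iff_true, if_true]
          ring
        · by_cases h2 : s = 0
          · subst h2
            simp only [if_pos rfl, if_neg hm0', eq_self_iff_true, if_true]
            ring
          · simp only [if_neg h1, if_neg h2]
            ring
      rw [Finset.sum_congr rfl expand]
      rw [Finset.sum_sub_distrib, Finset.sum_add_distrib]
      rw [Finset.sum_ite_eq' (range (m + 1)) m (fun _ => X * t ^ m)]
      rw [Finset.sum_ite_eq' (range (m + 1)) 0 (fun _ => CN)]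
      rw [if_pos (Finset.mem_range.2 (Nat.lt_succ_self m)),
        if_pos (Finset.mem_range.2 (Nat.succ_pos m))]
    rw [lhs1, lhs2, lhs3, rhs]
  have hv0 : v 0 = x := by
    funext i'
    rw [hv_def]
    simp
  have he0 : e 0 = 0 := by
    have h1 := hpoly 0
    rw [hv0, heq, sub_self] at h1
    have h2 : ∑ s ∈ range (m + 1), e s * (0:ℝ) ^ s = e 0 := by
      rw [Finset.sum_eq_single_of_mem 0 (Finset.mem_range.2 (Nat.succ_pos m))]
      · simp
      · intro b _ hb
        rw [zero_pow hb, mul_zero]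
    rw [h2] at h1
    exact h1.symm
  have hnonneg : ∀ t : ℝ, 0 < t → t < 1 → 0 ≤ ∑ s ∈ range (m + 1), e s * t ^ s := by
    intro t ht _
    rw [← hpoly t]
    have := hkb t ht.le
    have h2 : Q A (v t) = Q A (fun i' => x i' + t * (if i' ∈ U then 1 else 0)) := rfl
    linarith [this]
  have hneg : ∀ s, s ≤ m - 1 → e s ≤ 0 := by
    intro s hs
    rcases Nat.eq_zero_or_pos s with h0 | hpos
    · rw [h0, he0]
    · have h1 : s ≠ m := by omega
      have h2 : s ≠ 0 := by omega
      rw [he]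
      dsimp only
      rw [if_neg h1, if_neg h2]
      have : 0 ≤ ∑ j ∈ (offD m n).filter (fun j => r j = s), |A j| * cc j :=
        Finset.sum_nonneg fun j _ => mul_nonneg (abs_nonneg _) (hcc0 j)
      linarith
  have hzero := peel_coeff m (m - 1) e (Nat.sub_le m 1) hnonneg hneg
  intro j hj hr1 hr2 hpos
  have hne1 : r j ≠ m := ne_of_lt hr2
  have hne2 : r j ≠ 0 := hr1.ne'
  have hrj : r j ≤ m - 1 := by
    have h2' : r j < m := hr2
    omega
  have hez := hzero (r j) hrj
  rw [he] at hez
  dsimp only at hez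
  rw [if_neg hne1, if_neg hne2] at hez
  have hsum0 : ∑ j' ∈ (offD m n).filter (fun j' => r j' = r j), |A j'| * cc j' = 0 := by
    linarith
  have hterm := (Finset.sum_eq_zero_iff_of_nonneg
    (fun j' _ => mul_nonneg (abs_nonneg _) (hcc0 j'))).1 hsum0 j
    (Finset.mem_filter.2 ⟨hj, rfl⟩)
  have hccpos : 0 < cc j := by
    rw [hcc]
    refine Finset.prod_pos fun k hk => ?_
    exact hpos k (Finset.mem_filter.1 hk).2
  have : |A j| = 0 := by
    rcases mul_eq_zero.1 hterm with h | h
    · exact h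
    · exact absurd h (ne_of_gt hccpos)
  exact abs_eq_zero.1 this


/-- L2 main induction: copositivity gives a scaling supported on any subset `S`. -/
lemma claim (hm : 0 < m) (A : Idx m n → ℝ) (hsym : IsSymmetric A)
    (hdiag : ∀ i, 0 ≤ A (diagIdx i))
    (hcop : ∀ x : Fin n → ℝ, (∀ i, 0 ≤ x i) → 0 ≤ Q A x) :
    ∀ S : Finset (Fin n), ∃ d : Fin n → ℝ, (∀ i ∈ S, 0 < d i) ∧ (∀ i ∉ S, d i = 0) ∧
      ∀ i ∈ S, ∑ j ∈ (offD m n).filter (fun j => j ⟨0, hm⟩ = i), |A j| * P d j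
        ≤ A (diagIdx i) * d i ^ m := by
  intro S
  induction S using Finset.strongInduction with
  | _ S ih =>
  rcases Finset.eq_empty_or_nonempty S with rfl | hSne
  · refine ⟨fun _ => 0, ?_, ?_, ?_⟩
    · intro i hi; exact absurd hi (Finset.notMem_empty i)
    · intro i _; rfl
    · intro i hi; exact absurd hi (Finset.notMem_empty i)
  set K : Set (Fin n → ℝ) :=
    {y | (∀ i, 0 ≤ y i) ∧ (∀ i ∉ S, y i = 0) ∧ ∑ i, y i ^ m = 1} with hK
  have hKne : K.Nonempty := by
    obtain ⟨i₀, hi₀⟩ := hSne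
    refine ⟨fun i' => if i' = i₀ then 1 else 0, ?_, ?_, ?_⟩
    · intro i'; dsimp only; split_ifs
      exacts [zero_le_one, le_refl 0]
    · intro i' hi'; dsimp only
      rw [if_neg]
      rintro rfl; exact hi' hi₀
    · rw [Finset.sum_eq_single_of_mem i₀ (Finset.mem_univ i₀)]
      · simp
      · intro b _ hb; dsimp only; rw [if_neg hb, zero_pow hm.ne']
  have hKcl : IsClosed K := by
    have h1 : IsClosed {y : Fin n → ℝ | ∀ i, 0 ≤ y i} := by
      have he : {y : Fin n → ℝ | ∀ i, 0 ≤ y i} = ⋂ i, {y | 0 ≤ y i} := by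
        ext y; simp [Set.mem_iInter]
      rw [he]
      exact isClosed_iInter fun i => isClosed_le continuous_const (continuous_apply i)
    have h2 : IsClosed {y : Fin n → ℝ | ∀ i ∉ S, y i = 0} := by
      have he : {y : Fin n → ℝ | ∀ i ∉ S, y i = 0}
          = ⋂ i, ⋂ (_ : i ∉ S), {y : Fin n → ℝ | y i = 0} := by
        ext y; simp [Set.mem_iInter]
      rw [he]
      exact isClosed_iInter fun i => isClosed_iInter fun _ =>
        isClosed_eq (continuous_apply i) continuous_const
    have h3 : IsClosed {y : Fin n → ℝ | ∑ i, y i ^ m = 1} :=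
      isClosed_eq (continuous_finset_sum _ fun i _ => (continuous_apply i).pow m)
        continuous_const
    have he : K = {y : Fin n → ℝ | ∀ i, 0 ≤ y i}
        ∩ ({y : Fin n → ℝ | ∀ i ∉ S, y i = 0} ∩ {y : Fin n → ℝ | ∑ i, y i ^ m = 1}) := by
      ext y; exact Iff.rfl
    rw [he]
    exact h1.inter (h2.inter h3)
  have hKb : K ⊆ Metric.closedBall 0 1 := by
    intro y hy
    rw [Metric.mem_closedBall, dist_zero_right]
    rw [pi_norm_le_iff_of_nonneg zero_le_one]
    intro i
    rw [Real.norm_eq_abs, abs_of_nonneg (hy.1 i)]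
    have h1 : y i ^ m ≤ 1 := by
      rw [← hy.2.2]
      exact Finset.single_le_sum (fun i' _ => pow_nonneg (hy.1 i') m) (Finset.mem_univ i)
    exact (pow_le_one_iff_of_nonneg (hy.1 i) hm.ne').1 h1
  have hKc : IsCompact K :=
    IsCompact.of_isClosed_subset (isCompact_closedBall 0 1) hKcl hKb
  have hQc : Continuous (Q A) := by
    unfold Q P
    exact Continuous.sub
      (continuous_finset_sum _ fun i _ => continuous_const.mul ((continuous_apply i).pow m))
      (continuous_finset_sum _ fun j _ => continuous_const.mul
        (continuous_finset_prod _ fun k _ => continuous_apply (j k)))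
  obtain ⟨x, hxK, hxmin⟩ := hKc.exists_isMinOn hKne hQc.continuousOn
  obtain ⟨hx0, hxS, hxsum⟩ := hxK
  set μ : ℝ := Q A x with hμdef
  have hμ : 0 ≤ μ := hcop x hx0
  have hkey : ∀ y : Fin n → ℝ, (∀ i, 0 ≤ y i) → (∀ i ∉ S, y i = 0) →
      μ * ∑ i, y i ^ m ≤ Q A y := by
    intro y hy hyS
    set N : ℝ := ∑ i, y i ^ m with hN
    have hN0 : 0 ≤ N := Finset.sum_nonneg fun i _ => pow_nonneg (hy i) m
    rcases eq_or_lt_of_le hN0 with hNeq | hNpos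
    · have hy0 : ∀ i, y i = 0 := by
        intro i
        have h1 := (Finset.sum_eq_zero_iff_of_nonneg
          (fun i' (_ : i' ∈ (univ : Finset (Fin n))) => pow_nonneg (hy i') m)).1 hNeq.symm i
          (Finset.mem_univ i)
        exact pow_eq_zero_iff hm.ne' |>.1 h1
      have hQ0 : Q A y = 0 := by
        unfold Q
        rw [Finset.sum_eq_zero (fun i (_ : i ∈ (univ : Finset (Fin n))) => by
            rw [hy0 i, zero_pow hm.ne', mul_zero]),
          Finset.sum_eq_zero (fun j (_ : j ∈ offD m n) => by
            rw [P, Finset.prod_eq_zero (Finset.mem_univ (⟨0, hm⟩ : Fin m)) (hy0 _), mul_zero]),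
          sub_zero]
      rw [hQ0, ← hNeq, mul_zero]
    · set c : ℝ := N ^ (-(m:ℝ)⁻¹) with hc
      have hcpos : 0 < c := Real.rpow_pos_of_pos hNpos _
      have hcm : c ^ m = N⁻¹ := by
        rw [hc, ← Real.rpow_natCast (N ^ (-(m:ℝ)⁻¹)) m, ← Real.rpow_mul hNpos.le]
        rw [show (-(m:ℝ)⁻¹ * m) = -1 by field_simp]
        exact Real.rpow_neg_one N
      have hzK : (fun i => c * y i) ∈ K := by
        refine ⟨fun i => mul_nonneg hcpos.le (hy i),
          fun i hi => by show c * y i = 0; rw [hyS i hi, mul_zero], ?_⟩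
        have hsum : ∑ i, (c * y i) ^ m = c ^ m * N := by
          rw [hN, Finset.mul_sum]
          exact Finset.sum_congr rfl fun i _ => by rw [mul_pow]
        rw [hsum, hcm, inv_mul_cancel₀ hNpos.ne']
      have h1 : μ ≤ Q A (fun i => c * y i) := hxmin hzK
      rw [Q_smul A c y, hcm] at h1
      have h2 := mul_le_mul_of_nonneg_right h1 hN0
      calc μ * N ≤ (N⁻¹ * Q A y) * N := h2
        _ = Q A y := by field_simp
  by_cases hfull : ∀ i ∈ S, 0 < x i
  · -- interior case
    refine ⟨x, hfull, hxS, ?_⟩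
    intro i hi
    refine interior_row hm A hsym x hx0 μ hμ i (hfull i hi) ?_ ?_
    · intro t ht
      apply hkey
      · intro i'
        rcases eq_or_ne i' i with rfl | hne
        · rw [Function.update_self]; exact ht.le
        · rw [Function.update_of_ne hne]; exact hx0 i'
      · intro i' hi'
        have hne : i' ≠ i := fun h => hi' (h ▸ hi)
        rw [Function.update_of_ne hne]; exact hxS i' hi'
    · rw [hxsum, mul_one]
  · -- boundary case
    push_neg at hfull
    obtain ⟨i₁, hi₁S, hi₁⟩ := hfull
    have hxi₁ : x i₁ = 0 := le_antisymm hi₁ (hx0 i₁)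
    set T : Finset (Fin n) := S.filter (fun i => 0 < x i) with hT
    set U : Finset (Fin n) := S \ T with hU
    have hTS : T ⊆ S := Finset.filter_subset _ _
    have hUS : U ⊆ S := Finset.sdiff_subset
    have hi₁U : i₁ ∈ U := by
      refine Finset.mem_sdiff.2 ⟨hi₁S, fun h => ?_⟩
      have := (Finset.mem_filter.1 h).2
      rw [hxi₁] at this
      exact lt_irrefl 0 this
    have hTss : T ⊂ S :=
      (Finset.ssubset_iff_of_subset hTS).2 ⟨i₁, hi₁S, (Finset.mem_sdiff.1 hi₁U).2⟩
    have hTne : T.Nonempty := by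
      by_contra hTe
      rw [Finset.not_nonempty_iff_eq_empty] at hTe
      have hx00 : ∀ i, x i = 0 := by
        intro i
        by_cases hiS : i ∈ S
        · by_contra hne
          have hpos : 0 < x i := lt_of_le_of_ne (hx0 i) (Ne.symm hne)
          have hiT : i ∈ T := Finset.mem_filter.2 ⟨hiS, hpos⟩
          rw [hTe] at hiT
          exact absurd hiT (Finset.notMem_empty i)
        · exact hxS i hiS
      have hcontra : (1:ℝ) = 0 := by
        rw [← hxsum]
        exact Finset.sum_eq_zero fun i _ => by rw [hx00 i, zero_pow hm.ne']
      norm_num at hcontra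
    obtain ⟨i₂, hi₂⟩ := hTne
    have hUss : U ⊂ S :=
      (Finset.ssubset_iff_of_subset hUS).2
        ⟨i₂, hTS hi₂, fun hc => (Finset.mem_sdiff.1 hc).2 hi₂⟩
    obtain ⟨d₁, hd₁pos, hd₁z, hd₁row⟩ := ih T hTss
    obtain ⟨d₂, hd₂pos, hd₂z, hd₂row⟩ := ih U hUss
    set d : Fin n → ℝ := fun i => d₁ i + d₂ i with hd
    have hd₁0 : ∀ i, 0 ≤ d₁ i := by
      intro i
      by_cases h : i ∈ T
      · exact (hd₁pos i h).le
      · exact le_of_eq (hd₁z i h).symm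
    have hd₂0 : ∀ i, 0 ≤ d₂ i := by
      intro i
      by_cases h : i ∈ U
      · exact (hd₂pos i h).le
      · exact le_of_eq (hd₂z i h).symm
    have hxU : ∀ i ∈ U, x i = 0 := by
      intro i hiU
      rcases Finset.mem_sdiff.1 hiU with ⟨hiS, hiT⟩
      by_contra hne
      exact hiT (Finset.mem_filter.2 ⟨hiS, lt_of_le_of_ne (hx0 i) (Ne.symm hne)⟩)
    have hxT : ∀ i, i ∉ U → i ∈ S → 0 < x i := by
      intro i hiU hiS
      by_contra h
      exact hiU (Finset.mem_sdiff.2 ⟨hiS, fun hT' => h (Finset.mem_filter.1 hT').2⟩)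
    have hkb : ∀ t : ℝ, 0 ≤ t →
        μ * ∑ i', (x i' + t * (if i' ∈ U then 1 else 0)) ^ m
          ≤ Q A (fun i' => x i' + t * (if i' ∈ U then 1 else 0)) := by
      intro t ht
      apply hkey
      · intro i'
        refine add_nonneg (hx0 i') (mul_nonneg ht ?_)
        split_ifs
        exacts [zero_le_one, le_refl 0]
      · intro i' hi'
        have h1 : x i' = 0 := hxS i' hi'
        have h2 : i' ∉ U := fun h => hi' (hUS h)
        rw [h1, if_neg h2, mul_zero, add_zero]
    have hmix := boundary_vanish hm A x hx0 U hxU μ hkb (by rw [hxsum, mul_one])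
    -- row inequality for i ∈ T
    have hrowT : ∀ i ∈ T,
        ∑ j ∈ (offD m n).filter (fun j => j ⟨0, hm⟩ = i), |A j| * P d j
          ≤ A (diagIdx i) * d i ^ m := by
      intro i hiT
      have key : ∀ j ∈ (offD m n).filter (fun j => j ⟨0, hm⟩ = i),
          |A j| * P d j = |A j| * P d₁ j := by
        intro j hj
        rcases Finset.mem_filter.1 hj with ⟨hjo, hji⟩
        by_cases hallS : ∀ k, j k ∈ S
        · by_cases hU' : ∃ k, j k ∈ U
          · obtain ⟨k', hk'⟩ := hU'
            have h1 : 0 < (univ.filter fun k => j k ∈ U).card :=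
              Finset.card_pos.2 ⟨k', Finset.mem_filter.2 ⟨Finset.mem_univ k', hk'⟩⟩
            have hnotin : (⟨0, hm⟩ : Fin m) ∉ univ.filter (fun k => j k ∈ U) := by
              intro hc
              have hiU' := (Finset.mem_filter.1 hc).2
              rw [hji] at hiU'
              exact (Finset.mem_sdiff.1 hiU').2 hiT
            have h2 : (univ.filter fun k => j k ∈ U).card < m := by
              have hss : (univ.filter fun k => j k ∈ U) ⊂ univ :=
                (Finset.ssubset_iff_of_subset (Finset.subset_univ _)).2
                  ⟨⟨0, hm⟩, Finset.mem_univ _, hnotin⟩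
              have := Finset.card_lt_card hss
              rwa [Finset.card_univ, Fintype.card_fin] at this
            have h3 : ∀ k, j k ∉ U → 0 < x (j k) := fun k hk => hxT (j k) hk (hallS k)
            rw [hmix j hjo h1 h2 h3]
            simp
          · push_neg at hU'
            have hPP : P d j = P d₁ j := by
              rw [P, P]
              refine Finset.prod_congr rfl fun k _ => ?_
              have hkT : j k ∈ T := by
                by_contra hT'
                exact hU' k (Finset.mem_sdiff.2 ⟨hallS k, hT'⟩)
              have : d₂ (j k) = 0 := hd₂z (j k) (hU' k)
              rw [hd]
              dsimp only
              rw [this, add_zero]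
            rw [hPP]
        · push_neg at hallS
          obtain ⟨k', hk'⟩ := hallS
          have hz1 : P d j = 0 := by
            refine Finset.prod_eq_zero (Finset.mem_univ k') ?_
            rw [hd]
            dsimp only
            rw [hd₁z _ (fun h => hk' (hTS h)), hd₂z _ (fun h => hk' (hUS h)), add_zero]
          have hz2 : P d₁ j = 0 :=
            Finset.prod_eq_zero (Finset.mem_univ k') (hd₁z _ (fun h => hk' (hTS h)))
          rw [hz1, hz2]
      rw [Finset.sum_congr rfl key]
      have hdi : d i = d₁ i := by
        rw [hd]
        dsimp only
        rw [hd₂z i (fun h => (Finset.mem_sdiff.1 h).2 hiT), add_zero]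
      rw [hdi]
      exact hd₁row i hiT
    -- row inequality for i ∈ U
    have hrowU : ∀ i ∈ U,
        ∑ j ∈ (offD m n).filter (fun j => j ⟨0, hm⟩ = i), |A j| * P d j
          ≤ A (diagIdx i) * d i ^ m := by
      intro i hiU
      have key : ∀ j ∈ (offD m n).filter (fun j => j ⟨0, hm⟩ = i),
          |A j| * P d j = |A j| * P d₂ j := by
        intro j hj
        rcases Finset.mem_filter.1 hj with ⟨hjo, hji⟩
        by_cases hallS : ∀ k, j k ∈ S
        · by_cases hallU : ∀ k, j k ∈ U
          · have hPP : P d j = P d₂ j := by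
              rw [P, P]
              refine Finset.prod_congr rfl fun k _ => ?_
              have : d₁ (j k) = 0 := hd₁z (j k) (Finset.mem_sdiff.1 (hallU k)).2
              rw [hd]
              dsimp only
              rw [this, zero_add]
            rw [hPP]
          · push_neg at hallU
            obtain ⟨k', hk'⟩ := hallU
            have h1 : 0 < (univ.filter fun k => j k ∈ U).card := by
              refine Finset.card_pos.2 ⟨⟨0, hm⟩, Finset.mem_filter.2 ⟨Finset.mem_univ _, ?_⟩⟩
              rw [hji]; exact hiU
            have h2 : (univ.filter fun k => j k ∈ U).card < m := by
              have hss : (univ.filter fun k => j k ∈ U) ⊂ univ :=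
                (Finset.ssubset_iff_of_subset (Finset.subset_univ _)).2
                  ⟨k', Finset.mem_univ _, fun hc => hk' (Finset.mem_filter.1 hc).2⟩
              have := Finset.card_lt_card hss
              rwa [Finset.card_univ, Fintype.card_fin] at this
            have h3 : ∀ k, j k ∉ U → 0 < x (j k) := fun k hk => hxT (j k) hk (hallS k)
            rw [hmix j hjo h1 h2 h3]
            simp
        · push_neg at hallS
          obtain ⟨k', hk'⟩ := hallS
          have hz1 : P d j = 0 := by
            refine Finset.prod_eq_zero (Finset.mem_univ k') ?_
            rw [hd]
            dsimp only
            rw [hd₁z _ (fun h => hk' (hTS h)), hd₂z _ (fun h => hk' (hUS h)), add_zero]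
          have hz2 : P d₂ j = 0 :=
            Finset.prod_eq_zero (Finset.mem_univ k') (hd₂z _ (fun h => hk' (hUS h)))
          rw [hz1, hz2]
      rw [Finset.sum_congr rfl key]
      have hdi : d i = d₂ i := by
        rw [hd]
        dsimp only
        rw [hd₁z i (fun h => (Finset.mem_sdiff.1 hiU).2 h), zero_add]
      rw [hdi]
      exact hd₂row i hiU
    refine ⟨d, ?_, ?_, ?_⟩
    · intro i hiS
      by_cases hiT : i ∈ T
      · have : 0 < d₁ i := hd₁pos i hiT
        have h2 := hd₂0 i
        rw [hd]; dsimp only; linarith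
      · have hiU : i ∈ U := Finset.mem_sdiff.2 ⟨hiS, hiT⟩
        have : 0 < d₂ i := hd₂pos i hiU
        have h1 := hd₁0 i
        rw [hd]; dsimp only; linarith
    · intro i hiS
      rw [hd]; dsimp only
      rw [hd₁z i (fun h => hiS (hTS h)), hd₂z i (fun h => hiS (hUS h)), add_zero]
    · intro i hiS
      by_cases hiT : i ∈ T
      · exact hrowT i hiT
      · exact hrowU i (Finset.mem_sdiff.2 ⟨hiS, hiT⟩)

/-- L2: copositivity of the comparison form gives a positive diagonal scaling. -/
lemma exists_dd (hm : 0 < m) (A : Idx m n → ℝ) (hsym : IsSymmetric A)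
    (hdiag : ∀ i, 0 ≤ A (diagIdx i))
    (hcop : ∀ x : Fin n → ℝ, (∀ i, 0 ≤ x i) → 0 ≤ Q A x) :
    ∃ d : Fin n → ℝ, (∀ i, 0 < d i) ∧ IsDD hm (fun j => A j * ∏ k : Fin m, d (j k)) := by
  obtain ⟨d, hdpos, _, hrow⟩ := claim hm A hsym hdiag hcop univ
  have hdp : ∀ i, 0 < d i := fun i => hdpos i (Finset.mem_univ i)
  refine ⟨d, hdp, ?_⟩
  intro i
  unfold rowSum
  rw [slice_eq hm i]
  have he : ∀ j ∈ (offD m n).filter (fun j => j ⟨0, hm⟩ = i),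
      |A j * ∏ k : Fin m, d (j k)| = |A j| * P d j := by
    intro j _
    rw [abs_mul]
    congr 1
    exact abs_of_nonneg (Finset.prod_nonneg fun k _ => (hdp (j k)).le)
  have h2 : |A (diagIdx (m := m) i) * ∏ k : Fin m, d (diagIdx (m := m) i k)|
      = A (diagIdx (m := m) i) * d i ^ m := by
    have hnn : (0:ℝ) ≤ A (diagIdx (m := m) i) * ∏ k : Fin m, d (diagIdx (m := m) i k) :=
      mul_nonneg (hdiag i) (Finset.prod_nonneg fun k _ => (hdp _).le)
    rw [abs_of_nonneg hnn]
    congr 1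
    simp [diagIdx, Finset.prod_const, Finset.card_univ]
  calc ∑ j ∈ (offD m n).filter (fun j => j ⟨0, hm⟩ = i),
        |(fun j => A j * ∏ k : Fin m, d (j k)) j|
      = ∑ j ∈ (offD m n).filter (fun j => j ⟨0, hm⟩ = i), |A j| * P d j :=
        Finset.sum_congr rfl fun j hj => he j hj
    _ ≤ A (diagIdx (m := m) i) * d i ^ m := hrow i (Finset.mem_univ i)
    _ = |(fun j => A j * ∏ k : Fin m, d (j k)) (diagIdx i)| := h2.symm

end GDDaux

/-- `GDD⁺_{m,n}` is a convex cone: it contains `0`, is closed under nonnegative scalar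
multiplication, and is closed under addition. -/
theorem GDDplus_convexCone (m n : ℕ) (hm : 0 < m) :
    IsGDDplus hm (fun _ : Idx m n => (0 : ℝ)) ∧
    (∀ c : ℝ, 0 ≤ c → ∀ A : Idx m n → ℝ, IsGDDplus hm A →
      IsGDDplus hm (fun j => c * A j)) ∧
    (∀ A B : Idx m n → ℝ, IsGDDplus hm A → IsGDDplus hm B →
      IsGDDplus hm (fun j => A j + B j)) := by
  refine ⟨?_, ?_, ?_⟩
  · -- zero tensor
    refine ⟨fun σ j => rfl, fun i => le_refl 0, fun _ => 1, fun i => one_pos, ?_⟩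
    intro i
    unfold rowSum
    have h0 : ∀ j ∈ Finset.univ.filter
        (fun j : Idx m n => j ⟨0, hm⟩ = i ∧ j ≠ diagIdx i),
        |(fun j : Idx m n => (0:ℝ) * ∏ k : Fin m, (1:ℝ)) j| = 0 := by
      intro j _
      simp
    rw [Finset.sum_congr rfl h0, Finset.sum_const, smul_zero]
    exact abs_nonneg _
  · -- nonnegative scaling
    rintro c hc A ⟨hsym, hdiag, d, hd, hdd⟩
    refine ⟨fun σ j => by dsimp only; rw [hsym σ j],
      fun i => mul_nonneg hc (hdiag i), d, hd, ?_⟩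
    intro i
    show rowSum hm (fun j => (c * A j) * ∏ k : Fin m, d (j k)) i
      ≤ |(c * A (diagIdx i)) * ∏ k : Fin m, d (diagIdx (m := m) i k)|
    have h1 : rowSum hm (fun j => (c * A j) * ∏ k : Fin m, d (j k)) i
        = c * rowSum hm (fun j => A j * ∏ k : Fin m, d (j k)) i := by
      unfold rowSum
      rw [Finset.mul_sum]
      refine Finset.sum_congr rfl fun j _ => ?_
      dsimp only
      rw [mul_assoc, abs_mul, abs_of_nonneg hc]
    have h2 : |(c * A (diagIdx (m := m) i)) * ∏ k : Fin m, d (diagIdx (m := m) i k)|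
        = c * |A (diagIdx (m := m) i) * ∏ k : Fin m, d (diagIdx (m := m) i k)| := by
      rw [mul_assoc, abs_mul, abs_of_nonneg hc]
    rw [h1, h2]
    exact mul_le_mul_of_nonneg_left (hdd i) hc
  · -- addition
    rintro A B hA hB
    have hsym : IsSymmetric (fun j => A j + B j) := by
      intro σ j
      dsimp only
      rw [hA.1 σ j, hB.1 σ j]
    have hdiag : ∀ i : Fin n, 0 ≤ (fun j : Idx m n => A j + B j) (diagIdx i) :=
      fun i => add_nonneg (hA.2.1 i) (hB.2.1 i)
    have hcop : ∀ x : Fin n → ℝ, (∀ i, 0 ≤ x i) →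
        0 ≤ GDDaux.Q (fun j => A j + B j) x := by
      intro x hx
      have h1 := GDDaux.copos hm A hA x hx
      have h2 := GDDaux.copos hm B hB x hx
      have h3 : GDDaux.Q A x + GDDaux.Q B x ≤ GDDaux.Q (fun j => A j + B j) x := by
        unfold GDDaux.Q
        have hdg : ∑ i : Fin n, (fun j : Idx m n => A j + B j) (diagIdx i) * x i ^ m
            = ∑ i : Fin n, A (diagIdx i) * x i ^ m
              + ∑ i : Fin n, B (diagIdx i) * x i ^ m := by
          rw [← Finset.sum_add_distrib]
          refine Finset.sum_congr rfl fun i _ => ?_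
          dsimp only
          ring
        have hoff : ∑ j ∈ GDDaux.offD m n, |(fun j : Idx m n => A j + B j) j| * GDDaux.P x j
            ≤ ∑ j ∈ GDDaux.offD m n, (|A j| * GDDaux.P x j + |B j| * GDDaux.P x j) := by
          refine Finset.sum_le_sum fun j _ => ?_
          calc |(fun j : Idx m n => A j + B j) j| * GDDaux.P x j
              ≤ (|A j| + |B j|) * GDDaux.P x j :=
                mul_le_mul_of_nonneg_right (abs_add_le _ _) (GDDaux.P_nonneg hx j)
            _ = |A j| * GDDaux.P x j + |B j| * GDDaux.P x j := by ring
        have hsplit : ∑ j ∈ GDDaux.offD m n, (|A j| * GDDaux.P x j + |B j| * GDDaux.P x j)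
            = ∑ j ∈ GDDaux.offD m n, |A j| * GDDaux.P x j
              + ∑ j ∈ GDDaux.offD m n, |B j| * GDDaux.P x j :=
          Finset.sum_add_distrib
        rw [hdg]
        rw [hsplit] at hoff
        linarith
      linarith
    obtain ⟨d, hd, hdd⟩ := GDDaux.exists_dd hm (fun j => A j + B j) hsym hdiag hcop
    exact ⟨hsym, hdiag, d, hd, hdd⟩
end

section
/- Let $m,n \in \mathbb{N}$. Every symmetric diagonally dominant tensor $\mathcal{A} \in DD^+_{m,n}$ (with nonnegative diagonal entries) can be written as a nonnegative linear combination of the tensors $\mathcal{V}^{c, i_1\dots i_m}$ for $c \in \{0,1\}$ and multi-indices $(i_1,\dots,i_m)$, i.e., $DD^+_{m,n}$ equals the convex conic hull of the set $\mathbb{E}_{m,n}$ of these generator tensors. -/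
open Finset

/-- `A ∈ DD⁺_{m,n}`: symmetric and each diagonal entry dominates the sum of the absolute
values of the off-diagonal entries on its slice (the diagonal is then nonnegative). -/
def IsDDplus {m n : ℕ} (hm : 0 < m) (A : Idx m n → ℝ) : Prop :=
  IsSymmetric A ∧ ∀ i : Fin n, rowSum hm A i ≤ A (diagIdx i)

/-- The generator tensor `𝒱^{c, ĵ}`: if `ĵ` is diagonal, it is the unit diagonal tensor for
`c = false` and zero for `c = true`; otherwise its entries at permutations of `ĵ` equal
`(-1)^c`, its diagonal entries equal the sum of absolute values of the off-diagonal entries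
on the corresponding slice, and all other entries vanish. -/
def genV {m n : ℕ} (hm : 0 < m) (c : Bool) (jh : Idx m n) : Idx m n → ℝ :=
  fun j =>
    if ∃ i : Fin n, jh = diagIdx i then
      (if c = false ∧ j = jh then 1 else 0)
    else if ∃ i : Fin n, j = diagIdx i then
      ((Finset.univ.filter (fun p : Idx m n =>
        (∃ σ : Equiv.Perm (Fin m), p = jh ∘ σ) ∧ p ⟨0, hm⟩ = j ⟨0, hm⟩)).card : ℝ)
    else if ∃ σ : Equiv.Perm (Fin m), j = jh ∘ σ then (if c then -1 else 1)
    else 0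

section Aux
variable {m n : ℕ}

lemma rel_symm {a b : Idx m n} (h : ∃ σ : Equiv.Perm (Fin m), b = a ∘ σ) :
    ∃ σ : Equiv.Perm (Fin m), a = b ∘ σ := by
  obtain ⟨σ, rfl⟩ := h
  exact ⟨σ⁻¹, by funext k; simp⟩

lemma rel_trans {a b c : Idx m n} (h1 : ∃ σ : Equiv.Perm (Fin m), b = a ∘ σ)
    (h2 : ∃ σ : Equiv.Perm (Fin m), c = b ∘ σ) : ∃ σ : Equiv.Perm (Fin m), c = a ∘ σ := by
  obtain ⟨σ, rfl⟩ := h1; obtain ⟨τ, rfl⟩ := h2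
  exact ⟨σ * τ, by funext k; simp [Equiv.Perm.mul_apply]⟩

lemma isDiag_of_rel {a b : Idx m n} (h : ∃ σ : Equiv.Perm (Fin m), b = a ∘ σ)
    (ha : ∃ i, a = diagIdx i) : ∃ i, b = diagIdx i := by
  obtain ⟨σ, rfl⟩ := h; obtain ⟨i, rfl⟩ := ha; exact ⟨i, rfl⟩

def orbit (jh : Idx m n) : Finset (Idx m n) :=
  univ.filter (fun p => ∃ σ : Equiv.Perm (Fin m), p = jh ∘ σ)

lemma mem_orbit {jh p : Idx m n} :
    p ∈ orbit jh ↔ ∃ σ : Equiv.Perm (Fin m), p = jh ∘ σ := by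
  simp [orbit]

lemma self_mem_orbit (jh : Idx m n) : jh ∈ orbit jh := mem_orbit.2 ⟨1, rfl⟩

lemma orbit_eq_of_rel {a b : Idx m n} (h : ∃ σ : Equiv.Perm (Fin m), b = a ∘ σ) :
    orbit b = orbit a := by
  ext p; simp only [mem_orbit]
  exact ⟨fun hp => rel_trans h hp, fun hp => rel_trans (rel_symm h) hp⟩

lemma orbit_card_pos (jh : Idx m n) : 0 < ((orbit jh).card : ℝ) := by
  exact_mod_cast card_pos.2 ⟨jh, self_mem_orbit jh⟩

lemma not_diag_of_row {hm : 0 < m} {i : Fin n} {j : Idx m n}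
    (h0 : j ⟨0, hm⟩ = i) (hne : j ≠ diagIdx i) : ¬ ∃ i', j = diagIdx i' := by
  rintro ⟨i', rfl⟩
  exact hne (by rw [show (diagIdx i' : Idx m n) ⟨0, hm⟩ = i' from rfl] at h0; rw [h0])

lemma max_sub_max (a : ℝ) : max a 0 - max (-a) 0 = a := by
  rcases le_total a 0 with h | h
  · rw [max_eq_right h, max_eq_left (neg_nonneg.2 h)]; ring
  · rw [max_eq_left h, max_eq_right (neg_nonpos.2 h)]; ring

lemma max_add_max (a : ℝ) : max a 0 + max (-a) 0 = |a| := by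
  rcases le_total a 0 with h | h
  · rw [max_eq_right h, max_eq_left (neg_nonneg.2 h), abs_of_nonpos h]; ring
  · rw [max_eq_left h, max_eq_right (neg_nonpos.2 h), abs_of_nonneg h]; ring

lemma genV_of_diag (hm : 0 < m) (c : Bool) {jh : Idx m n} (hd : ∃ i, jh = diagIdx i)
    (j : Idx m n) : genV hm c jh j = if c = false ∧ j = jh then 1 else 0 := by
  simp only [genV]; rw [if_pos hd]

lemma genV_offdiag_diag (hm : 0 < m) (c : Bool) {jh : Idx m n} (hd : ¬ ∃ i, jh = diagIdx i)
    {j : Idx m n} (hj : ∃ i, j = diagIdx i) :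
    genV hm c jh j = ((Finset.univ.filter (fun p : Idx m n =>
        (∃ σ : Equiv.Perm (Fin m), p = jh ∘ σ) ∧ p ⟨0, hm⟩ = j ⟨0, hm⟩)).card : ℝ) := by
  simp only [genV]; rw [if_neg hd, if_pos hj]

lemma genV_offdiag_offdiag (hm : 0 < m) (c : Bool) {jh j : Idx m n}
    (hd : ¬ ∃ i, jh = diagIdx i) (hj : ¬ ∃ i, j = diagIdx i) :
    genV hm c jh j =
      if ∃ σ : Equiv.Perm (Fin m), j = jh ∘ σ then (if c then -1 else 1) else 0 := by
  simp only [genV]; rw [if_neg hd, if_neg hj]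

lemma filter_eq (hm : 0 < m) {jh : Idx m n} (hjh : ¬ ∃ i, jh = diagIdx i) (i : Fin n) :
    Finset.univ.filter (fun p : Idx m n =>
        (∃ σ : Equiv.Perm (Fin m), p = jh ∘ σ) ∧ p ⟨0, hm⟩ = i)
    = (Finset.univ.filter (fun j : Idx m n => j ⟨0, hm⟩ = i ∧ j ≠ diagIdx i)).filter
        (fun p => ∃ σ : Equiv.Perm (Fin m), p = jh ∘ σ) := by
  rw [Finset.filter_filter]
  ext p
  simp only [mem_filter, mem_univ, true_and]
  constructor
  · rintro ⟨hrel, h0⟩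
    exact ⟨⟨h0, fun hp => hjh (isDiag_of_rel (rel_symm hrel) ⟨i, hp⟩)⟩, hrel⟩
  · tauto

lemma genV_symm (hm : 0 < m) (c : Bool) (jh : Idx m n) (σ : Equiv.Perm (Fin m))
    (j : Idx m n) : genV hm c jh (j ∘ σ) = genV hm c jh j := by
  by_cases hDj : ∃ i, j = diagIdx i
  · obtain ⟨i, rfl⟩ := hDj
    rfl
  · have hDjσ : ¬ ∃ i, j ∘ σ = diagIdx i := by
      rintro ⟨i, h⟩
      exact hDj ⟨i, by funext k; have := congrFun h (σ.symm k); simpa [diagIdx] using this⟩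
    have hrel : (∃ τ : Equiv.Perm (Fin m), j ∘ σ = jh ∘ τ) ↔
        (∃ τ : Equiv.Perm (Fin m), j = jh ∘ τ) := by
      constructor
      · rintro ⟨τ, h⟩
        refine ⟨τ * σ⁻¹, ?_⟩
        funext k
        have := congrFun h (σ⁻¹ k)
        simpa [Equiv.Perm.mul_apply] using this
      · rintro ⟨τ, rfl⟩
        exact ⟨τ * σ, by funext k; simp [Equiv.Perm.mul_apply]⟩
    simp only [genV]
    by_cases hDjh : ∃ i, jh = diagIdx i
    · rw [if_pos hDjh, if_pos hDjh, if_neg, if_neg]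
      · rintro ⟨-, rfl⟩; exact hDj hDjh
      · rintro ⟨-, h⟩; exact hDjσ (h ▸ hDjh)
    · rw [if_neg hDjh, if_neg hDjh, if_neg hDjσ, if_neg hDj]
      exact if_congr hrel rfl rfl

noncomputable def lam0 (hm : 0 < m) (A : Idx m n → ℝ) : Bool × Idx m n → ℝ :=
  fun q =>
    if ∃ i : Fin n, q.2 = diagIdx i then
      (if q.1 then 0 else A q.2 - rowSum hm A (q.2 ⟨0, hm⟩))
    else (if q.1 then max (-(A q.2)) 0 else max (A q.2) 0) / ((orbit q.2).card : ℝ)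

lemma count_sum (hm : 0 < m) {A : Idx m n → ℝ} (hsym : IsSymmetric A) (i : Fin n) :
    ∑ jh : Idx m n, (if ∃ i', jh = diagIdx i' then 0 else
      |A jh| / ((orbit jh).card : ℝ) *
        ((Finset.univ.filter (fun p : Idx m n =>
          (∃ σ : Equiv.Perm (Fin m), p = jh ∘ σ) ∧ p ⟨0, hm⟩ = i)).card : ℝ))
    = rowSum hm A i := by
  set S := Finset.univ.filter (fun j : Idx m n => j ⟨0, hm⟩ = i ∧ j ≠ diagIdx i) with hS
  have step1 : ∀ jh : Idx m n, (if ∃ i', jh = diagIdx i' then 0 else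
      |A jh| / ((orbit jh).card : ℝ) *
        ((Finset.univ.filter (fun p : Idx m n =>
          (∃ σ : Equiv.Perm (Fin m), p = jh ∘ σ) ∧ p ⟨0, hm⟩ = i)).card : ℝ))
      = ∑ p ∈ S, (if (¬ ∃ i', jh = diagIdx i') ∧ (∃ σ : Equiv.Perm (Fin m), p = jh ∘ σ)
          then |A jh| / ((orbit jh).card : ℝ) else 0) := by
    intro jh
    by_cases hD : ∃ i', jh = diagIdx i'
    · rw [if_pos hD]
      rw [eq_comm, Finset.sum_eq_zero]
      intro p _
      rw [if_neg]
      rintro ⟨h, -⟩; exact h hD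
    · rw [if_neg hD, filter_eq hm hD i, ← hS]
      rw [Finset.card_filter, Nat.cast_sum]
      rw [Finset.mul_sum]
      refine Finset.sum_congr rfl fun p _ => ?_
      by_cases hrel : ∃ σ : Equiv.Perm (Fin m), p = jh ∘ σ
      · rw [if_pos hrel, if_pos ⟨hD, hrel⟩]; simp
      · rw [if_neg hrel, if_neg (by tauto)]; simp
  rw [Finset.sum_congr rfl fun jh _ => step1 jh]
  rw [Finset.sum_comm]
  have step2 : ∀ p ∈ S, (∑ jh : Idx m n,
      if (¬ ∃ i', jh = diagIdx i') ∧ (∃ σ : Equiv.Perm (Fin m), p = jh ∘ σ)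
        then |A jh| / ((orbit jh).card : ℝ) else 0) = |A p| := by
    intro p hp
    rw [hS, Finset.mem_filter] at hp
    have hpD : ¬ ∃ i', p = diagIdx i' := not_diag_of_row hp.2.1 hp.2.2
    have horb : Finset.univ.filter (fun jh : Idx m n =>
        (¬ ∃ i', jh = diagIdx i') ∧ (∃ σ : Equiv.Perm (Fin m), p = jh ∘ σ)) = orbit p := by
      ext jh
      simp only [Finset.mem_filter, Finset.mem_univ, true_and, mem_orbit]
      constructor
      · rintro ⟨-, hrel⟩; exact rel_symm hrel
      · intro hrel
        exact ⟨fun hD => hpD (isDiag_of_rel (rel_symm hrel) hD), rel_symm hrel⟩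
    rw [← Finset.sum_filter, horb]
    have : ∀ jh ∈ orbit p, |A jh| / ((orbit jh).card : ℝ)
        = |A p| / ((orbit p).card : ℝ) := by
      intro jh hjh
      have hrel := mem_orbit.1 hjh
      obtain ⟨σ, rfl⟩ := hrel
      rw [hsym σ p, orbit_eq_of_rel ⟨σ, rfl⟩]
    rw [Finset.sum_congr rfl this, Finset.sum_const, nsmul_eq_mul,
      mul_div_cancel₀ _ (orbit_card_pos p).ne']
  rw [Finset.sum_congr rfl step2]
  rfl

lemma keyV (hm : 0 < m) (c : Bool) (jh : Idx m n) (i : Fin n) :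
    (∑ j ∈ Finset.univ.filter (fun j : Idx m n => j ⟨0, hm⟩ = i ∧ j ≠ diagIdx i),
      |genV hm c jh j|) ≤ genV hm c jh (diagIdx i) := by
  by_cases hD : ∃ i', jh = diagIdx i'
  · have h0 : ∀ j ∈ Finset.univ.filter
        (fun j : Idx m n => j ⟨0, hm⟩ = i ∧ j ≠ diagIdx i), |genV hm c jh j| = 0 := by
      intro j hj
      rw [Finset.mem_filter] at hj
      rw [genV_of_diag hm c hD, if_neg, abs_zero]
      rintro ⟨-, rfl⟩
      exact not_diag_of_row hj.2.1 hj.2.2 hD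
    rw [Finset.sum_congr rfl h0, Finset.sum_const_zero, genV_of_diag hm c hD]
    split_ifs <;> norm_num
  · have habs : ∀ j ∈ Finset.univ.filter
        (fun j : Idx m n => j ⟨0, hm⟩ = i ∧ j ≠ diagIdx i),
        |genV hm c jh j| = if ∃ σ : Equiv.Perm (Fin m), j = jh ∘ σ then (1 : ℝ) else 0 := by
      intro j hj
      rw [Finset.mem_filter] at hj
      rw [genV_offdiag_offdiag hm c hD (not_diag_of_row hj.2.1 hj.2.2)]
      split_ifs <;> simp
    rw [Finset.sum_congr rfl habs, Finset.sum_boole,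
      genV_offdiag_diag hm c hD ⟨i, rfl⟩]
    simp only [show (diagIdx i : Idx m n) ⟨0, hm⟩ = i from rfl]
    rw [filter_eq hm hD i]

end Aux

section Main
variable {m n : ℕ}

lemma lam0_true_diag (hm : 0 < m) (A : Idx m n → ℝ) {jh : Idx m n}
    (hD : ∃ i, jh = diagIdx i) : lam0 hm A (true, jh) = 0 := by
  simp only [lam0]; rw [if_pos hD]; norm_num

lemma lam0_false_diag (hm : 0 < m) (A : Idx m n → ℝ) {jh : Idx m n}
    (hD : ∃ i, jh = diagIdx i) :
    lam0 hm A (false, jh) = A jh - rowSum hm A (jh ⟨0, hm⟩) := by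
  simp only [lam0]; rw [if_pos hD]; norm_num

lemma lam0_true_off (hm : 0 < m) (A : Idx m n → ℝ) {jh : Idx m n}
    (hD : ¬ ∃ i, jh = diagIdx i) :
    lam0 hm A (true, jh) = max (-(A jh)) 0 / ((orbit jh).card : ℝ) := by
  simp only [lam0]; rw [if_neg hD]; norm_num

lemma lam0_false_off (hm : 0 < m) (A : Idx m n → ℝ) {jh : Idx m n}
    (hD : ¬ ∃ i, jh = diagIdx i) :
    lam0 hm A (false, jh) = max (A jh) 0 / ((orbit jh).card : ℝ) := by
  simp only [lam0]; rw [if_neg hD]; norm_num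

lemma lam0_nonneg (hm : 0 < m) {A : Idx m n → ℝ}
    (hdd : ∀ i, rowSum hm A i ≤ A (diagIdx i)) (q : Bool × Idx m n) :
    0 ≤ lam0 hm A q := by
  rcases q with ⟨c, jh⟩
  by_cases hD : ∃ i, jh = diagIdx i
  · cases c
    · obtain ⟨i, rfl⟩ := hD
      rw [lam0_false_diag hm A ⟨i, rfl⟩]
      rw [show (diagIdx i : Idx m n) ⟨0, hm⟩ = i from rfl]
      exact sub_nonneg.2 (hdd i)
    · rw [lam0_true_diag hm A hD]
  · cases c
    · rw [lam0_false_off hm A hD]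
      exact div_nonneg (le_max_right _ _) (orbit_card_pos jh).le
    · rw [lam0_true_off hm A hD]
      exact div_nonneg (le_max_right _ _) (orbit_card_pos jh).le

lemma term_offdiag (hm : 0 < m) (A : Idx m n → ℝ) {j : Idx m n}
    (hDj : ¬ ∃ i, j = diagIdx i) (jh : Idx m n) :
    lam0 hm A (true, jh) * genV hm true jh j + lam0 hm A (false, jh) * genV hm false jh j
    = if ∃ σ : Equiv.Perm (Fin m), j = jh ∘ σ then A jh / ((orbit jh).card : ℝ) else 0 := by
  by_cases hD : ∃ i, jh = diagIdx i
  · rw [genV_of_diag hm true hD, genV_of_diag hm false hD]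
    rw [if_neg (by simp : ¬(true = false ∧ j = jh)),
      if_neg (by rintro ⟨-, rfl⟩; exact hDj hD),
      if_neg (fun hr => hDj (isDiag_of_rel hr hD))]
    ring
  · rw [genV_offdiag_offdiag hm true hD hDj, genV_offdiag_offdiag hm false hD hDj,
      lam0_true_off hm A hD, lam0_false_off hm A hD]
    have e1 : (if (true : Bool) then (-1 : ℝ) else 1) = -1 := rfl
    have e2 : (if (false : Bool) then (-1 : ℝ) else 1) = 1 := rfl
    by_cases h : ∃ σ : Equiv.Perm (Fin m), j = jh ∘ σ
    · rw [if_pos h, if_pos h, if_pos h, e1, e2]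
      have key : max (A jh) 0 / ((orbit jh).card : ℝ)
          - max (-(A jh)) 0 / ((orbit jh).card : ℝ) = A jh / ((orbit jh).card : ℝ) := by
        rw [div_sub_div_same, max_sub_max]
      linarith [key]
    · rw [if_neg h, if_neg h, if_neg h]; ring

lemma term_diag (hm : 0 < m) (A : Idx m n → ℝ) (i : Fin n) (jh : Idx m n) :
    lam0 hm A (true, jh) * genV hm true jh (diagIdx i)
      + lam0 hm A (false, jh) * genV hm false jh (diagIdx i)
    = (if jh = diagIdx i then A (diagIdx i) - rowSum hm A i else 0)
      + (if ∃ i', jh = diagIdx i' then 0 else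
          |A jh| / ((orbit jh).card : ℝ) *
            ((Finset.univ.filter (fun p : Idx m n =>
              (∃ σ : Equiv.Perm (Fin m), p = jh ∘ σ) ∧ p ⟨0, hm⟩ = i)).card : ℝ)) := by
  by_cases hD : ∃ i', jh = diagIdx i'
  · rw [genV_of_diag hm true hD, genV_of_diag hm false hD,
      lam0_true_diag hm A hD, lam0_false_diag hm A hD, if_pos hD,
      if_neg (by simp : ¬(true = false ∧ (diagIdx i : Idx m n) = jh))]
    by_cases hji : jh = diagIdx i
    · subst hji
      rw [if_pos (⟨rfl, rfl⟩ : false = false ∧ (diagIdx i : Idx m n) = diagIdx i),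
        if_pos rfl, show (diagIdx i : Idx m n) ⟨0, hm⟩ = i from rfl]
      ring
    · rw [if_neg (by rintro ⟨-, h⟩; exact hji h.symm), if_neg hji]
      ring
  · rw [genV_offdiag_diag hm true hD ⟨i, rfl⟩, genV_offdiag_diag hm false hD ⟨i, rfl⟩,
      lam0_true_off hm A hD, lam0_false_off hm A hD,
      if_neg (fun h => hD ⟨i, h⟩), if_neg hD]
    simp only [show (diagIdx i : Idx m n) ⟨0, hm⟩ = i from rfl]
    rw [show |A jh| = max (A jh) 0 + max (-(A jh)) 0 from (max_add_max (A jh)).symm]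
    rw [add_div]
    ring

lemma forward_sum (hm : 0 < m) {A : Idx m n → ℝ} (hsym : IsSymmetric A) (j : Idx m n) :
    A j = ∑ q : Bool × Idx m n, lam0 hm A q * genV hm q.1 q.2 j := by
  rw [Fintype.sum_prod_type, Fintype.sum_bool, ← Finset.sum_add_distrib]
  by_cases hDj : ∃ i, j = diagIdx i
  · obtain ⟨i, rfl⟩ := hDj
    rw [Finset.sum_congr rfl fun jh _ => term_diag hm A i jh,
      Finset.sum_add_distrib]
    rw [Finset.sum_ite_eq' Finset.univ (diagIdx i)
      (fun _ => A (diagIdx i) - rowSum hm A i), if_pos (Finset.mem_univ _)]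
    rw [count_sum hm hsym i]
    ring
  · rw [Finset.sum_congr rfl fun jh _ => term_offdiag hm A hDj jh]
    have horb : Finset.univ.filter
        (fun jh : Idx m n => ∃ σ : Equiv.Perm (Fin m), j = jh ∘ σ) = orbit j := by
      ext jh
      simp only [Finset.mem_filter, Finset.mem_univ, true_and, mem_orbit]
      exact ⟨fun h => rel_symm h, fun h => rel_symm h⟩
    rw [← Finset.sum_filter, horb]
    have hcongr : ∀ jh ∈ orbit j,
        A jh / ((orbit jh).card : ℝ) = A j / ((orbit j).card : ℝ) := by
      intro jh hjh
      obtain ⟨σ, rfl⟩ := mem_orbit.1 hjh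
      rw [hsym σ j, orbit_eq_of_rel ⟨σ, rfl⟩]
    rw [Finset.sum_congr rfl hcongr, Finset.sum_const, nsmul_eq_mul,
      mul_div_cancel₀ _ (orbit_card_pos j).ne']

end Main

/-- `DD⁺_{m,n}` equals the convex conic hull of the generator tensors `𝒱^{c,ĵ}`. -/
theorem DDplus_eq_conicHull (m n : ℕ) (hm : 0 < m) (A : Idx m n → ℝ) :
    IsDDplus hm A ↔ ∃ lam : Bool × Idx m n → ℝ, (∀ q, 0 ≤ lam q) ∧
      ∀ j : Idx m n, A j = ∑ q : Bool × Idx m n, lam q * genV hm q.1 q.2 j := by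
  constructor
  · rintro ⟨hsym, hdd⟩
    exact ⟨lam0 hm A, lam0_nonneg hm hdd, forward_sum hm hsym⟩
  · rintro ⟨lam, hlam, hA⟩
    constructor
    · intro σ j
      rw [hA, hA]
      exact Finset.sum_congr rfl fun q _ => by rw [genV_symm]
    · intro i
      calc rowSum hm A i
          = ∑ j ∈ Finset.univ.filter
              (fun j : Idx m n => j ⟨0, hm⟩ = i ∧ j ≠ diagIdx i), |A j| := rfl
        _ ≤ ∑ j ∈ Finset.univ.filter
              (fun j : Idx m n => j ⟨0, hm⟩ = i ∧ j ≠ diagIdx i),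
              ∑ q : Bool × Idx m n, lam q * |genV hm q.1 q.2 j| := by
            refine Finset.sum_le_sum fun j _ => ?_
            rw [hA j]
            refine (Finset.abs_sum_le_sum_abs _ _).trans ?_
            refine Finset.sum_le_sum fun q _ => ?_
            rw [abs_mul, abs_of_nonneg (hlam q)]
        _ = ∑ q : Bool × Idx m n, lam q * ∑ j ∈ Finset.univ.filter
              (fun j : Idx m n => j ⟨0, hm⟩ = i ∧ j ≠ diagIdx i), |genV hm q.1 q.2 j| := by
            rw [Finset.sum_comm]
            exact Finset.sum_congr rfl fun q _ => (Finset.mul_sum _ _ _).symm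
        _ ≤ ∑ q : Bool × Idx m n, lam q * genV hm q.1 q.2 (diagIdx i) := by
            refine Finset.sum_le_sum fun q _ => ?_
            exact mul_le_mul_of_nonneg_left (keyV hm q.1 q.2 i) (hlam q)
        _ = A (diagIdx i) := (hA _).symm
end

section
/- Let $m,n \in \mathbb{N}$, let $(i_1,\dots,i_m)$ be a nondecreasing multi-index with at least two distinct entries, with tight pair $((j_1,\dots,j_l),(\alpha_1,\dots,\alpha_l))$ (distinct indices $j_1 < \dots < j_l$ and powers $\alpha_k \geq 1$ with $\sum_k \alpha_k = m$ such that $x_{i_1}\cdots x_{i_m} = x_{j_1}^{\alpha_1}\cdots x_{j_l}^{\alpha_l}$). Let $\mathcal{B} = (b_{p_1\dots p_m})$ be a symmetric tensor supported on the permutations of $(i_1,\dots,i_m)$ and the diagonal positions $(p,\dots,p)$ with $p \in \{i_1,\dots,i_m\}$. Then $\mathcal{B}$ is a generalized diagonally dominant tensor with nonnegative diagonal if and only if $b_{pp\dots p} \geq 0$ for all $p \in \{i_1,\dots,i_m\}$ and $\prod_{k=1}^l b_{j_k\dots j_k}^{\alpha_k} \geq c\,|b_{i_1\dots i_m}|^m$,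 where $c = \prod_{k=1}^l \binom{m-1}{\alpha - e_k}^{\alpha_k}$ and $\binom{m-1}{\alpha-e_k}$ is the multinomial coefficient $\frac{(m-1)!}{\alpha_1!\cdots(\alpha_k-1)!\cdots\alpha_l!}$. -/
open Finset

/-- The set of distinct values appearing in the multi-index `jh` (the tight index). -/
def suppIdx {m n : ℕ} (jh : Idx m n) : Finset (Fin n) := Finset.image jh Finset.univ

/-- The multiplicity of the value `p` in the multi-index `jh` (the tight power). -/
def multIdx {m n : ℕ} (jh : Idx m n) (p : Fin n) : ℕ :=
  (Finset.univ.filter fun k : Fin m => jh k = p).card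

/-- The constant `c = ∏_k (m-1 choose α - e_k)^{α_k}` associated with a multi-index. -/
def cCoef {m n : ℕ} (jh : Idx m n) : ℕ :=
  ∏ p ∈ suppIdx jh,
    (Nat.multinomial (suppIdx jh)
      (fun q => if q = p then multIdx jh q - 1 else multIdx jh q)) ^ (multIdx jh p)

namespace SG
variable {m n : ℕ}

def Orb (jh : Idx m n) : Finset (Idx m n) :=
  Finset.univ.filter (fun j => ∃ σ : Equiv.Perm (Fin m), j = jh ∘ σ)

lemma mem_Orb {jh j : Idx m n} : j ∈ Orb jh ↔ ∃ σ : Equiv.Perm (Fin m), j = jh ∘ σ := by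
  simp [Orb]

lemma multIdx_comp (jh : Idx m n) (σ : Equiv.Perm (Fin m)) (p : Fin n) :
    multIdx (jh ∘ σ) p = multIdx jh p := by
  unfold multIdx
  apply Finset.card_bij (fun k _ => σ k)
  · intro k hk; simp only [Finset.mem_filter, Finset.mem_univ, true_and, Function.comp] at hk ⊢
    exact hk
  · intro k _ k' _ h; exact σ.injective h
  · intro k hk
    refine ⟨σ.symm k, ?_, by simp⟩
    simp only [Finset.mem_filter, Finset.mem_univ, true_and, Function.comp] at hk ⊢
    simpa using hk

lemma sum_multIdx (jh : Idx m n) : ∑ p ∈ suppIdx jh, multIdx jh p = m := by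
  have := Finset.card_eq_sum_card_fiberwise
    (f := jh) (s := Finset.univ) (t := suppIdx jh)
    (fun x _ => Finset.mem_image_of_mem jh (Finset.mem_univ x))
  simpa [multIdx] using this.symm

lemma stab_card (jh : Idx m n) :
    (Finset.univ.filter (fun σ : Equiv.Perm (Fin m) => jh ∘ σ = jh)).card
      = ∏ p ∈ suppIdx jh, (multIdx jh p).factorial := by
  rw [← Fintype.card_subtype, DomMulAct.stabilizer_card' jh]
  refine Finset.prod_congr rfl fun p _ => ?_
  rw [Fintype.card_subtype]
  rfl

lemma orb_card_mul (jh : Idx m n) :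
    (Orb jh).card * ∏ p ∈ suppIdx jh, (multIdx jh p).factorial = m.factorial := by
  have h1 : Fintype.card (Equiv.Perm (Fin m)) =
      ∑ j ∈ Orb jh, (Finset.univ.filter
        (fun σ : Equiv.Perm (Fin m) => jh ∘ σ = j)).card := by
    rw [← Finset.card_univ]
    exact Finset.card_eq_sum_card_fiberwise (fun σ _ => mem_Orb.2 ⟨σ, rfl⟩)
  have h2 : ∀ j ∈ Orb jh, (Finset.univ.filter
      (fun σ : Equiv.Perm (Fin m) => jh ∘ σ = j)).card
        = ∏ p ∈ suppIdx jh, (multIdx jh p).factorial := by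
    intro j hj
    obtain ⟨τ, rfl⟩ := mem_Orb.1 hj
    rw [← stab_card jh]
    apply Finset.card_bij' (fun σ _ => σ * τ⁻¹) (fun σ _ => σ * τ)
    · intro σ hσ
      simp only [Finset.mem_filter, Finset.mem_univ, true_and] at hσ ⊢
      funext x
      have := congrFun hσ (τ⁻¹ x)
      simpa [Function.comp] using this
    · intro σ hσ
      simp only [Finset.mem_filter, Finset.mem_univ, true_and] at hσ ⊢
      funext x
      have := congrFun hσ (τ x)
      simpa [Function.comp] using this
    · intro σ _; group
    · intro σ _; group
  rw [Finset.sum_congr rfl h2, Finset.sum_const, smul_eq_mul] at h1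
  rw [← h1, Fintype.card_perm, Fintype.card_fin]


lemma slice_card (hm : 0 < m) (jh : Idx m n) (i : Fin n) (k : Fin m) :
    ((Orb jh).filter (fun j => j k = i)).card
      = ((Orb jh).filter (fun j => j ⟨0, hm⟩ = i)).card := by
  set z : Fin m := ⟨0, hm⟩
  have hOrb : ∀ j ∈ Orb jh, (j ∘ Equiv.swap z k : Idx m n) ∈ Orb jh := by
    intro j hj
    obtain ⟨σ, rfl⟩ := mem_Orb.1 hj
    exact mem_Orb.2 ⟨(Equiv.swap z k).trans σ, rfl⟩
  apply Finset.card_bij' (fun j _ => j ∘ Equiv.swap z k) (fun j _ => j ∘ Equiv.swap z k)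
  · intro j hj
    simp only [Finset.mem_filter] at hj ⊢
    refine ⟨hOrb j hj.1, ?_⟩
    show j (Equiv.swap z k z) = i
    rw [Equiv.swap_apply_left]; exact hj.2
  · intro j hj
    simp only [Finset.mem_filter] at hj ⊢
    refine ⟨hOrb j hj.1, ?_⟩
    show j (Equiv.swap z k k) = i
    rw [Equiv.swap_apply_right]; exact hj.2
  · intro j _; funext x; simp [Function.comp, Equiv.swap_apply_self]
  · intro j _; funext x; simp [Function.comp, Equiv.swap_apply_self]

lemma double_count (hm : 0 < m) (jh : Idx m n) (i : Fin n) :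
    m * ((Orb jh).filter (fun j => j ⟨0, hm⟩ = i)).card
      = (Orb jh).card * multIdx jh i := by
  have key : ∑ j ∈ Orb jh, ∑ k : Fin m, (if j k = i then 1 else 0)
           = ∑ k : Fin m, ∑ j ∈ Orb jh, (if j k = i then 1 else 0) := Finset.sum_comm
  have hL : ∑ j ∈ Orb jh, ∑ k : Fin m, (if j k = i then 1 else 0)
      = (Orb jh).card * multIdx jh i := by
    rw [Finset.sum_congr rfl (fun j hj => ?_), Finset.sum_const, smul_eq_mul]
    obtain ⟨σ, rfl⟩ := mem_Orb.1 hj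
    rw [← Finset.card_filter, ← multIdx, multIdx_comp]
  have hR : ∑ k : Fin m, ∑ j ∈ Orb jh, (if j k = i then 1 else 0)
      = m * ((Orb jh).filter (fun j => j ⟨0, hm⟩ = i)).card := by
    rw [Finset.sum_congr rfl (fun k _ => ?_), Finset.sum_const, smul_eq_mul,
      Finset.card_univ, Fintype.card_fin]
    rw [← Finset.card_filter, slice_card hm jh i k]
  rw [← hL, key, hR]

lemma multIdx_pos (jh : Idx m n) {i : Fin n} (hi : i ∈ suppIdx jh) :
    0 < multIdx jh i := by
  obtain ⟨k, -, hk⟩ := Finset.mem_image.1 hi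
  exact Finset.card_pos.2 ⟨k, by simp [hk]⟩

lemma N_eq (hm : 0 < m) (jh : Idx m n) {i : Fin n} (hi : i ∈ suppIdx jh) :
    ((Orb jh).filter (fun j => j ⟨0, hm⟩ = i)).card
      = Nat.multinomial (suppIdx jh)
          (fun q => if q = i then multIdx jh q - 1 else multIdx jh q) := by
  set β : Fin n → ℕ := fun q => if q = i then multIdx jh q - 1 else multIdx jh q with hβ
  have hαi : 0 < multIdx jh i := multIdx_pos jh hi
  have herase : ∀ p ∈ (suppIdx jh).erase i, β p = multIdx jh p := by
    intro p hp
    simp [hβ, Finset.ne_of_mem_erase hp]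
  have hsumα : multIdx jh i + ∑ p ∈ (suppIdx jh).erase i, multIdx jh p = m := by
    rw [Finset.add_sum_erase _ _ hi, sum_multIdx]
  have hsumβ : ∑ p ∈ suppIdx jh, β p = m - 1 := by
    rw [← Finset.add_sum_erase _ _ hi, Finset.sum_congr rfl herase]
    simp only [hβ, if_pos rfl]
    show multIdx jh i - 1 + ∑ p ∈ (suppIdx jh).erase i, multIdx jh p = m - 1
    omega
  have hprodβ : multIdx jh i * ∏ p ∈ suppIdx jh, (β p).factorial
      = ∏ p ∈ suppIdx jh, (multIdx jh p).factorial := by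
    rw [← Finset.mul_prod_erase _ _ hi, ← Finset.mul_prod_erase _ (fun p => (multIdx jh p).factorial) hi,
      Finset.prod_congr rfl (fun p hp => by rw [herase p hp]), ← mul_assoc]
    congr 1
    simp only [hβ, if_pos rfl]
    exact Nat.mul_factorial_pred hαi.ne'
  have hspec := Nat.multinomial_spec (suppIdx jh) β
  rw [hsumβ] at hspec
  have hkey : (m * ∏ p ∈ suppIdx jh, (β p).factorial)
      * ((Orb jh).filter (fun j => j ⟨0, hm⟩ = i)).card
      = (m * ∏ p ∈ suppIdx jh, (β p).factorial) * Nat.multinomial (suppIdx jh) β := by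
    calc (m * ∏ p ∈ suppIdx jh, (β p).factorial)
        * ((Orb jh).filter (fun j => j ⟨0, hm⟩ = i)).card
        = (m * ((Orb jh).filter (fun j => j ⟨0, hm⟩ = i)).card)
            * ∏ p ∈ suppIdx jh, (β p).factorial := by ring
      _ = ((Orb jh).card * multIdx jh i) * ∏ p ∈ suppIdx jh, (β p).factorial :=
          by rw [double_count hm jh i]
      _ = (Orb jh).card * ∏ p ∈ suppIdx jh, (multIdx jh p).factorial :=
          by rw [mul_assoc, hprodβ]
      _ = m.factorial := orb_card_mul jh
      _ = m * (m-1).factorial := (Nat.mul_factorial_pred hm.ne').symm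
      _ = m * ((∏ p ∈ suppIdx jh, (β p).factorial) * Nat.multinomial (suppIdx jh) β) :=
          by rw [hspec]
      _ = (m * ∏ p ∈ suppIdx jh, (β p).factorial) * Nat.multinomial (suppIdx jh) β := by ring
  exact Nat.eq_of_mul_eq_mul_left
    (Nat.mul_pos hm (Finset.prod_pos (fun p _ => Nat.factorial_pos _))) hkey


lemma jh_ne_diag (jh : Idx m n) (hnc : ¬ ∃ i : Fin n, jh = diagIdx i)
    (σ : Equiv.Perm (Fin m)) (i : Fin n) : jh ∘ σ ≠ diagIdx i := by
  intro h
  refine hnc ⟨i, funext fun k => ?_⟩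
  have := congrFun h (σ.symm k)
  simpa [diagIdx, Function.comp] using this

lemma N_zero (hm : 0 < m) (jh : Idx m n) {i : Fin n} (hi : i ∉ suppIdx jh) :
    ((Orb jh).filter (fun j => j ⟨0, hm⟩ = i)).card = 0 := by
  rw [Finset.card_eq_zero, Finset.filter_eq_empty_iff]
  intro j hj hji
  obtain ⟨σ, rfl⟩ := mem_Orb.1 hj
  exact hi (hji ▸ Finset.mem_image_of_mem jh (Finset.mem_univ (σ ⟨0, hm⟩)))

lemma prod_d_eq (jh : Idx m n) (d : Fin n → ℝ) :
    ∏ k : Fin m, d (jh k) = ∏ p ∈ suppIdx jh, d p ^ multIdx jh p := by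
  rw [← Finset.prod_fiberwise_of_maps_to
    (fun k _ => Finset.mem_image_of_mem jh (Finset.mem_univ k)) (fun k => d (jh k))]
  refine Finset.prod_congr rfl fun p _ => ?_
  rw [Finset.prod_congr rfl (fun k hk => ?_), Finset.prod_const]
  · rfl
  · rw [(Finset.mem_filter.1 hk).2]

lemma rowSum_scaled (hm : 0 < m) (jh : Idx m n)
    (hnc : ¬ ∃ i : Fin n, jh = diagIdx i) (B : Idx m n → ℝ) (hsym : IsSymmetric B)
    (hsupp : ∀ j : Idx m n, B j ≠ 0 →
      (∃ σ : Equiv.Perm (Fin m), j = jh ∘ σ) ∨ ∃ p ∈ suppIdx jh, j = diagIdx p)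
    (d : Fin n → ℝ) (hd : ∀ i, 0 < d i) (i : Fin n) :
    rowSum hm (fun j => B j * ∏ k : Fin m, d (j k)) i
      = (((Orb jh).filter (fun j => j ⟨0, hm⟩ = i)).card : ℝ) * |B jh|
          * ∏ p ∈ suppIdx jh, d p ^ multIdx jh p := by
  set z : Fin m := ⟨0, hm⟩
  set T := (Orb jh).filter (fun j => j z = i) with hT
  have hsub : T ⊆ Finset.univ.filter (fun j : Idx m n => j z = i ∧ j ≠ diagIdx i) := by
    intro j hj
    rw [hT, Finset.mem_filter] at hj
    obtain ⟨hjO, hji⟩ := hj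
    obtain ⟨σ, rfl⟩ := mem_Orb.1 hjO
    exact Finset.mem_filter.2 ⟨Finset.mem_univ _, hji, jh_ne_diag jh hnc σ i⟩
  have hvanish : ∀ j ∈ Finset.univ.filter (fun j : Idx m n => j z = i ∧ j ≠ diagIdx i),
      j ∉ T → |B j * ∏ k : Fin m, d (j k)| = 0 := by
    intro j hj hjT
    rw [Finset.mem_filter] at hj
    obtain ⟨-, hji, hjd⟩ := hj
    have hBj : B j = 0 := by
      by_contra hBj
      rcases hsupp j hBj with ⟨σ, rfl⟩ | ⟨p, hp, rfl⟩
      · exact hjT (Finset.mem_filter.2 ⟨mem_Orb.2 ⟨σ, rfl⟩, hji⟩)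
      · exact hjd (by rw [show p = i from hji])
    simp [hBj]
  rw [rowSum, ← Finset.sum_subset hsub hvanish]
  have hterm : ∀ j ∈ T, |B j * ∏ k : Fin m, d (j k)|
      = |B jh| * ∏ p ∈ suppIdx jh, d p ^ multIdx jh p := by
    intro j hj
    obtain ⟨σ, rfl⟩ := mem_Orb.1 (Finset.mem_filter.1 hj).1
    have h1 : B (jh ∘ σ) = B jh := hsym σ jh
    have h2 : ∏ k : Fin m, d ((jh ∘ σ) k) = ∏ p ∈ suppIdx jh, d p ^ multIdx jh p := by
      rw [show (fun k => d ((jh ∘ σ) k)) = fun k => d (jh (σ k)) from rfl]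
      rw [Equiv.prod_comp σ (fun k => d (jh k)), prod_d_eq]
    have hDpos : 0 < ∏ p ∈ suppIdx jh, d p ^ multIdx jh p :=
      Finset.prod_pos fun p _ => pow_pos (hd p) _
    rw [h1, h2, abs_mul, abs_of_pos hDpos]
  rw [Finset.sum_congr rfl hterm, Finset.sum_const, nsmul_eq_mul, mul_assoc]

lemma diag_scaled (hm : 0 < m) (B : Idx m n → ℝ) (d : Fin n → ℝ) (i : Fin n) :
    (fun j : Idx m n => B j * ∏ k : Fin m, d (j k)) (diagIdx i) = B (diagIdx i) * d i ^ m := by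
  simp [diagIdx, Finset.prod_const, Finset.card_univ]

end SG

/-- Characterization of sparse `GDD⁺` tensors: a symmetric tensor supported on the
permutations of a non-diagonal multi-index `jh` and on the diagonal positions with values
in `jh` is `GDD⁺` iff its relevant diagonal entries are nonnegative and
`∏_k b_{j_k…j_k}^{α_k} ≥ c |b_{jh}|^m`. -/
theorem sparse_GDDplus_iff (m n : ℕ) (hm : 0 < m) (jh : Idx m n)
    (hnc : ¬ ∃ i : Fin n, jh = diagIdx i) (B : Idx m n → ℝ) (hsym : IsSymmetric B)
    (hsupp : ∀ j : Idx m n, B j ≠ 0 →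
      (∃ σ : Equiv.Perm (Fin m), j = jh ∘ σ) ∨ ∃ p ∈ suppIdx jh, j = diagIdx p) :
    IsGDDplus hm B ↔
      ((∀ p ∈ suppIdx jh, 0 ≤ B (diagIdx p)) ∧
        (cCoef jh : ℝ) * |B jh| ^ m ≤ ∏ p ∈ suppIdx jh, B (diagIdx p) ^ multIdx jh p) := by
  classical
  constructor
  · rintro ⟨-, hdiag, d, hd, hDD⟩
    refine ⟨fun p _ => hdiag p, ?_⟩
    have hD : 0 < ∏ p ∈ suppIdx jh, d p ^ multIdx jh p :=
      Finset.prod_pos fun p _ => pow_pos (hd p) _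
    have key : ∀ i ∈ suppIdx jh,
        ((((SG.Orb jh).filter (fun j => j ⟨0, hm⟩ = i)).card : ℝ) * |B jh|
          * ∏ p ∈ suppIdx jh, d p ^ multIdx jh p) ≤ B (diagIdx i) * d i ^ m := by
      intro i _
      have h := hDD i
      rw [SG.rowSum_scaled hm jh hnc B hsym hsupp d hd i] at h
      rwa [SG.diag_scaled hm B d i,
        abs_of_nonneg (mul_nonneg (hdiag i) (pow_nonneg (hd i).le m))] at h
    have hprod := Finset.prod_le_prod (s := suppIdx jh)
      (f := fun i => ((((SG.Orb jh).filter (fun j => j ⟨0, hm⟩ = i)).card : ℝ) * |B jh|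
          * ∏ p ∈ suppIdx jh, d p ^ multIdx jh p) ^ multIdx jh i)
      (g := fun i => (B (diagIdx i) * d i ^ m) ^ multIdx jh i)
      (fun i _ => pow_nonneg (by positivity) _)
      (fun i hi => pow_le_pow_left₀ (by positivity) (key i hi) _)
    have hLHS : ∏ i ∈ suppIdx jh, ((((SG.Orb jh).filter (fun j => j ⟨0, hm⟩ = i)).card : ℝ)
          * |B jh| * ∏ p ∈ suppIdx jh, d p ^ multIdx jh p) ^ multIdx jh i
        = (cCoef jh : ℝ) * |B jh| ^ m * (∏ p ∈ suppIdx jh, d p ^ multIdx jh p) ^ m := by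
      rw [Finset.prod_congr rfl (fun i _ => by rw [mul_pow, mul_pow]),
        Finset.prod_mul_distrib, Finset.prod_mul_distrib,
        Finset.prod_pow_eq_pow_sum, Finset.prod_pow_eq_pow_sum, SG.sum_multIdx]
      congr 1
      congr 1
      rw [cCoef]
      push_cast
      exact Finset.prod_congr rfl fun i hi => by rw [SG.N_eq hm jh hi]
    have hRHS : ∏ i ∈ suppIdx jh, (B (diagIdx i) * d i ^ m) ^ multIdx jh i
        = (∏ i ∈ suppIdx jh, B (diagIdx i) ^ multIdx jh i)
            * (∏ p ∈ suppIdx jh, d p ^ multIdx jh p) ^ m := by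
      rw [Finset.prod_congr rfl (fun i _ => by
          rw [mul_pow, ← pow_mul, mul_comm m (multIdx jh i), pow_mul]),
        Finset.prod_mul_distrib, Finset.prod_pow]
    rw [hLHS, hRHS] at hprod
    exact le_of_mul_le_mul_right hprod (pow_pos hD m)
  · rintro ⟨hdiag, hineq⟩
    have hdiag' : ∀ i : Fin n, 0 ≤ B (diagIdx i) := by
      intro i
      by_cases hi : i ∈ suppIdx jh
      · exact hdiag i hi
      · have hB0 : B (diagIdx i) = 0 := by
          by_contra hB
          rcases hsupp _ hB with ⟨σ, hσ⟩ | ⟨p, hp, hpd⟩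
          · refine hnc ⟨i, funext fun k => ?_⟩
            have := congrFun hσ (σ.symm k)
            simpa [diagIdx, Function.comp] using this.symm
          · have hip : i = p := congrFun hpd ⟨0, hm⟩
            exact absurd (hip ▸ hp) hi
        rw [hB0]
    refine ⟨hsym, hdiag', ?_⟩
    by_cases hb : B jh = 0
    · refine ⟨fun _ => 1, fun _ => one_pos, fun i => ?_⟩
      rw [SG.rowSum_scaled hm jh hnc B hsym hsupp _ (fun _ => one_pos) i]
      simp [hb]
    · have habs : 0 < |B jh| := abs_pos.2 hb
      have hcpos : 0 < (cCoef jh : ℝ) := by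
        have : 0 < cCoef jh := Finset.prod_pos fun p _ => pow_pos (Nat.multinomial_pos _ _) _
        exact_mod_cast this
      have hProdPos : 0 < ∏ p ∈ suppIdx jh, B (diagIdx p) ^ multIdx jh p :=
        lt_of_lt_of_le (by positivity) hineq
      have hg : ∀ i ∈ suppIdx jh, 0 < B (diagIdx i) := by
        intro i hi
        rcases (hdiag i hi).lt_or_eq with h | h
        · exact h
        · exfalso
          have h0 : ∏ p ∈ suppIdx jh, B (diagIdx p) ^ multIdx jh p = 0 :=
            Finset.prod_eq_zero hi (by rw [← h, zero_pow (SG.multIdx_pos jh hi).ne'])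
          rw [h0] at hProdPos
          exact lt_irrefl 0 hProdPos
      have hNpos : ∀ i ∈ suppIdx jh,
          (0:ℝ) < (((SG.Orb jh).filter (fun j => j ⟨0, hm⟩ = i)).card : ℝ) := by
        intro i hi
        rw [SG.N_eq hm jh hi]
        exact_mod_cast Nat.multinomial_pos _ _
      set d : Fin n → ℝ := fun i => if hi : i ∈ suppIdx jh then
          ((((SG.Orb jh).filter (fun j => j ⟨0, hm⟩ = i)).card : ℝ) * |B jh|
            / B (diagIdx i)) ^ ((m:ℝ)⁻¹) else 1 with hdDef
      have hdpos : ∀ i, 0 < d i := by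
        intro i
        by_cases hi : i ∈ suppIdx jh
        · simp only [hdDef]
          rw [dif_pos hi]
          exact Real.rpow_pos_of_pos
            (div_pos (mul_pos (hNpos i hi) habs) (hg i hi)) _
        · simp only [hdDef]
          rw [dif_neg hi]; exact one_pos
      have hdm : ∀ i ∈ suppIdx jh, d i ^ m
          = (((SG.Orb jh).filter (fun j => j ⟨0, hm⟩ = i)).card : ℝ) * |B jh|
              / B (diagIdx i) := by
        intro i hi
        have hbase : (0:ℝ) ≤ (((SG.Orb jh).filter (fun j => j ⟨0, hm⟩ = i)).card : ℝ)
            * |B jh| / B (diagIdx i) :=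
          div_nonneg (by positivity) (hg i hi).le
        simp only [hdDef]
        rw [dif_pos hi]
        rw [← Real.rpow_natCast (_ ^ ((m:ℝ)⁻¹)) m, ← Real.rpow_mul hbase,
          inv_mul_cancel₀ (by exact_mod_cast hm.ne' : (m:ℝ) ≠ 0), Real.rpow_one]
      have hDpos : 0 < ∏ p ∈ suppIdx jh, d p ^ multIdx jh p :=
        Finset.prod_pos fun p _ => pow_pos (hdpos p) _
      have hDm : (∏ p ∈ suppIdx jh, d p ^ multIdx jh p) ^ m
          = (cCoef jh : ℝ) * |B jh| ^ m / ∏ p ∈ suppIdx jh, B (diagIdx p) ^ multIdx jh p := by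
        rw [← Finset.prod_pow]
        rw [Finset.prod_congr rfl (fun p hp => by
          rw [← pow_mul, mul_comm (multIdx jh p) m, pow_mul, hdm p hp, div_pow,
            mul_pow])]
        rw [Finset.prod_div_distrib, Finset.prod_mul_distrib,
          Finset.prod_pow_eq_pow_sum, SG.sum_multIdx]
        congr 2
        rw [cCoef]
        push_cast
        exact Finset.prod_congr rfl fun i hi => by rw [SG.N_eq hm jh hi]
      have hD1 : ∏ p ∈ suppIdx jh, d p ^ multIdx jh p ≤ 1 := by
        refine (pow_le_one_iff_of_nonneg hDpos.le hm.ne').1 ?_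
        rw [hDm]
        exact (div_le_one hProdPos).2 hineq
      refine ⟨d, hdpos, fun i => ?_⟩
      rw [SG.rowSum_scaled hm jh hnc B hsym hsupp d hdpos i, SG.diag_scaled hm B d i]
      by_cases hi : i ∈ suppIdx jh
      · have h1 : B (diagIdx i) * d i ^ m
            = (((SG.Orb jh).filter (fun j => j ⟨0, hm⟩ = i)).card : ℝ) * |B jh| := by
          rw [hdm i hi, mul_comm, div_mul_cancel₀ _ (hg i hi).ne']
        rw [abs_of_nonneg (mul_nonneg (hdiag' i) (pow_nonneg (hdpos i).le m)), h1]
        calc (((SG.Orb jh).filter (fun j => j ⟨0, hm⟩ = i)).card : ℝ) * |B jh|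
              * ∏ p ∈ suppIdx jh, d p ^ multIdx jh p
            ≤ (((SG.Orb jh).filter (fun j => j ⟨0, hm⟩ = i)).card : ℝ) * |B jh| * 1 :=
              mul_le_mul_of_nonneg_left hD1 (by positivity)
          _ = _ := mul_one _
      · rw [SG.N_zero hm jh hi]
        simp
        positivity
end

section
/- Let $n \in \mathbb{N}$ and let $\mathcal{A}$ be a symmetric $n \times n$ matrix ($m = 2$ case). Then $\mathcal{A}$ is a GDD$^+$ matrix (i.e., its diagonal is nonnegative and there exist $d_1,\dots,d_n > 0$ such that $|a_{ii}| d_i^2 \geq \sum_{j \neq i} |a_{ij}| d_i d_j$ for all $i$) if and only if there exist nonnegative reals $b^{(i,j)}_i, b^{(i,j)}_j$ for each pair $i < j$ such that $b^{(i,j)}_i b^{(i,j)}_j \geq a_{ij}^2$ for all $i < j$, and $a_{ii} \geq \sum_{j \neq i} b^{(\min(i,j),\max(i,j))}_i$ for all $i$. -/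
open Finset

lemma swap_erase_sum (n : ℕ) (g : Fin n → Fin n → ℝ) :
    ∑ i, ∑ j ∈ univ.erase i, g i j = ∑ j, ∑ i ∈ univ.erase j, g i j := by
  have h : ∀ i : Fin n, ∑ j ∈ univ.erase i, g i j = ∑ j, if j ≠ i then g i j else 0 := by
    intro i; rw [← Finset.filter_ne', Finset.sum_filter]
  have h2 : ∀ j : Fin n, ∑ i ∈ univ.erase j, g i j = ∑ i, if i ≠ j then g i j else 0 := by
    intro j; rw [← Finset.filter_ne', Finset.sum_filter]
  simp only [h, h2]
  rw [Finset.sum_comm]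
  exact Finset.sum_congr rfl fun j _ => Finset.sum_congr rfl fun i _ => if_congr ne_comm rfl rfl

lemma amgm_abs (a b c u v : ℝ) (hb : 0 ≤ b) (hc : 0 ≤ c) (h : a^2 ≤ b * c) :
    -((b * u^2 + c * v^2)/2) ≤ -|a| * u * v := by
  have h1 : |a| * u * v ≤ |a| * |u| * |v| := by
    have huv : u * v ≤ |u| * |v| := by rw [← abs_mul]; exact le_abs_self _
    nlinarith [abs_nonneg a]
  have hY : 0 ≤ b * u^2 + c * v^2 := by positivity
  have hX : 0 ≤ 2 * (|a| * |u| * |v|) := by positivity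
  have e : (2 * (|a| * |u| * |v|))^2 = 4 * (a^2 * (u^2 * v^2)) := by
    rw [mul_pow, mul_pow, mul_pow, sq_abs, sq_abs, sq_abs]; ring
  have h4 : 0 ≤ (b*c - a^2) * (u^2 * v^2) := mul_nonneg (by linarith) (by positivity)
  have key : (2 * (|a| * |u| * |v|))^2 ≤ (b * u^2 + c * v^2)^2 := by
    rw [e]; nlinarith [sq_nonneg (b*u^2 - c*v^2)]
  have hfin : 2 * (|a| * |u| * |v|) ≤ b * u^2 + c * v^2 := by
    nlinarith [key, mul_nonneg hX hY]
  linarith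


lemma cons_form (n : ℕ) (M : Matrix (Fin (n+1)) (Fin (n+1)) ℝ)
    (hsym : ∀ i j, M j i = M i j) (t : ℝ) (x : Fin n → ℝ) :
    ∑ i, ∑ j, M i j * (Fin.cons t x : Fin (n+1) → ℝ) i * (Fin.cons t x : Fin (n+1) → ℝ) j
      = M 0 0 * t * t + 2 * (t * ∑ i, M 0 i.succ * x i)
        + ∑ i, ∑ j, M i.succ j.succ * x i * x j := by
  simp only [Fin.sum_univ_succ, Fin.cons_zero, Fin.cons_succ]
  rw [Finset.sum_add_distrib]
  have h1 : ∑ j, M 0 j.succ * t * x j = t * ∑ i, M 0 i.succ * x i := by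
    rw [Finset.mul_sum]; exact Finset.sum_congr rfl fun i _ => by ring
  have h2 : ∑ i, M i.succ 0 * x i * t = t * ∑ i, M 0 i.succ * x i := by
    rw [Finset.mul_sum]; exact Finset.sum_congr rfl fun i _ => by rw [hsym]; ring
  rw [h1, h2]; ring

lemma psd_Z_scaling : ∀ (n : ℕ) (M : Matrix (Fin n) (Fin n) ℝ),
    (∀ i j, M j i = M i j) →
    (∀ i j, i ≠ j → M i j ≤ 0) →
    (∀ x : Fin n → ℝ, 0 ≤ ∑ i, ∑ j, M i j * x i * x j) →
    ∃ d : Fin n → ℝ, (∀ i, 0 < d i) ∧ ∀ i, 0 ≤ ∑ j, M i j * d j := by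
  intro n
  induction n with
  | zero => exact fun M _ _ _ => ⟨fun _ => 1, fun i => i.elim0, fun i => i.elim0⟩
  | succ n ih =>
    intro M hsym hZ hpsd
    set a : ℝ := M 0 0 with ha_def
    set b : Fin n → ℝ := fun i => M 0 i.succ with hb_def
    set N : Matrix (Fin n) (Fin n) ℝ := fun i j => M i.succ j.succ with hN_def
    have hform : ∀ (t : ℝ) (x : Fin n → ℝ),
        0 ≤ a * t * t + 2 * (t * ∑ i, b i * x i) + ∑ i, ∑ j, N i j * x i * x j := by
      intro t x
      have := hpsd (Fin.cons t x)
      rwa [cons_form n M hsym t x] at this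
    have hsymN : ∀ i j, N j i = N i j := fun i j => hsym i.succ j.succ
    have ha : 0 ≤ a := by
      have := hform 1 0
      simpa using this
    rcases ha.eq_or_lt with ha0 | hapos
    · -- a = 0 case : b = 0
      have hb0 : ∀ i, b i = 0 := by
        intro i
        by_contra hbi
        have h1 := hform (-(N i i + 1)/(2 * b i)) (Pi.single i 1)
        have hsum : ∑ k, b k * (Pi.single i 1 : Fin n → ℝ) k = b i := by
          rw [Finset.sum_eq_single i]
          · simp
          · intro k _ hk; simp [Pi.single_eq_of_ne hk]
          · simp
        have hsum2 : ∑ k, ∑ j, N k j * (Pi.single i 1 : Fin n → ℝ) k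
            * (Pi.single i 1 : Fin n → ℝ) j = N i i := by
          rw [Finset.sum_eq_single i]
          · rw [Finset.sum_eq_single i] <;> simp +contextual [Pi.single_eq_of_ne]
          · intro k _ hk
            apply Finset.sum_eq_zero
            intro j _
            simp [Pi.single_eq_of_ne hk]
          · simp
        rw [hsum, hsum2, ← ha0] at h1
        have : (-(N i i + 1)/(2 * b i)) * b i = -(N i i + 1) / 2 := by
          field_simp
        nlinarith [h1]
      obtain ⟨d', hd'pos, hd'⟩ := ih N hsymN
        (fun i j hij => hZ i.succ j.succ (fun h => hij (Fin.succ_injective n h)))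
        (fun x => by have := hform 0 x; simpa using this)
      refine ⟨Fin.cons 1 d', ?_, ?_⟩
      · intro i
        refine Fin.cases ?_ ?_ i
        · simp
        · intro k; simp [hd'pos k]
      · intro i
        refine Fin.cases ?_ ?_ i
        · rw [Fin.sum_univ_succ]
          simp only [Fin.cons_zero, Fin.cons_succ]
          have : ∀ j : Fin n, M 0 j.succ * d' j = 0 := fun j => by
            rw [show M 0 j.succ = b j from rfl, hb0 j, zero_mul]
          rw [Finset.sum_congr rfl (fun j _ => this j), Finset.sum_const_zero, ← ha_def, ← ha0]
          simp
        · intro k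
          rw [Fin.sum_univ_succ]
          simp only [Fin.cons_zero, Fin.cons_succ]
          have h1 : M k.succ 0 = 0 := by rw [hsym]; exact hb0 k
          rw [h1]
          simpa using hd' k
    · -- a > 0 case
      set S : Matrix (Fin n) (Fin n) ℝ := fun i j => N i j - b i * b j / a with hS_def
      have hbneg : ∀ i, b i ≤ 0 := fun i => hZ 0 i.succ (Fin.succ_ne_zero i).symm
      have hsymS : ∀ i j, S j i = S i j := by
        intro i j; simp only [hS_def]; rw [hsymN]; ring
      have hZS : ∀ i j, i ≠ j → S i j ≤ 0 := by
        intro i j hij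
        have h1 : N i j ≤ 0 := hZ i.succ j.succ (fun h => hij (Fin.succ_injective n h))
        have h2 : 0 ≤ b i * b j := by nlinarith [hbneg i, hbneg j]
        have : 0 ≤ b i * b j / a := div_nonneg h2 ha
        simp only [hS_def]; linarith
      have hpsdS : ∀ x : Fin n → ℝ, 0 ≤ ∑ i, ∑ j, S i j * x i * x j := by
        intro x
        set s := ∑ i, b i * x i with hs_def
        have h1 := hform (-s/a) x
        have e1 : ∑ i, ∑ j, S i j * x i * x j
            = ∑ i, ∑ j, N i j * x i * x j - s * s / a := by
          have : ∀ i, ∑ j, S i j * x i * x j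
              = ∑ j, N i j * x i * x j - (b i * x i) * s / a := by
            intro i
            rw [hs_def, Finset.mul_sum, Finset.sum_div, ← Finset.sum_sub_distrib]
            refine Finset.sum_congr rfl fun j _ => ?_
            simp only [hS_def]; ring
          rw [Finset.sum_congr rfl (fun i _ => this i), Finset.sum_sub_distrib]
          congr 1
          rw [hs_def, Finset.mul_sum, Finset.sum_div]
          refine Finset.sum_congr rfl fun i _ => by ring
        rw [e1]
        have e2 : a * (-s/a) * (-s/a) + 2 * (-s/a * s) = - (s * s / a) := by
          field_simp; ring
        nlinarith [h1]
      obtain ⟨d', hd'pos, hd'⟩ := ih S hsymS hZS hpsdS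
      set s := ∑ i, b i * d' i with hs_def
      have hsle : s ≤ 0 := by
        apply Finset.sum_nonpos
        intro i _
        exact mul_nonpos_of_nonpos_of_nonneg (hbneg i) (hd'pos i).le
      have hrow : ∀ i, b i * s / a ≤ ∑ j, N i j * d' j := by
        intro i
        have := hd' i
        have e : ∑ j, S i j * d' j = ∑ j, N i j * d' j - b i * s / a := by
          rw [hs_def, Finset.mul_sum, Finset.sum_div, ← Finset.sum_sub_distrib]
          refine Finset.sum_congr rfl fun j _ => ?_
          simp only [hS_def]; ring
        rw [e] at this; linarith
      rcases hsle.lt_or_eq with hslt | hs0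
      · refine ⟨Fin.cons (-s/a) d', ?_, ?_⟩
        · intro i
          refine Fin.cases ?_ ?_ i
          · simp only [Fin.cons_zero]
            exact div_pos (neg_pos.mpr hslt) hapos
          · intro k; simp [hd'pos k]
        · intro i
          refine Fin.cases ?_ ?_ i
          · rw [Fin.sum_univ_succ]
            simp only [Fin.cons_zero, Fin.cons_succ]
            have : M 0 0 * (-s/a) = -s := by
              rw [← ha_def]; field_simp
            rw [this]
            have : ∑ j, M 0 j.succ * d' j = s := by
              rw [hs_def]
            rw [this]; linarith
          · intro k
            rw [Fin.sum_univ_succ]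
            simp only [Fin.cons_zero, Fin.cons_succ]
            have h1 : M k.succ 0 = b k := hsym 0 k.succ
            have h2 : ∑ j, M k.succ j.succ * d' j = ∑ j, N k j * d' j := rfl
            rw [h1, h2]
            have := hrow k
            have e : b k * (-s/a) = -(b k * s / a) := by ring
            rw [e]; linarith
      · -- s = 0 : every b i = 0
        have hb0 : ∀ i, b i = 0 := by
          intro i
          have hall := (Finset.sum_eq_zero_iff_of_nonpos
            (fun j (_ : j ∈ Finset.univ) =>
              mul_nonpos_of_nonpos_of_nonneg (hbneg j) (hd'pos j).le)).mp (hs_def.symm.trans hs0)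
          have := hall i (Finset.mem_univ i)
          rcases mul_eq_zero.mp this with h | h
          · exact h
          · exact absurd h (hd'pos i).ne'
        refine ⟨Fin.cons 1 d', ?_, ?_⟩
        · intro i
          refine Fin.cases ?_ ?_ i
          · simp
          · intro k; simp [hd'pos k]
        · intro i
          refine Fin.cases ?_ ?_ i
          · rw [Fin.sum_univ_succ]
            simp only [Fin.cons_zero, Fin.cons_succ]
            have : ∀ j : Fin n, M 0 j.succ * d' j = 0 := fun j => by
              rw [show M 0 j.succ = b j from rfl, hb0 j, zero_mul]
            rw [Finset.sum_congr rfl (fun j _ => this j), Finset.sum_const_zero, ← ha_def]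
            simpa using ha
          · intro k
            rw [Fin.sum_univ_succ]
            simp only [Fin.cons_zero, Fin.cons_succ]
            have h1 : M k.succ 0 = 0 := by rw [hsym]; exact hb0 k
            rw [h1]
            have := hrow k
            rw [hb0 k] at this
            simp only [zero_mul, zero_div] at this
            simpa using this

/-- A symmetric matrix `A` is `GDD⁺` (nonnegative diagonal and scaled diagonally dominant
for some positive diagonal scaling) iff there exist nonnegative reals `B i j = b^{(i,j)}_i`
with `B i j * B j i ≥ (A i j)²` for all `i < j` and `A i i ≥ ∑_{j ≠ i} B i j` for all `i`. -/
theorem matrix_GDDplus_iff (n : ℕ) (A : Matrix (Fin n) (Fin n) ℝ) (hsym : A.IsSymm) :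
    ((∀ i, 0 ≤ A i i) ∧ ∃ d : Fin n → ℝ, (∀ i, 0 < d i) ∧
      ∀ i, ∑ j ∈ Finset.univ.erase i, |A i j| * d i * d j ≤ |A i i| * d i ^ 2) ↔
    ∃ B : Fin n → Fin n → ℝ,
      (∀ i j, i ≠ j → 0 ≤ B i j) ∧
      (∀ i j, i < j → (A i j) ^ 2 ≤ B i j * B j i) ∧
      (∀ i, ∑ j ∈ Finset.univ.erase i, B i j ≤ A i i) := by
  have hAsym : ∀ i j, A j i = A i j := fun i j => (hsym.apply j i).symm
  constructor
  · rintro ⟨hA0, d, hdpos, hd⟩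
    refine ⟨fun i j => if i = j then 0 else |A i j| * d j / d i, ?_, ?_, ?_⟩
    · intro i j hij
      simp only [if_neg hij]
      exact div_nonneg (mul_nonneg (abs_nonneg _) (hdpos j).le) (hdpos i).le
    · intro i j hij
      have hne : i ≠ j := hij.ne
      simp only [if_neg hne, if_neg hne.symm]
      have hdi := (hdpos i).ne'
      have hdj := (hdpos j).ne'
      rw [hAsym i j]
      rw [div_mul_div_comm]
      rw [show |A i j| * d j * (|A i j| * d i) = (|A i j|)^2 * (d i * d j) by ring]
      rw [show d i * (d j) = d i * d j from rfl]
      rw [sq_abs]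
      rw [mul_div_assoc]
      rw [mul_comm (d i) (d j), div_self (by positivity : d j * d i ≠ 0)]
      · ring_nf
        exact le_refl _
    · intro i
      have h := hd i
      have hdi := hdpos i
      have e : ∑ j ∈ univ.erase i, (if i = j then 0 else |A i j| * d j / d i)
          = (∑ j ∈ univ.erase i, |A i j| * d i * d j) / d i ^ 2 := by
        rw [Finset.sum_div]
        refine Finset.sum_congr rfl fun j hj => ?_
        have hji : j ≠ i := Finset.ne_of_mem_erase hj
        rw [if_neg (Ne.symm hji)]
        field_simp
      rw [e]
      rw [div_le_iff₀ (by positivity : (0:ℝ) < d i ^ 2)]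
      calc ∑ j ∈ univ.erase i, |A i j| * d i * d j ≤ |A i i| * d i ^ 2 := h
        _ = A i i * d i ^ 2 := by rw [abs_of_nonneg (hA0 i)]
  · rintro ⟨B, hB0, hBsq, hBsum⟩
    have hA0 : ∀ i, 0 ≤ A i i := by
      intro i
      refine le_trans ?_ (hBsum i)
      exact Finset.sum_nonneg fun j hj => hB0 i j (Finset.ne_of_mem_erase hj).symm
    have hBsq' : ∀ i j, i ≠ j → (A i j)^2 ≤ B i j * B j i := by
      intro i j hij
      rcases lt_or_gt_of_ne hij with h | h
      · exact hBsq i j h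
      · have := hBsq j i h
        rw [← hAsym i j, mul_comm]
        exact this
    set M : Matrix (Fin n) (Fin n) ℝ :=
      fun i j => if i = j then A i i else -|A i j| with hM_def
    have hsymM : ∀ i j, M j i = M i j := by
      intro i j
      simp only [hM_def]
      rcases eq_or_ne i j with h | h
      · rw [h]
      · rw [if_neg h, if_neg (Ne.symm h), hAsym i j]
    have hZM : ∀ i j, i ≠ j → M i j ≤ 0 := by
      intro i j hij
      simp only [hM_def, if_neg hij]
      simp [abs_nonneg]
    have hpsd : ∀ x : Fin n → ℝ, 0 ≤ ∑ i, ∑ j, M i j * x i * x j := by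
      intro x
      have split : ∀ i, ∑ j, M i j * x i * x j
          = A i i * x i ^ 2 + ∑ j ∈ univ.erase i, M i j * x i * x j := by
        intro i
        rw [← Finset.sum_erase_add _ _ (Finset.mem_univ i)]
        simp only [hM_def, if_pos rfl]
        ring
      rw [Finset.sum_congr rfl (fun i _ => split i), Finset.sum_add_distrib]
      have hbound : ∀ i, ∀ j ∈ univ.erase i,
          -((B i j * x i ^ 2 + B j i * x j ^ 2)/2) ≤ M i j * x i * x j := by
        intro i j hj
        have hji : j ≠ i := Finset.ne_of_mem_erase hj
        have hij : i ≠ j := hji.symm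
        simp only [hM_def, if_neg hij]
        exact amgm_abs (A i j) (B i j) (B j i) (x i) (x j)
          (hB0 i j hij) (hB0 j i hji) (hBsq' i j hij)
      have h1 : -(∑ i, ∑ j ∈ univ.erase i, ((B i j * x i ^ 2 + B j i * x j ^ 2)/2))
          ≤ ∑ i, ∑ j ∈ univ.erase i, M i j * x i * x j := by
        rw [← Finset.sum_neg_distrib]
        refine Finset.sum_le_sum fun i _ => ?_
        rw [← Finset.sum_neg_distrib]
        exact Finset.sum_le_sum (hbound i)
      have h2 : ∑ i, ∑ j ∈ univ.erase i, ((B i j * x i ^ 2 + B j i * x j ^ 2)/2)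
          = ∑ i, ∑ j ∈ univ.erase i, B i j * x i ^ 2 := by
        have e1 : ∑ i, ∑ j ∈ univ.erase i, ((B i j * x i ^ 2 + B j i * x j ^ 2)/2)
            = (∑ i, ∑ j ∈ univ.erase i, B i j * x i ^ 2) / 2
              + (∑ i, ∑ j ∈ univ.erase i, B j i * x j ^ 2) / 2 := by
          rw [Finset.sum_div, Finset.sum_div, ← Finset.sum_add_distrib]
          refine Finset.sum_congr rfl fun i _ => ?_
          rw [Finset.sum_div, Finset.sum_div, ← Finset.sum_add_distrib]
          exact Finset.sum_congr rfl fun j _ => by ring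
        rw [e1, swap_erase_sum n (fun i j => B j i * x j ^ 2)]
        ring
      have h3 : ∑ i, ∑ j ∈ univ.erase i, B i j * x i ^ 2 ≤ ∑ i, A i i * x i ^ 2 := by
        refine Finset.sum_le_sum fun i _ => ?_
        rw [← Finset.sum_mul]
        exact mul_le_mul_of_nonneg_right (hBsum i) (sq_nonneg _)
      rw [h2] at h1
      linarith
    obtain ⟨d, hdpos, hd⟩ := psd_Z_scaling n M hsymM hZM hpsd
    refine ⟨hA0, d, hdpos, ?_⟩
    intro i
    have h := hd i
    have e : ∑ j, M i j * d j
        = A i i * d i - ∑ j ∈ univ.erase i, |A i j| * d j := by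
      rw [← Finset.sum_erase_add _ _ (Finset.mem_univ i)]
      simp only [hM_def, if_pos rfl]
      have : ∑ j ∈ univ.erase i, (if i = j then A i i else -|A i j|) * d j
          = -∑ j ∈ univ.erase i, |A i j| * d j := by
        rw [← Finset.sum_neg_distrib]
        refine Finset.sum_congr rfl fun j hj => ?_
        rw [if_neg (Finset.ne_of_mem_erase hj).symm]
        ring
      rw [this]; ring
    rw [e] at h
    have h' : ∑ j ∈ univ.erase i, |A i j| * d j ≤ A i i * d i := by linarith
    have e2 : ∑ j ∈ univ.erase i, |A i j| * d i * d j
        = d i * ∑ j ∈ univ.erase i, |A i j| * d j := by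
      rw [Finset.mul_sum]
      exact Finset.sum_congr rfl fun j _ => by ring
    rw [e2, abs_of_nonneg (hA0 i)]
    calc d i * ∑ j ∈ univ.erase i, |A i j| * d j ≤ d i * (A i i * d i) :=
          mul_le_mul_of_nonneg_left h' (hdpos i).le
      _ = A i i * d i ^ 2 := by ring
end

section
/- For $n \in \mathbb{N}$, a homogeneous quadratic polynomial $p$ in $n$ variables is a DDTH polynomial (degree-2 diagonally dominant tensor homogeneous polynomial) if and only if it can be written as $p(x) = \sum_i \gamma_i x_i^2 + \sum_{i \neq j} \beta^+_{ij} (x_i + x_j)^2 + \sum_{i \neq j} \beta^-_{ij}(x_i - x_j)^2$ for some nonnegative scalars $\gamma_i, \beta^+_{ij}, \beta^-_{ij}$; that is, $DDTH_{2,n} = DSOS_{2,n} \cap \mathbb{H}_2$. -/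
open Finset

open MvPolynomial

/-- The generator polynomial `f^{±}_{i₁…i_m}(x) = ∑_k (m-1 choose α - e_k) x_{j_k}^m
± (m choose α) x_{i₁} ⋯ x_{i_m}` (`c = false` gives `+`, `c = true` gives `-`). -/
noncomputable def fGen (m n : ℕ) (c : Bool) (jh : Idx m n) : MvPolynomial (Fin n) ℝ :=
  (∑ p ∈ suppIdx jh,
    ((Nat.multinomial (suppIdx jh)
        (fun q => if q = p then multIdx jh q - 1 else multIdx jh q) : ℕ) : ℝ) •
      (X p ^ m : MvPolynomial (Fin n) ℝ)) +
  ((if c then (-1 : ℝ) else 1) * ((Nat.multinomial (suppIdx jh) (multIdx jh) : ℕ) : ℝ)) •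
    ∏ k : Fin m, (X (jh k) : MvPolynomial (Fin n) ℝ)

open scoped Classical in
/-- `p` is a diagonally dominant tensor homogeneous (DDTH) polynomial of degree `m`:
a nonnegative combination of the `x_i^m` and the generator polynomials `f^{±}_{i⃗}` over
nondecreasing non-constant multi-indices `i⃗`. -/
def IsDDTH (m n : ℕ) (p : MvPolynomial (Fin n) ℝ) : Prop :=
  ∃ (γ : Fin n → ℝ) (bp bm : Idx m n → ℝ),
    (∀ i, 0 ≤ γ i) ∧ (∀ jh, 0 ≤ bp jh) ∧ (∀ jh, 0 ≤ bm jh) ∧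
    p = (∑ i : Fin n, γ i • (X i ^ m : MvPolynomial (Fin n) ℝ)) +
      ∑ jh : Idx m n,
        (if Monotone jh ∧ ¬ (∃ q : Fin n, jh = diagIdx q) then
          bp jh • fGen m n false jh + bm jh • fGen m n true jh else 0)

/-- `p` is DSOS: a nonnegative combination of squares of monomials and of squares of sums
and differences of pairs of monomials. -/
def IsDSOS (n : ℕ) (p : MvPolynomial (Fin n) ℝ) : Prop :=
  ∃ (k : ℕ) (mo : Fin k → (Fin n →₀ ℕ)) (γ : Fin k → ℝ) (bp bm : Fin k → Fin k → ℝ),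
    (∀ i, 0 ≤ γ i) ∧ (∀ i j, 0 ≤ bp i j) ∧ (∀ i j, 0 ≤ bm i j) ∧
    p = (∑ i : Fin k, γ i • (monomial (mo i) (1 : ℝ)) ^ 2) +
      (∑ i : Fin k, ∑ j : Fin k,
        bp i j • ((monomial (mo i) (1 : ℝ)) + monomial (mo j) (1 : ℝ)) ^ 2) +
      (∑ i : Fin k, ∑ j : Fin k,
        bm i j • ((monomial (mo i) (1 : ℝ)) - monomial (mo j) (1 : ℝ)) ^ 2)


/-! ### Auxiliary machinery -/

section Aux
open MvPolynomial

lemma deg_add {n : ℕ} (u v : Fin n →₀ ℕ) : (u+v).degree = u.degree + v.degree := by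
  simp [Finsupp.degree_eq_weight_one]

lemma deg_single {n : ℕ} (a : Fin n) (k : ℕ) : (Finsupp.single a k).degree = k := by
  simp [Finsupp.degree_eq_weight_one, Finsupp.weight_apply, Finsupp.sum_single_index]

lemma deg_one {n : ℕ} (u : Fin n →₀ ℕ) (h : u.degree = 1) : ∃ a, u = Finsupp.single a 1 := by
  have hne : u ≠ 0 := by rintro rfl; simp [map_zero] at h
  obtain ⟨a, ha⟩ := Finsupp.ne_iff.mp hne
  simp only [Finsupp.coe_zero, Pi.zero_apply] at ha
  refine ⟨a, ?_⟩
  have hmem : a ∈ u.support := Finsupp.mem_support_iff.mpr ha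
  have h1 : u a ≤ u.degree := Finset.single_le_sum (fun i _ => Nat.zero_le _) hmem
  ext b
  rcases eq_or_ne b a with rfl | hba
  · simp only [Finsupp.single_eq_same]; omega
  · simp only [Finsupp.single_eq_of_ne' (Ne.symm hba)]
    by_contra hb
    have hbmem : b ∈ u.support := Finsupp.mem_support_iff.mpr hb
    have h2 : u a + u b ≤ u.degree := by
      have := Finset.add_sum_erase u.support u hmem
      have hb2 : u b ≤ ∑ i ∈ u.support.erase a, u i :=
        Finset.single_le_sum (fun i _ => Nat.zero_le _)
          (Finset.mem_erase.mpr ⟨hba, hbmem⟩)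
      rw [Finsupp.degree_apply]
      omega
    omega

/-- The canonical form: `p = ∑ γ_a x_a² + ∑_{a,b} (B_{ab}(x_a+x_b)² + C_{ab}(x_a-x_b)²)`. -/
def IsCanon (n : ℕ) (p : MvPolynomial (Fin n) ℝ) : Prop :=
  ∃ (γ : Fin n → ℝ) (B C : Fin n → Fin n → ℝ),
    (∀ a, 0 ≤ γ a) ∧ (∀ a b, 0 ≤ B a b) ∧ (∀ a b, 0 ≤ C a b) ∧
    p = (∑ a : Fin n, γ a • (X a ^ 2 : MvPolynomial (Fin n) ℝ)) +
      ∑ a : Fin n, ∑ b : Fin n,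
        (B a b • ((X a : MvPolynomial (Fin n) ℝ) + X b) ^ 2 +
         C a b • ((X a : MvPolynomial (Fin n) ℝ) - X b) ^ 2)

lemma isCanon_zero (n : ℕ) : IsCanon n 0 :=
  ⟨0, 0, 0, fun _ => le_refl _, fun _ _ => le_refl _, fun _ _ => le_refl _, by simp⟩

lemma isCanon_add {n : ℕ} {p q : MvPolynomial (Fin n) ℝ} (hp : IsCanon n p)
    (hq : IsCanon n q) : IsCanon n (p + q) := by
  obtain ⟨γ₁, B₁, C₁, hγ₁, hB₁, hC₁, rfl⟩ := hp
  obtain ⟨γ₂, B₂, C₂, hγ₂, hB₂, hC₂, rfl⟩ := hq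
  refine ⟨γ₁ + γ₂, B₁ + B₂, C₁ + C₂, fun a => add_nonneg (hγ₁ a) (hγ₂ a),
    fun a b => add_nonneg (hB₁ a b) (hB₂ a b), fun a b => add_nonneg (hC₁ a b) (hC₂ a b), ?_⟩
  simp only [Pi.add_apply, add_smul, Finset.sum_add_distrib]
  ring

lemma isCanon_sum {n : ℕ} {ι : Type*} (s : Finset ι) (f : ι → MvPolynomial (Fin n) ℝ)
    (h : ∀ i ∈ s, IsCanon n (f i)) : IsCanon n (∑ i ∈ s, f i) :=
  Finset.sum_induction f _ (fun _ _ => isCanon_add) (isCanon_zero n) h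

lemma isCanon_smul_sq {n : ℕ} (a : Fin n) {c : ℝ} (hc : 0 ≤ c) :
    IsCanon n (c • (X a ^ 2 : MvPolynomial (Fin n) ℝ)) := by
  classical
  refine ⟨fun t => if t = a then c else 0, 0, 0, fun t => by positivity,
    fun _ _ => le_refl _, fun _ _ => le_refl _, ?_⟩
  simp [Finset.sum_ite_eq', ite_smul]

lemma isCanon_smul_plus {n : ℕ} (a b : Fin n) {c : ℝ} (hc : 0 ≤ c) :
    IsCanon n (c • (((X a : MvPolynomial (Fin n) ℝ) + X b) ^ 2)) := by
  classical
  refine ⟨0, fun s t => if s = a ∧ t = b then c else 0, 0, fun t => le_refl _,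
    fun s t => by positivity, fun _ _ => le_refl _, ?_⟩
  simp [ite_and, Finset.sum_ite_eq', ite_smul]

lemma isCanon_smul_minus {n : ℕ} (a b : Fin n) {c : ℝ} (hc : 0 ≤ c) :
    IsCanon n (c • (((X a : MvPolynomial (Fin n) ℝ) - X b) ^ 2)) := by
  classical
  refine ⟨0, 0, fun s t => if s = a ∧ t = b then c else 0, fun t => le_refl _,
    fun _ _ => le_refl _, fun s t => by positivity, ?_⟩
  simp [ite_and, Finset.sum_ite_eq', ite_smul]

lemma homComp_monomial {n : ℕ} (u : Fin n →₀ ℕ) (r : ℝ) :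
    homogeneousComponent 2 (monomial u r) =
      if u.degree = 2 then monomial u r else 0 := by
  rw [homogeneousComponent_of_mem ((mem_homogeneousSubmodule _ _).mpr
       (isHomogeneous_monomial r rfl))]
  simp [eq_comm]

lemma sq_expand {n : ℕ} (u v : Fin n →₀ ℕ) (s : ℝ) (hs : s * s = 1) :
    ((monomial u (1:ℝ) : MvPolynomial (Fin n) ℝ) + s • monomial v 1)^2
      = monomial (u+u) 1 + (2*s) • monomial (u+v) 1 + monomial (v+v) 1 := by
  simp only [smul_eq_C_mul, sq]
  have h1 : (C s : MvPolynomial (Fin n) ℝ) * C s = 1 := by rw [← map_mul, hs, map_one]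
  have h3 : (monomial v (1:ℝ) : MvPolynomial (Fin n) ℝ) * monomial v 1 = monomial (v+v) 1 := by
    rw [monomial_mul, mul_one]
  have h4 : (monomial u (1:ℝ) : MvPolynomial (Fin n) ℝ) * monomial u 1 = monomial (u+u) 1 := by
    rw [monomial_mul, mul_one]
  have h5 : (monomial u (1:ℝ) : MvPolynomial (Fin n) ℝ) * monomial v 1 = monomial (u+v) 1 := by
    rw [monomial_mul, mul_one]
  have h2 : (C (2*s) : MvPolynomial (Fin n) ℝ) = 2 * C s := by rw [map_mul, map_ofNat]
  linear_combination h4 + (2 * (C s : MvPolynomial (Fin n) ℝ)) * h5 +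
    ((C s : MvPolynomial (Fin n) ℝ) * C s) * h3 + (monomial (v+v) (1:ℝ)) * h1 +
    (- monomial (u+v) (1:ℝ)) * h2

lemma mono_single_two {n : ℕ} (a : Fin n) :
    (monomial (Finsupp.single a 1 + Finsupp.single a 1) (1:ℝ) : MvPolynomial (Fin n) ℝ)
      = X a ^ 2 := by
  rw [← Finsupp.single_add, X_pow_eq_monomial]

lemma mono_single_mul {n : ℕ} (a b : Fin n) :
    (monomial (Finsupp.single a 1 + Finsupp.single b 1) (1:ℝ) : MvPolynomial (Fin n) ℝ)
      = X a * X b := by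
  rw [show (X a : MvPolynomial (Fin n) ℝ) = monomial (Finsupp.single a 1) 1 by
        rw [← X_pow_eq_monomial, pow_one],
      show (X b : MvPolynomial (Fin n) ℝ) = monomial (Finsupp.single b 1) 1 by
        rw [← X_pow_eq_monomial, pow_one], monomial_mul, mul_one]

lemma canon_term {n : ℕ} (u v : Fin n →₀ ℕ) (s c : ℝ) (hs : s = 1 ∨ s = -1) (hc : 0 ≤ c)
    (hbad : ((u = 0 ∧ v ≠ 0) ∨ (u ≠ 0 ∧ v = 0)) → c = 0) :
    IsCanon n (c • (homogeneousComponent 2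
      (((monomial u (1:ℝ) : MvPolynomial (Fin n) ℝ) + s • monomial v 1)^2))) := by
  have hss : s * s = 1 := by rcases hs with rfl|rfl <;> ring
  rw [sq_expand u v s hss, map_add, map_add, LinearMap.map_smul,
    homComp_monomial, homComp_monomial, homComp_monomial]
  by_cases h1 : u.degree = 1 <;> by_cases h2 : v.degree = 1
  · -- both degree 1
    obtain ⟨a, rfl⟩ := deg_one u h1
    obtain ⟨b, rfl⟩ := deg_one v h2
    simp only [deg_add, deg_single]
    rw [if_pos trivial, if_pos trivial, if_pos trivial, mono_single_two, mono_single_two,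
      mono_single_mul]
    rcases hs with rfl|rfl
    · have heq : (X a ^ 2 : MvPolynomial (Fin n) ℝ) + ((2*1 : ℝ)) • (X a * X b) + X b ^ 2
          = (X a + X b)^2 := by
        rw [smul_eq_C_mul]; push_cast [map_mul, map_ofNat, map_one]; ring
      rw [heq]; exact isCanon_smul_plus a b hc
    · have heq : (X a ^ 2 : MvPolynomial (Fin n) ℝ) + ((2*(-1) : ℝ)) • (X a * X b) + X b ^ 2
          = (X a - X b)^2 := by
        rw [smul_eq_C_mul]; push_cast [map_mul, map_ofNat, map_one, map_neg]; ring
      rw [heq]; exact isCanon_smul_minus a b hc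
  · -- u deg 1, v not
    obtain ⟨a, rfl⟩ := deg_one u h1
    have e1 : ¬((1:ℕ) + v.degree = 2) := by omega
    have e2 : ¬(v.degree + v.degree = 2) := by omega
    simp only [deg_add, deg_single]
    rw [if_pos trivial, if_neg e1, if_neg e2, smul_zero, add_zero, add_zero, mono_single_two]
    exact isCanon_smul_sq a hc
  · -- v deg 1, u not
    obtain ⟨b, rfl⟩ := deg_one v h2
    have e1 : ¬(u.degree + (1:ℕ) = 2) := by omega
    have e2 : ¬(u.degree + u.degree = 2) := by omega
    simp only [deg_add, deg_single]
    rw [if_neg e2, if_neg e1, if_pos trivial, smul_zero, add_zero, zero_add, mono_single_two]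
    exact isCanon_smul_sq b hc
  · -- neither
    have e2 : ¬(u.degree + u.degree = 2) := by omega
    have e3 : ¬(v.degree + v.degree = 2) := by omega
    simp only [deg_add]
    rw [if_neg e2, if_neg e3]
    by_cases hcr : u.degree + v.degree = 2
    · have hc0 : c = 0 := by
        apply hbad
        rcases Nat.lt_or_ge u.degree 1 with h | h
        · left
          have hu0 : u.degree = 0 := by omega
          have hv2 : v.degree = 2 := by omega
          exact ⟨(Finsupp.degree_eq_zero_iff u).mp hu0,
            fun hv => by rw [hv, map_zero] at hv2; omega⟩
        · right
          have hu2 : u.degree = 2 := by omega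
          have hv0 : v.degree = 0 := by omega
          exact ⟨fun hu => by rw [hu, map_zero] at hu2; omega,
            (Finsupp.degree_eq_zero_iff v).mp hv0⟩
      rw [hc0]; simpa using isCanon_zero n
    · rw [if_neg hcr, smul_zero, add_zero, zero_add, smul_zero]
      exact isCanon_zero n

lemma canon_gamma {n : ℕ} (u : Fin n →₀ ℕ) {c : ℝ} (hc : 0 ≤ c) :
    IsCanon n (c • homogeneousComponent 2 ((monomial u (1:ℝ) : MvPolynomial (Fin n) ℝ)^2)) := by
  rw [show ((monomial u (1:ℝ))^2 : MvPolynomial (Fin n) ℝ) = monomial (u+u) 1 by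
    rw [sq, monomial_mul, mul_one], homComp_monomial]
  by_cases h1 : u.degree = 1
  · obtain ⟨a, rfl⟩ := deg_one u h1
    rw [if_pos (by simp [deg_add, deg_single]), mono_single_two]
    exact isCanon_smul_sq a hc
  · rw [if_neg (show ¬((u+u).degree = 2) by rw [deg_add]; omega), smul_zero]
    exact isCanon_zero n

lemma isCanon_of_DSOS_H2 {n : ℕ} {p : MvPolynomial (Fin n) ℝ}
    (hd : IsDSOS n p) (hh : p.IsHomogeneous 2) : IsCanon n p := by
  classical
  obtain ⟨k, mo, γ, bp, bm, hγ, hbp, hbm, hp⟩ := hd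
  set cst : Fin k → ℝ := fun i => if mo i = 0 then (1:ℝ) else 0 with hcst
  have hc0 : constantCoeff p = 0 := hh.coeff_eq_zero (by simp)
  set t1 := ∑ i : Fin k, γ i * (cst i)^2 with ht1d
  set t2 := ∑ i : Fin k, ∑ j : Fin k, bp i j * (cst i + cst j)^2 with ht2d
  set t3 := ∑ i : Fin k, ∑ j : Fin k, bm i j * (cst i - cst j)^2 with ht3d
  have ht1 : 0 ≤ t1 := Finset.sum_nonneg fun i _ => mul_nonneg (hγ i) (sq_nonneg _)
  have ht2 : 0 ≤ t2 := Finset.sum_nonneg fun i _ => Finset.sum_nonneg fun j _ =>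
    mul_nonneg (hbp i j) (sq_nonneg _)
  have ht3 : 0 ≤ t3 := Finset.sum_nonneg fun i _ => Finset.sum_nonneg fun j _ =>
    mul_nonneg (hbm i j) (sq_nonneg _)
  have hsum : t1 + t2 + t3 = 0 := by
    rw [hp] at hc0
    simp only [map_add, map_sum, map_pow, map_sub, constantCoeff_smul, smul_eq_mul,
      constantCoeff_monomial] at hc0
    rw [ht1d, ht2d, ht3d, hcst]
    exact hc0
  have ht2z : t2 = 0 := by linarith
  have ht3z : t3 = 0 := by linarith
  have hbpz : ∀ i j, bp i j * (cst i + cst j)^2 = 0 := by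
    intro i j
    have h1 := (Finset.sum_eq_zero_iff_of_nonneg (fun i _ => Finset.sum_nonneg fun j _ =>
      mul_nonneg (hbp i j) (sq_nonneg _))).mp ht2z i (Finset.mem_univ i)
    exact (Finset.sum_eq_zero_iff_of_nonneg (fun j _ =>
      mul_nonneg (hbp i j) (sq_nonneg _))).mp h1 j (Finset.mem_univ j)
  have hbmz : ∀ i j, bm i j * (cst i - cst j)^2 = 0 := by
    intro i j
    have h1 := (Finset.sum_eq_zero_iff_of_nonneg (fun i _ => Finset.sum_nonneg fun j _ =>
      mul_nonneg (hbm i j) (sq_nonneg _))).mp ht3z i (Finset.mem_univ i)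
    exact (Finset.sum_eq_zero_iff_of_nonneg (fun j _ =>
      mul_nonneg (hbm i j) (sq_nonneg _))).mp h1 j (Finset.mem_univ j)
  have key_p : ∀ i j, ((mo i = 0 ∧ mo j ≠ 0) ∨ (mo i ≠ 0 ∧ mo j = 0)) → bp i j = 0 := by
    intro i j h
    have h2 : (cst i + cst j)^2 = 1 := by
      rcases h with ⟨h1, h2⟩ | ⟨h1, h2⟩ <;> simp [hcst, h1, h2]
    have := hbpz i j
    rw [h2, mul_one] at this
    exact this
  have key_m : ∀ i j, ((mo i = 0 ∧ mo j ≠ 0) ∨ (mo i ≠ 0 ∧ mo j = 0)) → bm i j = 0 := by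
    intro i j h
    have h2 : (cst i - cst j)^2 = 1 := by
      rcases h with ⟨h1, h2⟩ | ⟨h1, h2⟩ <;> simp [hcst, h1, h2]
    have := hbmz i j
    rw [h2, mul_one] at this
    exact this
  have hp2 : homogeneousComponent 2 p = p := by
    rw [homogeneousComponent_of_mem ((mem_homogeneousSubmodule _ _).mpr hh)]
    simp
  rw [← hp2, hp, map_add, map_add, map_sum, map_sum, map_sum]
  refine isCanon_add (isCanon_add (isCanon_sum _ _ fun i _ => ?_)
    (isCanon_sum _ _ fun i _ => ?_)) (isCanon_sum _ _ fun i _ => ?_)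
  · rw [LinearMap.map_smul]
    exact canon_gamma (mo i) (hγ i)
  · rw [map_sum]
    refine isCanon_sum _ _ fun j _ => ?_
    rw [LinearMap.map_smul]
    have := canon_term (mo i) (mo j) 1 (bp i j) (Or.inl rfl) (hbp i j) (key_p i j)
    simpa [one_smul] using this
  · rw [map_sum]
    refine isCanon_sum _ _ fun j _ => ?_
    rw [LinearMap.map_smul]
    have := canon_term (mo i) (mo j) (-1) (bm i j) (Or.inr rfl) (hbm i j) (key_m i j)
    simpa [neg_one_smul, ← sub_eq_add_neg] using this

lemma dsos_of_canon {n : ℕ} {p : MvPolynomial (Fin n) ℝ} (h : IsCanon n p) : IsDSOS n p := by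
  obtain ⟨γ, B, C, hγ, hB, hC, hp⟩ := h
  refine ⟨n, fun i => Finsupp.single i 1, γ, B, C, hγ, hB, hC, ?_⟩
  have hX : ∀ i : Fin n, (monomial (Finsupp.single i 1) (1:ℝ) : MvPolynomial (Fin n) ℝ)
      = X i := fun i => by rw [← X_pow_eq_monomial, pow_one]
  simp only [hX]
  rw [hp]
  simp_rw [Finset.sum_add_distrib]
  ring

lemma h2_of_canon {n : ℕ} {p : MvPolynomial (Fin n) ℝ} (h : IsCanon n p) :
    p.IsHomogeneous 2 := by
  obtain ⟨γ, B, C, hγ, hB, hC, hp⟩ := h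
  have : p ∈ homogeneousSubmodule (Fin n) ℝ 2 := by
    rw [hp]
    refine add_mem (Submodule.sum_mem _ fun a _ => Submodule.smul_mem _ _ ?_)
      (Submodule.sum_mem _ fun a _ => Submodule.sum_mem _ fun b _ => add_mem
        (Submodule.smul_mem _ _ ?_) (Submodule.smul_mem _ _ ?_))
    · exact (isHomogeneous_X _ a).pow 2
    · exact ((isHomogeneous_X _ a).add (isHomogeneous_X _ b)).pow 2
    · exact ((isHomogeneous_X _ a).sub (isHomogeneous_X _ b)).pow 2
  exact this

lemma cond_iff {n : ℕ} (jh : Idx 2 n) :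
    (Monotone jh ∧ ¬ (∃ q : Fin n, jh = diagIdx q)) ↔ jh 0 < jh 1 := by
  constructor
  · rintro ⟨hm, hd⟩
    rcases lt_or_eq_of_le (hm (show (0:Fin 2) ≤ 1 by decide)) with h | h
    · exact h
    · exact absurd ⟨jh 0, funext fun t => by fin_cases t <;> simp [diagIdx, ← h]⟩ hd
  · intro h
    refine ⟨fun s t hst => ?_, ?_⟩
    · fin_cases s <;> fin_cases t
      · exact le_refl _
      · exact le_of_lt h
      · exact absurd hst (by decide)
      · exact le_refl _
    · rintro ⟨q, rfl⟩
      exact lt_irrefl _ h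

lemma multIdx_two_left {n : ℕ} (jh : Idx 2 n) (h : jh 0 ≠ jh 1) : multIdx jh (jh 0) = 1 := by
  classical
  have : (Finset.univ.filter fun k : Fin 2 => jh k = jh 0) = {0} := by
    ext k
    fin_cases k <;> simp [Ne.symm h]
  rw [multIdx, this, Finset.card_singleton]

lemma multIdx_two_right {n : ℕ} (jh : Idx 2 n) (h : jh 0 ≠ jh 1) : multIdx jh (jh 1) = 1 := by
  classical
  have : (Finset.univ.filter fun k : Fin 2 => jh k = jh 1) = {1} := by
    ext k
    fin_cases k <;> simp [h]
  rw [multIdx, this, Finset.card_singleton]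

lemma suppIdx_two {n : ℕ} (jh : Idx 2 n) : suppIdx jh = {jh 0, jh 1} := by
  ext x
  simp [suppIdx, Fin.exists_fin_two, eq_comm]

lemma multinomial_pair {n : ℕ} (a b : Fin n) (hab : a ≠ b) (f : Fin n → ℕ) :
    Nat.multinomial ({a, b} : Finset (Fin n)) f = (f a + f b).choose (f a) := by
  classical
  rw [show ({a, b} : Finset (Fin n)) = insert a {b} from rfl,
    Nat.multinomial_insert (by simp [hab]), Nat.multinomial_singleton,
    Finset.sum_singleton, mul_one]

lemma fGen_two {n : ℕ} (c : Bool) (jh : Idx 2 n) (h : jh 0 < jh 1) :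
    fGen 2 n c jh = (X (jh 0))^2 + (X (jh 1))^2 +
      ((if c then (-1:ℝ) else 1) * 2) • ((X (jh 0) : MvPolynomial (Fin n) ℝ) * X (jh 1)) := by
  classical
  have hne : jh 0 ≠ jh 1 := ne_of_lt h
  rw [fGen, suppIdx_two, Finset.sum_pair hne, Fin.prod_univ_two,
    multinomial_pair _ _ hne, multinomial_pair _ _ hne, multinomial_pair _ _ hne]
  rw [multIdx_two_left jh hne, multIdx_two_right jh hne]
  simp [hne, Ne.symm hne]

lemma fGen_two_false {n : ℕ} (jh : Idx 2 n) (h : jh 0 < jh 1) :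
    fGen 2 n false jh = ((X (jh 0) : MvPolynomial (Fin n) ℝ) + X (jh 1))^2 := by
  rw [fGen_two false jh h]
  simp only [Bool.false_eq_true, if_false, one_mul, smul_eq_C_mul, map_ofNat]
  ring

lemma fGen_two_true {n : ℕ} (jh : Idx 2 n) (h : jh 0 < jh 1) :
    fGen 2 n true jh = ((X (jh 0) : MvPolynomial (Fin n) ℝ) - X (jh 1))^2 := by
  rw [fGen_two true jh h]
  simp only [if_true, smul_eq_C_mul, map_mul, map_neg, map_one, map_ofNat]
  ring

lemma sum_idx2 {n : ℕ} {M : Type*} [AddCommMonoid M] (G : Fin n → Fin n → M) :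
    ∑ jh : Idx 2 n, G (jh 0) (jh 1) = ∑ a : Fin n, ∑ b : Fin n, G a b := by
  calc ∑ jh : Idx 2 n, G (jh 0) (jh 1) = ∑ q : Fin n × Fin n, G q.1 q.2 :=
        Fintype.sum_equiv (piFinTwoEquiv fun _ => Fin n) _ _ (fun jh => rfl)
    _ = ∑ a : Fin n, ∑ b : Fin n, G a b := by rw [Fintype.sum_prod_type]

lemma double_split {n : ℕ} {M : Type*} [AddCommMonoid M] (H : Fin n → Fin n → M) :
    ∑ a : Fin n, ∑ b : Fin n, H a b
      = (∑ a : Fin n, ∑ b : Fin n, if a < b then H a b + H b a else 0)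
        + ∑ a : Fin n, H a a := by
  classical
  have e1 : ∀ a b : Fin n, H a b = ((if a < b then H a b else 0)
      + (if b < a then H a b else 0)) + (if a = b then H a b else 0) := by
    intro a b
    rcases lt_trichotomy a b with h|h|h
    · simp [h, not_lt_of_gt h, ne_of_lt h]
    · simp [h, lt_irrefl]
    · simp [h, not_lt_of_gt h, (ne_of_lt h).symm]
  calc ∑ a : Fin n, ∑ b : Fin n, H a b
      = ((∑ a : Fin n, ∑ b : Fin n, if a < b then H a b else 0)
          + ∑ a : Fin n, ∑ b : Fin n, if b < a then H a b else 0)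
        + ∑ a : Fin n, ∑ b : Fin n, if a = b then H a b else 0 := by
        simp only [← Finset.sum_add_distrib]
        exact Finset.sum_congr rfl fun a _ => Finset.sum_congr rfl fun b _ => e1 a b
    _ = (∑ a : Fin n, ∑ b : Fin n, if a < b then H a b + H b a else 0) + ∑ a : Fin n, H a a := by
        congr 1
        · rw [Finset.sum_comm (f := fun a b => if b < a then H a b else 0)]
          simp only [← Finset.sum_add_distrib]
          refine Finset.sum_congr rfl fun a _ => Finset.sum_congr rfl fun b _ => ?_
          by_cases hab : a < b <;> simp [hab]
        · simp [Finset.sum_ite_eq]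

lemma canon_of_DDTH {n : ℕ} {p : MvPolynomial (Fin n) ℝ} (h : IsDDTH 2 n p) : IsCanon n p := by
  classical
  obtain ⟨γ, bp, bm, hγ, hbp, hbm, hp⟩ := h
  refine ⟨γ, fun a b => if a < b then bp ![a, b] else 0,
    fun a b => if a < b then bm ![a, b] else 0, hγ, ?_, ?_, ?_⟩
  · intro a b; dsimp only; split; exacts [hbp _, le_refl _]
  · intro a b; dsimp only; split; exacts [hbm _, le_refl _]
  rw [hp]
  beta_reduce
  congr 1
  have step1 : ∀ jh : Idx 2 n,
      (if Monotone jh ∧ ¬ (∃ q : Fin n, jh = diagIdx q) then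
        bp jh • fGen 2 n false jh + bm jh • fGen 2 n true jh else 0)
      = (fun a b => if a < b then
          bp ![a, b] • (((X a : MvPolynomial (Fin n) ℝ) + X b) ^ 2)
          + bm ![a, b] • (((X a : MvPolynomial (Fin n) ℝ) - X b) ^ 2) else 0) (jh 0) (jh 1) := by
    intro jh
    simp only
    by_cases hlt : jh 0 < jh 1
    · rw [if_pos ((cond_iff jh).mpr hlt), if_pos hlt, fGen_two_false jh hlt, fGen_two_true jh hlt,
        show (![jh 0, jh 1] : Idx 2 n) = jh from funext fun t => by fin_cases t <;> rfl]
    · rw [if_neg (fun hc => hlt ((cond_iff jh).mp hc)), if_neg hlt]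
  rw [Finset.sum_congr rfl (fun jh _ => step1 jh), sum_idx2 (fun a b => if a < b then
          bp ![a, b] • (((X a : MvPolynomial (Fin n) ℝ) + X b) ^ 2)
          + bm ![a, b] • (((X a : MvPolynomial (Fin n) ℝ) - X b) ^ 2) else 0)]
  refine Finset.sum_congr rfl fun a _ => Finset.sum_congr rfl fun b _ => ?_
  by_cases hab : a < b <;> simp [hab]

lemma ddth_of_canon {n : ℕ} {p : MvPolynomial (Fin n) ℝ} (h : IsCanon n p) : IsDDTH 2 n p := by
  classical
  obtain ⟨γ, B, C, hγ, hB, hC, hp⟩ := h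
  refine ⟨fun a => γ a + 4 * B a a,
    fun jh => B (jh 0) (jh 1) + B (jh 1) (jh 0),
    fun jh => C (jh 0) (jh 1) + C (jh 1) (jh 0),
    fun a => add_nonneg (hγ a) (mul_nonneg (by norm_num) (hB a a)),
    fun jh => add_nonneg (hB _ _) (hB _ _), fun jh => add_nonneg (hC _ _) (hC _ _), ?_⟩
  rw [hp]
  have step1 : ∀ jh : Idx 2 n,
      (if Monotone jh ∧ ¬ (∃ q : Fin n, jh = diagIdx q) then
        (B (jh 0) (jh 1) + B (jh 1) (jh 0)) • fGen 2 n false jh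
          + (C (jh 0) (jh 1) + C (jh 1) (jh 0)) • fGen 2 n true jh else 0)
      = (fun a b => if a < b then
          (B a b + B b a) • (((X a : MvPolynomial (Fin n) ℝ) + X b) ^ 2)
          + (C a b + C b a) • (((X a : MvPolynomial (Fin n) ℝ) - X b) ^ 2) else 0)
          (jh 0) (jh 1) := by
    intro jh
    simp only
    by_cases hlt : jh 0 < jh 1
    · rw [if_pos ((cond_iff jh).mpr hlt), if_pos hlt, fGen_two_false jh hlt, fGen_two_true jh hlt]
    · rw [if_neg (fun hc => hlt ((cond_iff jh).mp hc)), if_neg hlt]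
  rw [Finset.sum_congr rfl (fun jh _ => step1 jh), sum_idx2 (fun a b => if a < b then
          (B a b + B b a) • (((X a : MvPolynomial (Fin n) ℝ) + X b) ^ 2)
          + (C a b + C b a) • (((X a : MvPolynomial (Fin n) ℝ) - X b) ^ 2) else 0)]
  rw [double_split (fun a b => B a b • (((X a : MvPolynomial (Fin n) ℝ) + X b) ^ 2)
    + C a b • (((X a : MvPolynomial (Fin n) ℝ) - X b) ^ 2))]
  beta_reduce
  have hsym : ∀ a b : Fin n,
      (if a < b then (B a b • (((X a : MvPolynomial (Fin n) ℝ) + X b) ^ 2)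
          + C a b • (((X a : MvPolynomial (Fin n) ℝ) - X b) ^ 2))
        + (B b a • (((X b : MvPolynomial (Fin n) ℝ) + X a) ^ 2)
          + C b a • (((X b : MvPolynomial (Fin n) ℝ) - X a) ^ 2)) else 0)
      = if a < b then (B a b + B b a) • (((X a : MvPolynomial (Fin n) ℝ) + X b) ^ 2)
          + (C a b + C b a) • (((X a : MvPolynomial (Fin n) ℝ) - X b) ^ 2) else 0 := by
    intro a b
    by_cases hab : a < b
    · rw [if_pos hab, if_pos hab,
        show ((X b : MvPolynomial (Fin n) ℝ) + X a) ^ 2 = (X a + X b) ^ 2 by ring,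
        show ((X b : MvPolynomial (Fin n) ℝ) - X a) ^ 2 = (X a - X b) ^ 2 by ring,
        add_smul, add_smul]
      ring
    · rw [if_neg hab, if_neg hab]
  have hdiag : ∀ a : Fin n,
      B a a • (((X a : MvPolynomial (Fin n) ℝ) + X a) ^ 2)
        + C a a • (((X a : MvPolynomial (Fin n) ℝ) - X a) ^ 2)
      = (4 * B a a) • (X a ^ 2 : MvPolynomial (Fin n) ℝ) := by
    intro a
    rw [show ((X a : MvPolynomial (Fin n) ℝ) + X a) ^ 2 = 4 * X a ^ 2 by ring,
      sub_self, zero_pow (by norm_num), smul_zero, add_zero,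
      smul_eq_C_mul, smul_eq_C_mul, map_mul, map_ofNat]
    ring
  rw [Finset.sum_congr rfl (fun a _ => Finset.sum_congr rfl (fun b _ => hsym a b)),
    Finset.sum_congr rfl (fun a (_ : a ∈ Finset.univ) => hdiag a)]
  simp only [add_smul, Finset.sum_add_distrib]
  abel

end Aux

/-- `DDTH_{2,n} = DSOS_{2,n} ∩ ℍ₂`: a homogeneous quadratic polynomial is DDTH iff it is
DSOS. -/
theorem DDTH2_eq_DSOS_inter_H2 (n : ℕ) (p : MvPolynomial (Fin n) ℝ) :
    IsDDTH 2 n p ↔ (IsDSOS n p ∧ p.IsHomogeneous 2) := by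
  constructor
  · intro h
    have hc := canon_of_DDTH h
    exact ⟨dsos_of_canon hc, h2_of_canon hc⟩
  · rintro ⟨hd, hh⟩
    exact ddth_of_canon (isCanon_of_DSOS_H2 hd hh)
end

section
/- Let $m,n \in \mathbb{N}$. A polynomial $p$ in $n$ variables is a DDTH polynomial of degree $m$ if and only if there exists a symmetric diagonally dominant tensor $\mathcal{A} \in DD^+_{m,n}$ (nonnegative diagonal) such that $p(x) = \mathcal{A}x^m = \sum_{i_1,\dots,i_m=1}^n a_{i_1\dots i_m} x_{i_1}\cdots x_{i_m}$. -/
open Finset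

open MvPolynomial

namespace DDAux
open Equiv
variable {m n : ℕ}

noncomputable def csort (j : Idx m n) : Idx m n := j ∘ Tuple.sort j

lemma monotone_csort (j : Idx m n) : Monotone (csort j) := Tuple.monotone_sort j

lemma csort_comp (j : Idx m n) (σ : Perm (Fin m)) : csort (j ∘ σ) = csort j :=
  Tuple.comp_perm_comp_sort_eq_comp_sort

lemma csort_of_monotone {j : Idx m n} (h : Monotone j) : csort j = j := by
  rw [csort, Tuple.sort_eq_refl_iff_monotone.2 h]; rfl

lemma multIdx_comp (j : Idx m n) (σ : Perm (Fin m)) : multIdx (j ∘ σ) = multIdx j := by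
  funext p
  unfold multIdx
  apply Finset.card_bij (fun k _ => σ k)
  · intro a ha; simp_all
  · intro a _ b _ h; exact σ.injective h
  · intro b hb; exact ⟨σ.symm b, by simp_all, by simp⟩

lemma mem_suppIdx {j : Idx m n} {p : Fin n} : p ∈ suppIdx j ↔ multIdx j p ≠ 0 := by
  rw [← Nat.pos_iff_ne_zero, multIdx, Finset.card_pos, Finset.filter_nonempty_iff]
  constructor
  · intro hp
    obtain ⟨a, -, ha⟩ := Finset.mem_image.1 hp
    exact ⟨a, mem_univ _, ha⟩
  · rintro ⟨a, -, ha⟩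
    exact Finset.mem_image.2 ⟨a, mem_univ _, ha⟩

lemma multIdx_csort (j : Idx m n) : multIdx (csort j) = multIdx j := multIdx_comp j _

lemma sum_multIdx_univ (j : Idx m n) : ∑ p : Fin n, multIdx j p = m := by
  classical
  have := Finset.card_eq_sum_card_fiberwise (f := j) (s := univ) (t := univ)
    (fun x _ => mem_univ _)
  simpa [multIdx] using this.symm

lemma sum_multIdx (j : Idx m n) : ∑ p ∈ suppIdx j, multIdx j p = m := by
  classical
  conv_rhs => rw [← sum_multIdx_univ j]
  exact Finset.sum_subset (subset_univ _)
    (by intro x _ hx; by_contra hc; exact hx (mem_suppIdx.2 hc))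
  
lemma exists_perm_of_multIdx_eq {j j' : Idx m n} (h : multIdx j = multIdx j') :
    ∃ σ : Perm (Fin m), j' ∘ σ = j := by
  classical
  have e : ∀ p : Fin n, { k : Fin m // j k = p } ≃ { k : Fin m // j' k = p } := by
    intro p
    apply Fintype.equivOfCardEq
    rw [Fintype.card_subtype, Fintype.card_subtype]
    exact congrFun h p
  refine ⟨(Equiv.sigmaFiberEquiv j).symm.trans ((Equiv.sigmaCongrRight e).trans
    (Equiv.sigmaFiberEquiv j')), ?_⟩
  funext k
  exact (e (j k) ⟨k, rfl⟩).2

end DDAux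

namespace DDAux
open Equiv
variable {m n : ℕ}

lemma stab_card (jh : Idx m n) :
    (univ.filter fun σ : Perm (Fin m) => jh ∘ σ = jh).card = ∏ p : Fin n, (multIdx jh p).factorial := by
  classical
  have h := DomMulAct.stabilizer_card jh
  rw [Fintype.card_subtype] at h
  rw [h]
  refine Finset.prod_congr rfl fun p _ => ?_
  rw [Fintype.card_subtype]
  rfl

lemma card_orbit_mul (jh : Idx m n) :
    (univ.filter fun j : Idx m n => multIdx j = multIdx jh).card *
      ∏ p : Fin n, (multIdx jh p).factorial = m.factorial := by
  classical
  have hcard : (univ : Finset (Perm (Fin m))).card = m.factorial := by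
    simp [Finset.card_univ, Fintype.card_perm]
  rw [← hcard]
  rw [Finset.card_eq_sum_card_fiberwise
    (f := fun σ : Perm (Fin m) => jh ∘ σ)
    (t := (univ.filter fun j : Idx m n => multIdx j = multIdx jh))
    (fun σ _ => by simp [multIdx_comp])]
  rw [Finset.sum_congr rfl (g := fun _ => ∏ p : Fin n, (multIdx jh p).factorial) ?_, Finset.sum_const,
    smul_eq_mul]
  intro j hj
  simp only [Finset.mem_filter, Finset.mem_univ, true_and] at hj
  obtain ⟨σ0, hσ0⟩ := exists_perm_of_multIdx_eq hj
  rw [← stab_card jh]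
  apply Finset.card_bij (fun σ _ => σ0.symm.trans σ)
  · intro σ hσ
    simp only [Finset.mem_filter, Finset.mem_univ, true_and] at hσ ⊢
    funext k
    have h1 : jh (σ (σ0.symm k)) = j (σ0.symm k) := congrFun hσ _
    have h2 : j (σ0.symm k) = jh (σ0 (σ0.symm k)) := (congrFun hσ0 _).symm
    simp only [Function.comp_apply, Equiv.trans_apply]
    rw [h1, h2, Equiv.apply_symm_apply]
  · intro a _ b _ hab
    have := congrArg (fun τ => σ0.trans τ) hab
    ext k
    have hk := congrArg (fun (e : Equiv.Perm (Fin m)) => e k) this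
    simp only [Equiv.trans_apply, Equiv.symm_apply_apply] at hk
    exact congrArg _ hk
  · intro τ hτ
    refine ⟨σ0.trans τ, ?_, by ext k; simp⟩
    simp only [Finset.mem_filter, Finset.mem_univ, true_and] at hτ ⊢
    funext k
    simp only [Function.comp_apply, Equiv.trans_apply]
    have : jh (τ (σ0 k)) = jh (σ0 k) := congrFun hτ _
    rw [this, ← Function.comp_apply (f := jh), hσ0]

lemma prod_fact_supp (jh : Idx m n) :
    ∏ p ∈ suppIdx jh, (multIdx jh p).factorial = ∏ p : Fin n, (multIdx jh p).factorial := by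
  classical
  refine Finset.prod_subset (subset_univ _) fun p _ hp => ?_
  have : multIdx jh p = 0 := by by_contra hc; exact hp (mem_suppIdx.2 hc)
  simp [this]

lemma card_orbit (jh : Idx m n) :
    (univ.filter fun j : Idx m n => multIdx j = multIdx jh).card
      = Nat.multinomial (suppIdx jh) (multIdx jh) := by
  classical
  have h1 := card_orbit_mul jh
  have h2 := Nat.multinomial_spec (suppIdx jh) (multIdx jh)
  rw [sum_multIdx, prod_fact_supp] at h2
  have hpos : 0 < ∏ p : Fin n, (multIdx jh p).factorial :=
    Finset.prod_pos fun p _ => Nat.factorial_pos _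
  apply Nat.eq_of_mul_eq_mul_right hpos
  rw [h1, mul_comm (Nat.multinomial _ _), h2]

end DDAux

namespace DDAux
open Equiv
variable {m n : ℕ}

lemma csort_eq_iff {jh : Idx m n} (hmono : Monotone jh) (j : Idx m n) :
    csort j = jh ↔ multIdx j = multIdx jh := by
  constructor
  · intro h; rw [← multIdx_csort j, h]
  · intro h
    obtain ⟨σ, hσ⟩ := exists_perm_of_multIdx_eq h
    rw [← hσ, csort_comp, csort_of_monotone hmono]

lemma multinomial_subset {β : Type*} {s s' : Finset β} (h : s ⊆ s') {f : β → ℕ}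
    (hf : ∀ q ∈ s', q ∉ s → f q = 0) :
    Nat.multinomial s f = Nat.multinomial s' f := by
  have h1 := Nat.multinomial_spec s f
  have h2 := Nat.multinomial_spec s' f
  have hsum : ∑ i ∈ s, f i = ∑ i ∈ s', f i :=
    Finset.sum_subset h (fun q hq hq' => hf q hq hq')
  have hprod : ∏ i ∈ s, (f i).factorial = ∏ i ∈ s', (f i).factorial :=
    Finset.prod_subset h (fun q hq hq' => by rw [hf q hq hq']; rfl)
  have hpos : 0 < ∏ i ∈ s, (f i).factorial := Finset.prod_pos fun p _ => Nat.factorial_pos _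
  apply Nat.eq_of_mul_eq_mul_left hpos
  rw [h1, hsum, hprod, h2]

lemma multIdx_eq_diag_iff {j : Idx m n} {q : Fin n} (hm : 0 < m) :
    multIdx j = multIdx (diagIdx q : Idx m n) → j = diagIdx q := by
  intro h
  have hq : multIdx (diagIdx q : Idx m n) q = m := by
    simp [multIdx, diagIdx, Finset.filter_true_of_mem]
  have hj : multIdx j q = m := by rw [h, hq]
  have : (univ.filter fun k : Fin m => j k = q) = univ := by
    apply Finset.eq_univ_of_card
    simpa [multIdx] using hj
  funext k
  have := Finset.mem_filter.1 (this ▸ Finset.mem_univ k)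
  exact this.2

lemma card_orbit_fix (hm : 0 < m) {jh : Idx m n} {i : Fin n} (hi : i ∈ suppIdx jh) :
    (univ.filter fun j : Idx m n => multIdx j = multIdx jh ∧ j ⟨0, hm⟩ = i).card
      = Nat.multinomial (suppIdx jh)
          (fun q => if q = i then multIdx jh q - 1 else multIdx jh q) := by
  classical
  obtain ⟨m', rfl⟩ : ∃ m', m = m' + 1 := ⟨m - 1, (Nat.succ_pred_eq_of_pos hm).symm⟩
  -- a representative tuple with first coordinate i
  obtain ⟨k0, -, hk0⟩ := Finset.mem_image.1 hi
  set j1 : Idx (m' + 1) n := jh ∘ (Equiv.swap (⟨0, hm⟩ : Fin (m' + 1)) k0) with hj1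
  have hj1mult : multIdx j1 = multIdx jh := multIdx_comp jh _
  have hj10 : j1 ⟨0, hm⟩ = i := by
    simp only [hj1, Function.comp_apply, Equiv.swap_apply_left]
    exact hk0
  set t0 : Idx m' n := fun l => j1 l.succ with ht0
  have hzero : (⟨0, hm⟩ : Fin (m' + 1)) = 0 := rfl
  -- multiplicity of a tail
  have hsplit : ∀ (j : Idx (m' + 1) n) (q : Fin n),
      multIdx j q = (if j 0 = q then 1 else 0) + multIdx (fun l : Fin m' => j l.succ) q := by
    intro j q
    simp only [multIdx, Finset.card_filter]
    rw [Fin.sum_univ_succ]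
  have tail_mult : ∀ (j : Idx (m' + 1) n), j ⟨0, hm⟩ = i →
      ∀ q, multIdx (fun l : Fin m' => j l.succ) q
        = (if q = i then multIdx j q - 1 else multIdx j q) := by
    intro j hj q
    rw [hzero] at hj
    by_cases hq : q = i
    · subst hq
      rw [if_pos rfl, hsplit j q, if_pos hj]
      simp
    · rw [if_neg hq, hsplit j q, if_neg (by rw [hj]; exact fun hc => hq hc.symm)]
      simp
  have ht0mult : ∀ q, multIdx t0 q = (if q = i then multIdx jh q - 1 else multIdx jh q) := by
    intro q
    have := tail_mult j1 hj10 q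
    rw [ht0, this, hj1mult]
  have hipos : 1 ≤ multIdx jh i := Nat.one_le_iff_ne_zero.2 (mem_suppIdx.1 hi)
  -- bijection between the filtered set and the orbit of t0
  have hbij : (univ.filter fun j : Idx (m' + 1) n =>
      multIdx j = multIdx jh ∧ j ⟨0, hm⟩ = i).card
      = (univ.filter fun t : Idx m' n => multIdx t = multIdx t0).card := by
    apply Finset.card_bij (fun j _ => fun l : Fin m' => j l.succ)
    · intro j hj
      simp only [Finset.mem_filter, Finset.mem_univ, true_and] at hj ⊢
      funext q
      rw [tail_mult j hj.2 q, ht0mult q, hj.1]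
    · intro a ha b hb hab
      simp only [Finset.mem_filter, Finset.mem_univ, true_and] at ha hb
      funext k
      rcases Fin.cases (motive := fun k => a k = b k) (by rw [hzero] at ha hb; rw [ha.2, hb.2])
        (fun l => congrFun hab l) k with h
      exact h
    · intro t ht
      simp only [Finset.mem_filter, Finset.mem_univ, true_and] at ht
      have htail : (fun l : Fin m' => (Fin.cons i t : Idx (m' + 1) n) l.succ) = t := by
        funext l; simp
      refine ⟨Fin.cons i t, ?_, htail⟩
      simp only [Finset.mem_filter, Finset.mem_univ, true_and]
      refine ⟨?_, by rw [hzero]; simp⟩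
      funext q
      have h1 := hsplit (Fin.cons i t) q
      rw [htail] at h1
      have hcons0 : (Fin.cons i t : Idx (m' + 1) n) 0 = i := by simp
      rw [hcons0, ht] at h1
      rw [h1, ht0mult q]
      by_cases hq : q = i
      · subst hq
        rw [if_pos rfl, if_pos rfl]
        omega
      · rw [if_neg (fun hc => hq hc.symm), if_neg hq]
        simp
  rw [hbij, card_orbit t0]
  have hfun : multIdx t0 = fun q => if q = i then multIdx jh q - 1 else multIdx jh q :=
    funext ht0mult
  rw [hfun]
  apply multinomial_subset
  · intro q hq
    rw [mem_suppIdx] at hq ⊢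
    rw [hfun] at hq
    replace hq : (if q = i then multIdx jh q - 1 else multIdx jh q) ≠ 0 := hq
    by_cases h : q = i
    · rw [if_pos h] at hq
      exact fun hc => hq (by rw [hc])
    · rwa [if_neg h] at hq
  · intro q hq hq'
    rw [mem_suppIdx, not_not] at hq'
    rw [hfun] at hq'
    show (if q = i then multIdx jh q - 1 else multIdx jh q) = 0
    exact hq'

end DDAux

namespace DDAux
open Equiv MvPolynomial
open scoped Classical
variable {m n : ℕ}

lemma symm_apply {A : Idx m n → ℝ} (hA : IsSymmetric A) {j jh : Idx m n}
    (h : multIdx j = multIdx jh) : A j = A jh := by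
  obtain ⟨σ, hσ⟩ := exists_perm_of_multIdx_eq h
  rw [← hσ, hA]

lemma diag_inj (hm : 0 < m) : Function.Injective (diagIdx (m := m) (n := n)) := by
  intro a b h
  exact congrFun h ⟨0, hm⟩

lemma rowSum_eq (hm : 0 < m) {A : Idx m n → ℝ} (hA : IsSymmetric A) (i : Fin n) :
    rowSum hm A i = ∑ jh : Idx m n,
      (if Monotone jh ∧ ¬(∃ q, jh = diagIdx q) ∧ i ∈ suppIdx jh then
        ((Nat.multinomial (suppIdx jh)
          (fun q => if q = i then multIdx jh q - 1 else multIdx jh q) : ℕ) : ℝ) * |A jh|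
      else 0) := by
  classical
  rw [rowSum, Finset.sum_filter, ← Finset.sum_fiberwise univ csort
    (fun j => if j ⟨0, hm⟩ = i ∧ j ≠ diagIdx i then |A j| else 0)]
  refine Finset.sum_congr rfl fun jh _ => ?_
  by_cases hmono : Monotone jh
  · have horb : (univ.filter fun j : Idx m n => csort j = jh)
        = univ.filter fun j => multIdx j = multIdx jh := by
      ext j; simp only [Finset.mem_filter, Finset.mem_univ, true_and]
      exact csort_eq_iff hmono j
    rw [horb]
    by_cases hdiag : ∃ q, jh = diagIdx q
    · rw [if_neg (by tauto)]
      apply Finset.sum_eq_zero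
      intro j hj
      obtain ⟨q, rfl⟩ := hdiag
      simp only [Finset.mem_filter, Finset.mem_univ, true_and] at hj
      have hjd : j = diagIdx q := multIdx_eq_diag_iff hm hj
      rw [if_neg]
      rintro ⟨h0, hne⟩
      apply hne
      rw [hjd]
      have h0' : q = i := by rw [hjd] at h0; exact h0
      rw [h0']
    · by_cases hsupp : i ∈ suppIdx jh
      · rw [if_pos ⟨hmono, hdiag, hsupp⟩]
        have key : ∀ j ∈ univ.filter (fun j : Idx m n => multIdx j = multIdx jh),
            (if j ⟨0, hm⟩ = i ∧ j ≠ diagIdx i then |A j| else 0)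
              = (if j ⟨0, hm⟩ = i then |A jh| else 0) := by
          intro j hj
          simp only [Finset.mem_filter, Finset.mem_univ, true_and] at hj
          by_cases h0 : j ⟨0, hm⟩ = i
          · have hne : j ≠ diagIdx i := by
              rintro rfl
              exact hdiag ⟨i, multIdx_eq_diag_iff hm hj.symm⟩
            rw [if_pos ⟨h0, hne⟩, if_pos h0, symm_apply hA hj]
          · rw [if_neg (fun hc => h0 hc.1), if_neg h0]
        rw [Finset.sum_congr rfl key, ← Finset.sum_filter, Finset.filter_filter,
          Finset.sum_const, card_orbit_fix hm hsupp, nsmul_eq_mul]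
      · rw [if_neg (by tauto)]
        apply Finset.sum_eq_zero
        intro j hj
        simp only [Finset.mem_filter, Finset.mem_univ, true_and] at hj
        rw [if_neg]
        rintro ⟨h0, -⟩
        have hne : multIdx j i ≠ 0 := by
          rw [multIdx, ← Nat.pos_iff_ne_zero, Finset.card_pos, Finset.filter_nonempty_iff]
          exact ⟨⟨0, hm⟩, Finset.mem_univ _, h0⟩
        exact hsupp (mem_suppIdx.2 (by rw [← hj]; exact hne))
  · rw [if_neg (by tauto)]
    apply Finset.sum_eq_zero
    intro j hj
    simp only [Finset.mem_filter, Finset.mem_univ, true_and] at hj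
    exact absurd (hj ▸ monotone_csort j) hmono

lemma tensor_poly (hm : 0 < m) {A : Idx m n → ℝ} (hA : IsSymmetric A) :
    ∑ j : Idx m n, A j • ∏ k : Fin m, (X (j k) : MvPolynomial (Fin n) ℝ)
      = (∑ q : Fin n, A (diagIdx q) • (X q ^ m : MvPolynomial (Fin n) ℝ)) +
        ∑ jh : Idx m n, (if Monotone jh ∧ ¬(∃ q, jh = diagIdx q) then
          (((Nat.multinomial (suppIdx jh) (multIdx jh) : ℕ) : ℝ) * A jh) •
            ∏ k : Fin m, (X (jh k) : MvPolynomial (Fin n) ℝ) else 0) := by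
  classical
  rw [← Finset.sum_fiberwise univ csort
    (fun j => A j • ∏ k : Fin m, (X (j k) : MvPolynomial (Fin n) ℝ))]
  have step2 : ∀ jh : Idx m n,
      (∑ j ∈ univ.filter (fun j : Idx m n => csort j = jh),
        A j • ∏ k : Fin m, (X (j k) : MvPolynomial (Fin n) ℝ))
      = (if Monotone jh then
          (((Nat.multinomial (suppIdx jh) (multIdx jh) : ℕ) : ℝ) * A jh) •
            ∏ k : Fin m, (X (jh k) : MvPolynomial (Fin n) ℝ) else 0) := by
    intro jh
    by_cases hmono : Monotone jh
    · rw [if_pos hmono]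
      have key : ∀ j ∈ univ.filter (fun j : Idx m n => csort j = jh),
          A j • ∏ k : Fin m, (X (j k) : MvPolynomial (Fin n) ℝ)
            = A jh • ∏ k : Fin m, (X (jh k) : MvPolynomial (Fin n) ℝ) := by
        intro j hj
        simp only [Finset.mem_filter, Finset.mem_univ, true_and] at hj
        have hmi : multIdx j = multIdx jh := (csort_eq_iff hmono j).1 hj
        have hprod : ∏ k : Fin m, (X (j k) : MvPolynomial (Fin n) ℝ)
            = ∏ k : Fin m, (X (jh k) : MvPolynomial (Fin n) ℝ) := by
          conv_rhs => rw [← hj]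
          exact (Equiv.prod_comp (Tuple.sort j) (fun k => (X (j k) : MvPolynomial (Fin n) ℝ))).symm
        rw [symm_apply hA hmi, hprod]
      rw [Finset.sum_congr rfl key, Finset.sum_const]
      have horb : (univ.filter fun j : Idx m n => csort j = jh)
          = univ.filter fun j => multIdx j = multIdx jh := by
        ext j; simp only [Finset.mem_filter, Finset.mem_univ, true_and]
        exact csort_eq_iff hmono j
      rw [horb, card_orbit jh, ← Nat.cast_smul_eq_nsmul ℝ, smul_smul]
    · rw [if_neg hmono]
      apply Finset.sum_eq_zero
      intro j hj
      simp only [Finset.mem_filter, Finset.mem_univ, true_and] at hj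
      exact absurd (hj ▸ monotone_csort j) hmono
  rw [Finset.sum_congr rfl fun jh _ => step2 jh]
  have split : ∀ jh : Idx m n,
      (if Monotone jh then
        (((Nat.multinomial (suppIdx jh) (multIdx jh) : ℕ) : ℝ) * A jh) •
          ∏ k : Fin m, (X (jh k) : MvPolynomial (Fin n) ℝ) else 0)
      = (if ∃ q, jh = diagIdx q then
          (((Nat.multinomial (suppIdx jh) (multIdx jh) : ℕ) : ℝ) * A jh) •
            ∏ k : Fin m, (X (jh k) : MvPolynomial (Fin n) ℝ) else 0)
        + (if Monotone jh ∧ ¬(∃ q, jh = diagIdx q) then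
          (((Nat.multinomial (suppIdx jh) (multIdx jh) : ℕ) : ℝ) * A jh) •
            ∏ k : Fin m, (X (jh k) : MvPolynomial (Fin n) ℝ) else 0) := by
    intro jh
    by_cases hdiag : ∃ q, jh = diagIdx q
    · have hmono : Monotone jh := by obtain ⟨q, rfl⟩ := hdiag; exact monotone_const
      rw [if_pos hmono, if_pos hdiag, if_neg (by tauto), add_zero]
    · by_cases hmono : Monotone jh
      · rw [if_pos hmono, if_neg hdiag, if_pos ⟨hmono, hdiag⟩, zero_add]
      · rw [if_neg hmono, if_neg hdiag, if_neg (by tauto), add_zero]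
  rw [Finset.sum_congr rfl fun jh _ => split jh, Finset.sum_add_distrib]
  congr 1
  rw [← Finset.sum_filter]
  have himg : (univ.filter fun jh : Idx m n => ∃ q, jh = diagIdx q)
      = Finset.image diagIdx univ := by
    ext jh
    simp only [Finset.mem_filter, Finset.mem_univ, true_and, Finset.mem_image]
    constructor
    · rintro ⟨q, h⟩
      exact ⟨q, h.symm⟩
    · rintro ⟨q, h⟩
      exact ⟨q, h.symm⟩
  rw [himg, Finset.sum_image (fun a _ b _ h => diag_inj hm h)]
  refine Finset.sum_congr rfl fun q _ => ?_
  have hsupp : suppIdx (diagIdx q : Idx m n) = {q} := by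
    show Finset.image (fun _ : Fin m => q) univ = {q}
    exact Finset.image_const ⟨⟨0, hm⟩, Finset.mem_univ _⟩ q
  have hmul : Nat.multinomial (suppIdx (diagIdx q : Idx m n)) (multIdx (diagIdx q : Idx m n)) = 1 := by
    rw [hsupp]; exact Nat.multinomial_singleton _ _
  have hprod : ∏ k : Fin m, (X ((diagIdx q : Idx m n) k) : MvPolynomial (Fin n) ℝ)
      = (X q ^ m : MvPolynomial (Fin n) ℝ) := by
    show (∏ _k : Fin m, (X q : MvPolynomial (Fin n) ℝ)) = X q ^ m
    rw [Finset.prod_const, Finset.card_univ, Fintype.card_fin]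
  rw [hmul, hprod]
  norm_num

end DDAux

namespace DDAux
open Equiv MvPolynomial
open scoped Classical
variable {m n : ℕ}

lemma ddth_sum (γ : Fin n → ℝ) (bp bm : Idx m n → ℝ) :
    ((∑ i : Fin n, γ i • (X i ^ m : MvPolynomial (Fin n) ℝ)) +
      ∑ jh : Idx m n, (if Monotone jh ∧ ¬ (∃ q : Fin n, jh = diagIdx q) then
        bp jh • fGen m n false jh + bm jh • fGen m n true jh else 0))
    = (∑ q : Fin n, (γ q + ∑ jh : Idx m n,
          (if Monotone jh ∧ ¬(∃ r, jh = diagIdx r) ∧ q ∈ suppIdx jh then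
            ((Nat.multinomial (suppIdx jh)
              (fun r => if r = q then multIdx jh r - 1 else multIdx jh r) : ℕ) : ℝ)
              * (bp jh + bm jh) else 0)) • (X q ^ m : MvPolynomial (Fin n) ℝ)) +
      ∑ jh : Idx m n, (if Monotone jh ∧ ¬(∃ q, jh = diagIdx q) then
        (((Nat.multinomial (suppIdx jh) (multIdx jh) : ℕ) : ℝ) * (bp jh - bm jh)) •
          ∏ k : Fin m, (X (jh k) : MvPolynomial (Fin n) ℝ) else 0) := by
  classical
  have expand : ∀ jh : Idx m n,
      bp jh • fGen m n false jh + bm jh • fGen m n true jh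
      = (∑ p ∈ suppIdx jh, (((Nat.multinomial (suppIdx jh)
            (fun r => if r = p then multIdx jh r - 1 else multIdx jh r) : ℕ) : ℝ)
            * (bp jh + bm jh)) • (X p ^ m : MvPolynomial (Fin n) ℝ))
        + (((Nat.multinomial (suppIdx jh) (multIdx jh) : ℕ) : ℝ) * (bp jh - bm jh)) •
            ∏ k : Fin m, (X (jh k) : MvPolynomial (Fin n) ℝ) := by
    intro jh
    have hS : (∑ p ∈ suppIdx jh, (((Nat.multinomial (suppIdx jh)
            (fun r => if r = p then multIdx jh r - 1 else multIdx jh r) : ℕ) : ℝ)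
            * (bp jh + bm jh)) • (X p ^ m : MvPolynomial (Fin n) ℝ))
        = (bp jh + bm jh) • ∑ p ∈ suppIdx jh, (((Nat.multinomial (suppIdx jh)
            (fun r => if r = p then multIdx jh r - 1 else multIdx jh r) : ℕ) : ℝ))
            • (X p ^ m : MvPolynomial (Fin n) ℝ) := by
      rw [Finset.smul_sum]
      refine Finset.sum_congr rfl fun p _ => ?_
      rw [smul_smul, mul_comm]
    rw [fGen, fGen, hS]
    have h1 : ((if (false : Bool) then (-1 : ℝ) else 1)) = 1 := rfl
    have h2 : ((if (true : Bool) then (-1 : ℝ) else 1)) = -1 := rfl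
    rw [h1, h2, one_mul]
    generalize (∑ p ∈ suppIdx jh, (((Nat.multinomial (suppIdx jh)
            (fun r => if r = p then multIdx jh r - 1 else multIdx jh r) : ℕ) : ℝ))
            • (X p ^ m : MvPolynomial (Fin n) ℝ)) = S
    generalize (∏ k : Fin m, (X (jh k) : MvPolynomial (Fin n) ℝ)) = P
    generalize ((Nat.multinomial (suppIdx jh) (multIdx jh) : ℕ) : ℝ) = M
    module
  set U : Idx m n → MvPolynomial (Fin n) ℝ := fun jh =>
    ∑ p ∈ suppIdx jh, (((Nat.multinomial (suppIdx jh)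
        (fun r => if r = p then multIdx jh r - 1 else multIdx jh r) : ℕ) : ℝ)
        * (bp jh + bm jh)) • (X p ^ m : MvPolynomial (Fin n) ℝ) with hU
  set V : Idx m n → MvPolynomial (Fin n) ℝ := fun jh =>
    (((Nat.multinomial (suppIdx jh) (multIdx jh) : ℕ) : ℝ) * (bp jh - bm jh)) •
      ∏ k : Fin m, (X (jh k) : MvPolynomial (Fin n) ℝ) with hV
  have step1 : (∑ jh : Idx m n, (if Monotone jh ∧ ¬ (∃ q : Fin n, jh = diagIdx q) then
        bp jh • fGen m n false jh + bm jh • fGen m n true jh else 0))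
      = (∑ jh : Idx m n, (if Monotone jh ∧ ¬ (∃ q : Fin n, jh = diagIdx q) then U jh else 0))
        + ∑ jh : Idx m n, (if Monotone jh ∧ ¬ (∃ q : Fin n, jh = diagIdx q) then V jh else 0) := by
    rw [← Finset.sum_add_distrib]
    refine Finset.sum_congr rfl fun jh _ => ?_
    by_cases h : Monotone jh ∧ ¬ (∃ q : Fin n, jh = diagIdx q)
    · rw [if_pos h, if_pos h, if_pos h, expand jh, hU, hV]
    · rw [if_neg h, if_neg h, if_neg h, add_zero]
  have step2 : (∑ jh : Idx m n, (if Monotone jh ∧ ¬ (∃ q : Fin n, jh = diagIdx q) then U jh else 0))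
      = ∑ q : Fin n, (∑ jh : Idx m n,
          (if Monotone jh ∧ ¬(∃ r, jh = diagIdx r) ∧ q ∈ suppIdx jh then
            ((Nat.multinomial (suppIdx jh)
              (fun r => if r = q then multIdx jh r - 1 else multIdx jh r) : ℕ) : ℝ)
              * (bp jh + bm jh) else 0)) • (X q ^ m : MvPolynomial (Fin n) ℝ) := by
    have swap : ∀ jh : Idx m n, (if Monotone jh ∧ ¬ (∃ q : Fin n, jh = diagIdx q) then U jh else 0)
        = ∑ q : Fin n, (if Monotone jh ∧ ¬(∃ r, jh = diagIdx r) ∧ q ∈ suppIdx jh then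
            (((Nat.multinomial (suppIdx jh)
              (fun r => if r = q then multIdx jh r - 1 else multIdx jh r) : ℕ) : ℝ)
              * (bp jh + bm jh)) else 0) • (X q ^ m : MvPolynomial (Fin n) ℝ) := by
      intro jh
      by_cases h : Monotone jh ∧ ¬ (∃ q : Fin n, jh = diagIdx q)
      · rw [if_pos h, hU]
        have hpt : ∀ q : Fin n, (if Monotone jh ∧ ¬(∃ r, jh = diagIdx r) ∧ q ∈ suppIdx jh then
            (((Nat.multinomial (suppIdx jh)
              (fun r => if r = q then multIdx jh r - 1 else multIdx jh r) : ℕ) : ℝ)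
              * (bp jh + bm jh)) else 0) • (X q ^ m : MvPolynomial (Fin n) ℝ)
            = (if q ∈ suppIdx jh then (((Nat.multinomial (suppIdx jh)
              (fun r => if r = q then multIdx jh r - 1 else multIdx jh r) : ℕ) : ℝ)
              * (bp jh + bm jh)) • (X q ^ m : MvPolynomial (Fin n) ℝ) else 0) := by
          intro q
          by_cases hq : q ∈ suppIdx jh
          · rw [if_pos ⟨h.1, h.2, hq⟩, if_pos hq]
          · rw [if_neg (fun hc => hq hc.2.2), if_neg hq, zero_smul]
        rw [Finset.sum_congr rfl fun q _ => hpt q, ← Finset.sum_filter,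
          Finset.filter_univ_mem]
      · rw [if_neg h]
        rw [Finset.sum_congr rfl (fun q _ => by
          rw [if_neg (fun hc => h ⟨hc.1, hc.2.1⟩), zero_smul]), Finset.sum_const, smul_zero]
    rw [Finset.sum_congr rfl fun jh _ => swap jh, Finset.sum_comm]
    refine Finset.sum_congr rfl fun q _ => ?_
    rw [Finset.sum_smul]
  rw [step1, step2, ← add_assoc]
  congr 1
  rw [← Finset.sum_add_distrib]
  refine Finset.sum_congr rfl fun q _ => ?_
  rw [add_smul]

end DDAux

namespace DDAux
open Equiv MvPolynomial
open scoped Classical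
variable {m n : ℕ}

lemma max_add_max_neg (a : ℝ) : max a 0 + max (-a) 0 = |a| := by
  rcases le_total 0 a with h | h
  · rw [max_eq_left h, max_eq_right (by linarith), add_zero, abs_of_nonneg h]
  · rw [max_eq_right h, max_eq_left (by linarith), zero_add, abs_of_nonpos h]

lemma max_sub_max_neg (a : ℝ) : max a 0 - max (-a) 0 = a := by
  rcases le_total 0 a with h | h
  · rw [max_eq_left h, max_eq_right (by linarith), sub_zero]
  · rw [max_eq_right h, max_eq_left (by linarith), zero_sub, neg_neg]

end DDAux

/-- A polynomial is DDTH of degree `m` iff it is induced by a symmetric diagonally dominant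
tensor with nonnegative diagonal: `p(x) = A x^m` for some `A ∈ DD⁺_{m,n}`. -/
theorem DDTH_iff_DDplus (m n : ℕ) (hm : 0 < m) (p : MvPolynomial (Fin n) ℝ) :
    IsDDTH m n p ↔ ∃ A : Idx m n → ℝ, IsDDplus hm A ∧
      p = ∑ j : Idx m n, (A j) • ∏ k : Fin m, (X (j k) : MvPolynomial (Fin n) ℝ) := by
  classical
  open DDAux in
  constructor
  · rintro ⟨γ, bp, bm, hγ, hbp, hbm, rfl⟩
    set D : Fin n → ℝ := fun q => γ q + ∑ jh : Idx m n,
      (if Monotone jh ∧ ¬(∃ r, jh = diagIdx r) ∧ q ∈ suppIdx jh then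
        ((Nat.multinomial (suppIdx jh)
          (fun r => if r = q then multIdx jh r - 1 else multIdx jh r) : ℕ) : ℝ)
          * (bp jh + bm jh) else 0) with hD
    set A : Idx m n → ℝ := fun j =>
      if ∃ q, j = diagIdx q then D (j ⟨0, hm⟩) else bp (csort j) - bm (csort j) with hA
    have hAdiag : ∀ q : Fin n, A (diagIdx q) = D q := by
      intro q
      rw [hA]
      simp only []
      rw [if_pos ⟨q, rfl⟩]
      rfl
    have hAoff : ∀ jh : Idx m n, Monotone jh → ¬(∃ q, jh = diagIdx q) →
        A jh = bp jh - bm jh := by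
      intro jh h1 h2
      rw [hA]
      simp only []
      rw [if_neg h2, csort_of_monotone h1]
    have hsymm : IsSymmetric A := by
      intro σ j
      have hdi : (∃ q, j ∘ σ = diagIdx q) ↔ (∃ q, j = diagIdx q) := by
        constructor
        · rintro ⟨q, h⟩
          refine ⟨q, funext fun k => ?_⟩
          have := congrFun h (σ.symm k)
          simpa [diagIdx] using this
        · rintro ⟨q, rfl⟩
          exact ⟨q, rfl⟩
      rw [hA]
      simp only []
      by_cases hd : ∃ q, j = diagIdx q
      · rw [if_pos (hdi.2 hd), if_pos hd]
        obtain ⟨q, rfl⟩ := hd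
        rfl
      · rw [if_neg (fun hc => hd (hdi.1 hc)), if_neg hd, csort_comp]
    have hDD : IsDDplus hm A := by
      refine ⟨hsymm, fun i => ?_⟩
      rw [rowSum_eq hm hsymm i, hAdiag i, hD]
      have hle : ∀ jh : Idx m n,
          (if Monotone jh ∧ ¬(∃ q, jh = diagIdx q) ∧ i ∈ suppIdx jh then
            ((Nat.multinomial (suppIdx jh)
              (fun q => if q = i then multIdx jh q - 1 else multIdx jh q) : ℕ) : ℝ) * |A jh|
          else 0)
          ≤ (if Monotone jh ∧ ¬(∃ r, jh = diagIdx r) ∧ i ∈ suppIdx jh then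
            ((Nat.multinomial (suppIdx jh)
              (fun r => if r = i then multIdx jh r - 1 else multIdx jh r) : ℕ) : ℝ)
              * (bp jh + bm jh) else 0) := by
        intro jh
        by_cases h : Monotone jh ∧ ¬(∃ q, jh = diagIdx q) ∧ i ∈ suppIdx jh
        · rw [if_pos h, if_pos h, hAoff jh h.1 h.2.1]
          apply mul_le_mul_of_nonneg_left _ (by positivity)
          calc |bp jh - bm jh| ≤ |bp jh| + |bm jh| := abs_sub _ _
            _ = bp jh + bm jh := by
                rw [abs_of_nonneg (hbp jh), abs_of_nonneg (hbm jh)]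
        · rw [if_neg h, if_neg h]
      calc ∑ jh : Idx m n, _ ≤ ∑ jh : Idx m n,
            (if Monotone jh ∧ ¬(∃ r, jh = diagIdx r) ∧ i ∈ suppIdx jh then
              ((Nat.multinomial (suppIdx jh)
                (fun r => if r = i then multIdx jh r - 1 else multIdx jh r) : ℕ) : ℝ)
                * (bp jh + bm jh) else 0) := Finset.sum_le_sum fun jh _ => hle jh
        _ ≤ γ i + _ := le_add_of_nonneg_left (hγ i)
    refine ⟨A, hDD, ?_⟩
    rw [ddth_sum γ bp bm, tensor_poly hm hsymm]
    congr 1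
    · refine Finset.sum_congr rfl fun q _ => ?_
      rw [hAdiag q, hD]
    · refine Finset.sum_congr rfl fun jh _ => ?_
      by_cases h : Monotone jh ∧ ¬(∃ q, jh = diagIdx q)
      · rw [if_pos h, if_pos h, hAoff jh h.1 h.2]
      · rw [if_neg h, if_neg h]
  · rintro ⟨A, ⟨hsymm, hdd⟩, rfl⟩
    refine ⟨fun q => A (diagIdx q) - rowSum hm A q,
      fun jh => max (A jh) 0, fun jh => max (-A jh) 0,
      fun q => sub_nonneg.2 (hdd q), fun jh => le_max_right _ _, fun jh => le_max_right _ _, ?_⟩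
    rw [ddth_sum, tensor_poly hm hsymm]
    congr 1
    · refine Finset.sum_congr rfl fun q _ => ?_
      congr 1
      have : (∑ jh : Idx m n,
          (if Monotone jh ∧ ¬(∃ r, jh = diagIdx r) ∧ q ∈ suppIdx jh then
            ((Nat.multinomial (suppIdx jh)
              (fun r => if r = q then multIdx jh r - 1 else multIdx jh r) : ℕ) : ℝ)
              * (max (A jh) 0 + max (-A jh) 0) else 0)) = rowSum hm A q := by
        rw [rowSum_eq hm hsymm q]
        refine Finset.sum_congr rfl fun jh _ => ?_
        rw [max_add_max_neg]
      rw [this]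
      ring
    · refine Finset.sum_congr rfl fun jh _ => ?_
      by_cases h : Monotone jh ∧ ¬(∃ q, jh = diagIdx q)
      · rw [if_pos h, if_pos h, max_sub_max_neg]
      · rw [if_neg h, if_neg h]
end
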